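/- arXiv:1603.06709 — 4 statements merged into one kernel-verified Lean document; each statement's English description precedes it below -/
import Mathlib

section
/- For every p ∈ (1,∞), setting p* = p/(p−1), and for every x ∈ [0, π_{p*,p}/2] (which equals [0, 2^{−2/p}·π_{2,p}]), one has the multiple-angle formula sin_{2,p}(2^{2/p}·x) = 2^{2/p}·sin_{p*,p}(x)·(cos_{p*,p}(x))^{p*−1}. -/
open Real Set MeasureTheory Filter intervalIntegral

/-- `sin_{p,q}^{-1}(x) = ∫₀ˣ (1-t^q)^{-1/p} dt`. -/
noncomputable def arcsinpq (p q x : ℝ) : ℝ := ∫ t in (0:ℝ)..x, (1 - t ^ q) ^ (-(1 / p))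

/-- The generalized π: `π_{p,q} = 2 sin_{p,q}^{-1}(1)`. -/
noncomputable def pipq (p q : ℝ) : ℝ := 2 * arcsinpq p q 1

/-- `sin_{p,q}` on `[0, π_{p,q}/2]`, as the inverse of `arcsinpq p q : [0,1] → [0, π_{p,q}/2]`. -/
noncomputable def sinHalf (p q : ℝ) : ℝ → ℝ := Function.invFunOn (arcsinpq p q) (Set.Icc 0 1)

/-- `sin_{p,q}` on all of `ℝ`: extended to `[π_{p,q}/2, π_{p,q}]` by `sin_{p,q}(π_{p,q}-x)` and
then to `ℝ` as the odd `2π_{p,q}`-periodic continuation. -/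
noncomputable def sinpq (p q x : ℝ) : ℝ :=
  let T := pipq p q
  let y := x - 2 * T * (⌊(x + T) / (2 * T)⌋ : ℝ)
  if y < 0 then -(sinHalf p q (if -y ≤ T / 2 then -y else T + y))
  else sinHalf p q (if y ≤ T / 2 then y else T - y)

/-- `cos_{p,q} = (sin_{p,q})'`. -/
noncomputable def cospq (p q : ℝ) : ℝ → ℝ := deriv (sinpq p q)

/-- Rising factorial (Pochhammer symbol) `(a)_n = a(a+1)⋯(a+n-1)`. -/
noncomputable def poch (a : ℝ) (n : ℕ) : ℝ := ∏ i ∈ Finset.range n, (a + i)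

namespace GenTrig

open Topology

/-- The integrand. -/
noncomputable def ff (p c t : ℝ) : ℝ := (1 - t ^ p) ^ (-c)

/-- The primitive. -/
noncomputable def AA (p c x : ℝ) : ℝ := ∫ t in (0:ℝ)..x, ff p c t

/-- The inverse. -/
noncomputable def SS (p c : ℝ) : ℝ → ℝ := Function.invFunOn (AA p c) (Set.Icc 0 1)

lemma arcsinpq_eq (r q : ℝ) : arcsinpq r q = AA q (1/r) := rfl
lemma sinHalf_eq (r q : ℝ) : sinHalf r q = SS q (1/r) := rfl
lemma pipq_eq (r q : ℝ) : pipq r q = 2 * AA q (1/r) 1 := rfl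

variable {p c : ℝ}

lemma base_pos (hp : 0 < p) {t : ℝ} (ht : t ∈ Ioo (-1:ℝ) 1) : 0 < 1 - t ^ p := by
  have h1 : |t ^ p| ≤ |t| ^ p := abs_rpow_le_abs_rpow t p
  have h2 : |t| ^ p < 1 := rpow_lt_one (abs_nonneg t) (abs_lt.mpr ⟨ht.1, ht.2⟩) hp
  have := le_abs_self (t ^ p)
  linarith

lemma continuous_base (hp : 0 < p) : Continuous fun t : ℝ => 1 - t ^ p := by
  refine continuous_const.sub ?_
  rw [continuous_iff_continuousAt]
  exact fun x => continuousAt_rpow_const x p (Or.inr hp.le)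

lemma ff_contOn (hp : 0 < p) : ContinuousOn (ff p c) (Ioo (-1:ℝ) 1) := by
  intro t ht
  refine ContinuousAt.continuousWithinAt ?_
  have h1 : ContinuousAt (fun u : ℝ => u ^ (-c)) (1 - t ^ p) :=
    continuousAt_rpow_const _ _ (Or.inl (base_pos hp ht).ne')
  have h2 : ContinuousAt (fun t : ℝ => 1 - t ^ p) t := (continuous_base hp).continuousAt
  exact ContinuousAt.comp (f := fun t : ℝ => 1 - t ^ p) (x := t) h1 h2

lemma ff_pos (hp : 0 < p) {t : ℝ} (ht : t ∈ Ioo (-1:ℝ) 1) : 0 < ff p c t :=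
  rpow_pos_of_pos (base_pos hp ht) _

lemma ff_nonneg (hp : 0 < p) {t : ℝ} (ht : t ∈ Icc (0:ℝ) 1) : 0 ≤ ff p c t := by
  have : (0:ℝ) ≤ 1 - t ^ p := by
    have : t ^ p ≤ 1 := rpow_le_one ht.1 ht.2 hp.le
    linarith
  exact rpow_nonneg this _

lemma one_le_ff (hp : 0 < p) (hc : 0 ≤ c) {t : ℝ} (ht : t ∈ Ico (0:ℝ) 1) :
    1 ≤ ff p c t := by
  have hb : 0 < 1 - t ^ p := base_pos hp ⟨by linarith [ht.1], ht.2⟩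
  have hb1 : 1 - t ^ p ≤ 1 := by
    have : 0 ≤ t ^ p := rpow_nonneg ht.1 _
    linarith
  exact one_le_rpow_of_pos_of_le_one_of_nonpos hb hb1 (by linarith)

lemma ff_le_g (hp : 1 ≤ p) (hc : 0 ≤ c) {t : ℝ} (ht : t ∈ Icc (0:ℝ) 1) :
    ff p c t ≤ (1 - t) ^ (-c) := by
  rcases eq_or_lt_of_le ht.2 with h1 | h1
  · subst h1
    unfold ff
    rw [Real.one_rpow, sub_self]
  · rcases eq_or_lt_of_le ht.1 with h0 | h0
    · simp [ff, ← h0, Real.zero_rpow (by positivity : p ≠ 0)]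
    · have htp : t ^ p ≤ t := by
        simpa using rpow_le_rpow_of_exponent_ge h0 h1.le hp
      exact rpow_le_rpow_of_nonpos (by linarith) (by linarith) (by linarith)

lemma ff_aesm (hp : 0 < p) :
    AEStronglyMeasurable (ff p c) (volume.restrict (Set.uIoc (0:ℝ) 1)) := by
  rw [Set.uIoc_of_le (by norm_num : (0:ℝ) ≤ 1),
    MeasureTheory.Measure.restrict_congr_set Ioo_ae_eq_Ioc.symm]
  refine ContinuousOn.aestronglyMeasurable ((ff_contOn hp).mono ?_) measurableSet_Ioo
  intro t ht
  exact ⟨by linarith [ht.1], ht.2⟩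

lemma g_intervalIntegrable (hc1 : c < 1) (a b : ℝ) :
    IntervalIntegrable (fun t : ℝ => (1 - t) ^ (-c)) volume a b := by
  have h : IntervalIntegrable (fun t : ℝ => t ^ (-c)) volume (1 - a) (1 - b) :=
    intervalIntegrable_rpow' (by linarith)
  simpa using h.comp_sub_left 1

lemma ff_intervalIntegrable (hp : 1 < p) (hc0 : 0 ≤ c) (hc1 : c < 1) :
    IntervalIntegrable (ff p c) volume 0 1 := by
  refine (g_intervalIntegrable hc1 0 1).mono_fun (ff_aesm (by linarith)) ?_
  rw [Set.uIoc_of_le (by norm_num : (0:ℝ) ≤ 1)]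
  refine (MeasureTheory.ae_restrict_iff' measurableSet_Ioc).2
    (Filter.Eventually.of_forall fun t ht => ?_)
  have ht' : t ∈ Icc (0:ℝ) 1 := ⟨ht.1.le, ht.2⟩
  simp only [Real.norm_eq_abs]
  rw [abs_of_nonneg (ff_nonneg (by linarith) ht'),
    abs_of_nonneg (rpow_nonneg (by linarith [ht'.2] : (0:ℝ) ≤ 1 - t) _)]
  exact ff_le_g hp.le hc0 ht'

lemma ff_intervalIntegrable_sub (hp : 1 < p) (hc0 : 0 ≤ c) (hc1 : c < 1)
    {a b : ℝ} (ha : a ∈ Icc (0:ℝ) 1) (hb : b ∈ Icc (0:ℝ) 1) :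
    IntervalIntegrable (ff p c) volume a b := by
  refine (ff_intervalIntegrable hp hc0 hc1).mono_set ?_
  rw [Set.uIcc_of_le (by norm_num : (0:ℝ) ≤ 1)]
  exact Set.uIcc_subset_Icc ha hb

lemma AA_zero : AA p c 0 = 0 := intervalIntegral.integral_same

lemma AA_hasDerivAt (hp : 0 < p) {y : ℝ} (hy : y ∈ Ioo (-1:ℝ) 1) :
    HasDerivAt (AA p c) (ff p c y) y := by
  have hsub : Set.uIcc (0:ℝ) y ⊆ Ioo (-1:ℝ) 1 := by
    intro t ht
    rw [Set.mem_uIcc] at ht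
    constructor
    · rcases ht with ⟨h1, _⟩ | ⟨h1, _⟩ <;> [linarith; linarith [hy.1]]
    · rcases ht with ⟨_, h2⟩ | ⟨_, h2⟩ <;> [linarith [hy.2]; linarith]
  exact intervalIntegral.integral_hasDerivAt_right
    (((ff_contOn hp).mono hsub).intervalIntegrable)
    (((ff_contOn hp).stronglyMeasurableAtFilter isOpen_Ioo) y hy)
    (((ff_contOn hp)).continuousAt (isOpen_Ioo.mem_nhds hy))

lemma AA_continuousOn (hp : 1 < p) (hc0 : 0 ≤ c) (hc1 : c < 1) :
    ContinuousOn (AA p c) (Icc (0:ℝ) 1) := by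
  have h : IntegrableOn (ff p c) (Set.uIcc (0:ℝ) 1) volume := by
    rw [Set.uIcc_of_le (by norm_num : (0:ℝ) ≤ 1)]
    rw [integrableOn_Icc_iff_integrableOn_Ioc]
    exact (ff_intervalIntegrable hp hc0 hc1).1
  show ContinuousOn (fun x => ∫ t in (0:ℝ)..x, ff p c t) (Icc 0 1)
  simpa [Set.uIcc_of_le (by norm_num : (0:ℝ) ≤ 1)] using
    intervalIntegral.continuousOn_primitive_interval (f := ff p c) h

lemma AA_strictMonoOn (hp : 1 < p) (hc0 : 0 ≤ c) (hc1 : c < 1) :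
    StrictMonoOn (AA p c) (Icc (0:ℝ) 1) := by
  intro x hx y hy hxy
  have hint1 : IntervalIntegrable (ff p c) volume 0 x :=
    ff_intervalIntegrable_sub hp hc0 hc1 (by norm_num) hx
  have hint2 : IntervalIntegrable (ff p c) volume x y :=
    ff_intervalIntegrable_sub hp hc0 hc1 hx hy
  have hadd : AA p c x + ∫ t in x..y, ff p c t = AA p c y :=
    intervalIntegral.integral_add_adjacent_intervals hint1 hint2
  have hpos : 0 < ∫ t in x..y, ff p c t := by
    refine intervalIntegral.intervalIntegral_pos_of_pos_on hint2 (fun t ht => ?_) hxy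
    exact ff_pos (by linarith) ⟨by linarith [hx.1, ht.1], lt_of_lt_of_le ht.2 hy.2⟩
  linarith

lemma AA_one_pos (hp : 1 < p) (hc0 : 0 ≤ c) (hc1 : c < 1) : 0 < AA p c 1 := by
  have := AA_strictMonoOn hp hc0 hc1 (Set.left_mem_Icc.2 (by norm_num))
    (Set.right_mem_Icc.2 (by norm_num)) (by norm_num)
  rwa [AA_zero] at this

lemma AA_image (hp : 1 < p) (hc0 : 0 ≤ c) (hc1 : c < 1) :
    AA p c '' Icc (0:ℝ) 1 = Icc 0 (AA p c 1) := by
  apply Subset.antisymm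
  · rintro _ ⟨s, hs, rfl⟩
    have hmono := (AA_strictMonoOn hp hc0 hc1).monotoneOn
    constructor
    · have := hmono (Set.left_mem_Icc.2 (by norm_num)) hs hs.1
      rwa [AA_zero] at this
    · exact hmono hs (Set.right_mem_Icc.2 (by norm_num)) hs.2
  · have h := intermediate_value_Icc (by norm_num : (0:ℝ) ≤ 1) (AA_continuousOn hp hc0 hc1)
    rwa [AA_zero] at h

lemma SS_leftInv (hp : 1 < p) (hc0 : 0 ≤ c) (hc1 : c < 1) {s : ℝ} (hs : s ∈ Icc (0:ℝ) 1) :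
    SS p c (AA p c s) = s :=
  (AA_strictMonoOn hp hc0 hc1).injOn.leftInvOn_invFunOn hs

lemma SS_surjOn (hp : 1 < p) (hc0 : 0 ≤ c) (hc1 : c < 1) :
    Set.SurjOn (AA p c) (Icc (0:ℝ) 1) (Icc 0 (AA p c 1)) :=
  fun y hy => (AA_image hp hc0 hc1).symm ▸ hy

lemma SS_mem (hp : 1 < p) (hc0 : 0 ≤ c) (hc1 : c < 1) {y : ℝ} (hy : y ∈ Icc 0 (AA p c 1)) :
    SS p c y ∈ Icc (0:ℝ) 1 :=
  Function.invFunOn_mem (SS_surjOn hp hc0 hc1 hy)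

lemma SS_rightInv (hp : 1 < p) (hc0 : 0 ≤ c) (hc1 : c < 1) {y : ℝ} (hy : y ∈ Icc 0 (AA p c 1)) :
    AA p c (SS p c y) = y :=
  Function.invFunOn_eq (SS_surjOn hp hc0 hc1 hy)

lemma SS_zero (hp : 1 < p) (hc0 : 0 ≤ c) (hc1 : c < 1) : SS p c 0 = 0 := by
  have := SS_leftInv hp hc0 hc1 (Set.left_mem_Icc.2 (by norm_num : (0:ℝ) ≤ 1))
  rwa [AA_zero] at this

lemma SS_one (hp : 1 < p) (hc0 : 0 ≤ c) (hc1 : c < 1) : SS p c (AA p c 1) = 1 :=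
  SS_leftInv hp hc0 hc1 (Set.right_mem_Icc.2 (by norm_num))

lemma SS_strictMonoOn (hp : 1 < p) (hc0 : 0 ≤ c) (hc1 : c < 1) :
    StrictMonoOn (SS p c) (Icc 0 (AA p c 1)) := by
  intro x hx y hy hxy
  by_contra h
  push_neg at h
  have := (AA_strictMonoOn hp hc0 hc1).monotoneOn (SS_mem hp hc0 hc1 hy) (SS_mem hp hc0 hc1 hx) h
  rw [SS_rightInv hp hc0 hc1 hx, SS_rightInv hp hc0 hc1 hy] at this
  exact absurd this (not_le.2 hxy)

/-! ### Unfolding `sinpq` -/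

lemma floor_aux {T x : ℝ} (hT : 0 < T) (h0 : -T ≤ x) (hx : x < T) :
    ⌊(x + T) / (2 * T)⌋ = 0 := by
  refine Int.floor_eq_zero_iff.2 ⟨div_nonneg (by linarith) (by linarith), ?_⟩
  rw [div_lt_one (by linarith)]
  linarith

lemma sinpq_eq_sinHalf {r q x : ℝ} (hT : 0 < pipq r q) (h0 : 0 ≤ x)
    (hx : x ≤ pipq r q / 2) : sinpq r q x = sinHalf r q x := by
  have hfl : ⌊(x + pipq r q) / (2 * pipq r q)⌋ = 0 :=
    floor_aux hT (by linarith) (by linarith)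
  simp only [sinpq, hfl, Int.cast_zero, mul_zero, sub_zero]
  rw [if_neg (not_lt.2 h0), if_pos hx]

lemma sinpq_eq_reflect {r q x : ℝ} (hT : 0 < pipq r q) (h0 : pipq r q / 2 < x)
    (hx : x < pipq r q) : sinpq r q x = sinHalf r q (pipq r q - x) := by
  have hfl : ⌊(x + pipq r q) / (2 * pipq r q)⌋ = 0 :=
    floor_aux hT (by linarith) (by linarith)
  simp only [sinpq, hfl, Int.cast_zero, mul_zero, sub_zero]
  rw [if_neg (not_lt.2 (by linarith : (0:ℝ) ≤ x)), if_neg (not_le.2 h0)]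

lemma sinpq_at_pi {r q : ℝ} (hT : 0 < pipq r q) :
    sinpq r q (pipq r q) = -(sinHalf r q 0) := by
  have hfl : ⌊(pipq r q + pipq r q) / (2 * pipq r q)⌋ = 1 := by
    have : (pipq r q + pipq r q) / (2 * pipq r q) = 1 := by
      field_simp
      ring
    rw [this]
    exact Int.floor_one
  simp only [sinpq, hfl, Int.cast_one, mul_one]
  rw [if_pos (by linarith : pipq r q - 2 * pipq r q < 0)]
  rw [if_neg (not_le.2 (by linarith : pipq r q / 2 < -(pipq r q - 2 * pipq r q)))]
  rw [show pipq r q + (pipq r q - 2 * pipq r q) = 0 by ring]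

lemma sinpq_neg {r q x : ℝ} (hT : 0 < pipq r q) (h0 : -(pipq r q) / 2 ≤ x) (hx : x < 0) :
    sinpq r q x = -(sinHalf r q (-x)) := by
  have hfl : ⌊(x + pipq r q) / (2 * pipq r q)⌋ = 0 :=
    floor_aux hT (by linarith) (by linarith)
  simp only [sinpq, hfl, Int.cast_zero, mul_zero, sub_zero]
  rw [if_pos hx, if_pos (by linarith)]

/-! ### The substitution functions -/

noncomputable def kk (p : ℝ) : ℝ := (2:ℝ) ^ (2/p)
noncomputable def bb (p : ℝ) : ℝ := (2:ℝ) ^ (-(1/p))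
noncomputable def psi (p s : ℝ) : ℝ := (1 - s ^ p) ^ (1/p)
noncomputable def phi (p s : ℝ) : ℝ := kk p * (s * psi p s)

lemma kk_pos : 0 < kk p := rpow_pos_of_pos two_pos _

lemma bb_mem (hp : 1 < p) : bb p ∈ Ioo (0:ℝ) 1 := by
  constructor
  · exact rpow_pos_of_pos two_pos _
  · exact rpow_lt_one_of_one_lt_of_neg one_lt_two (by
      have : 0 < 1/p := by positivity
      linarith)

lemma bb_rpow (hp : 1 < p) : bb p ^ p = 1/2 := by
  rw [bb, ← Real.rpow_mul (by norm_num : (0:ℝ) ≤ 2)]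
  have hpne : p ≠ 0 := by positivity
  rw [show -(1/p) * p = -1 by field_simp]
  rw [Real.rpow_neg_one]
  norm_num

lemma kk_rpow (hp : 1 < p) : kk p ^ p = 4 := by
  rw [kk, ← Real.rpow_mul (by norm_num : (0:ℝ) ≤ 2)]
  have hpne : p ≠ 0 := by positivity
  rw [show 2/p * p = 2 by field_simp]
  rw [show (2:ℝ) = ((2:ℕ):ℝ) by norm_num, Real.rpow_natCast]
  norm_num

lemma base_mem {s : ℝ} (hp : 0 < p) (hs : s ∈ Icc (0:ℝ) 1) : 1 - s ^ p ∈ Icc (0:ℝ) 1 := by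
  have h1 : s ^ p ≤ 1 := rpow_le_one hs.1 hs.2 hp.le
  have h2 : 0 ≤ s ^ p := rpow_nonneg hs.1 _
  constructor <;> linarith

lemma psi_nonneg {s : ℝ} (hp : 0 < p) (hs : s ∈ Icc (0:ℝ) 1) : 0 ≤ psi p s :=
  rpow_nonneg (base_mem hp hs).1 _

lemma psi_mem {s : ℝ} (hp : 0 < p) (hs : s ∈ Icc (0:ℝ) 1) : psi p s ∈ Icc (0:ℝ) 1 := by
  have := base_mem hp hs
  exact ⟨rpow_nonneg this.1 _, rpow_le_one this.1 this.2 (by positivity)⟩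

lemma psi_rpow {s : ℝ} (hp : 0 < p) (hs : s ∈ Icc (0:ℝ) 1) : psi p s ^ p = 1 - s ^ p := by
  rw [psi, ← Real.rpow_mul (base_mem hp hs).1]
  have hpne : p ≠ 0 := by positivity
  rw [show 1/p * p = 1 by field_simp, Real.rpow_one]

lemma psi_zero (hp : 0 < p) : psi p 0 = 1 := by
  rw [psi, Real.zero_rpow (by positivity : p ≠ 0)]
  norm_num

lemma psi_one (hp : 0 < p) : psi p 1 = 0 := by
  rw [psi, Real.one_rpow, sub_self, Real.zero_rpow (by positivity : (1:ℝ)/p ≠ 0)]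

lemma psi_bb (hp : 1 < p) : psi p (bb p) = bb p := by
  rw [psi, bb_rpow hp, show (1:ℝ) - 1/2 = 2⁻¹ by norm_num,
    show (2:ℝ)⁻¹ = (2:ℝ) ^ (-1 : ℝ) by rw [Real.rpow_neg_one],
    ← Real.rpow_mul (by norm_num : (0:ℝ) ≤ 2), bb]
  ring_nf

lemma phi_rpow {s : ℝ} (hp : 1 < p) (hs : s ∈ Icc (0:ℝ) 1) :
    phi p s ^ p = 4 * (s ^ p * (1 - s ^ p)) := by
  have hps := psi_nonneg (by linarith : (0:ℝ) < p) hs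
  rw [phi, Real.mul_rpow (kk_pos).le (mul_nonneg hs.1 hps),
    Real.mul_rpow hs.1 hps, kk_rpow hp, psi_rpow (by linarith) hs]

lemma phi_nonneg {s : ℝ} (hp : 0 < p) (hs : s ∈ Icc (0:ℝ) 1) : 0 ≤ phi p s :=
  mul_nonneg kk_pos.le (mul_nonneg hs.1 (psi_nonneg hp hs))

lemma le_one_of_rpow (hp : 0 < p) {x : ℝ} (hx : 0 ≤ x) (h : x ^ p ≤ 1) : x ≤ 1 := by
  by_contra hc
  push_neg at hc
  have : (1:ℝ) ^ p < x ^ p := Real.rpow_lt_rpow (by norm_num) hc hp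
  rw [Real.one_rpow] at this
  linarith

lemma lt_one_of_rpow (hp : 0 < p) {x : ℝ} (hx : 0 ≤ x) (h : x ^ p < 1) : x < 1 := by
  by_contra hc
  push_neg at hc
  have : (1:ℝ) ^ p ≤ x ^ p := Real.rpow_le_rpow (by norm_num) hc hp.le
  rw [Real.one_rpow] at this
  linarith

lemma sq_of_one_sub_phi {s : ℝ} (hp : 1 < p) (hs : s ∈ Icc (0:ℝ) 1) :
    1 - phi p s ^ p = (1 - 2 * s ^ p) * (1 - 2 * s ^ p) := by
  rw [phi_rpow hp hs]; ring

lemma phi_mem {s : ℝ} (hp : 1 < p) (hs : s ∈ Icc (0:ℝ) 1) : phi p s ∈ Icc (0:ℝ) 1 := by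
  have hpn := phi_nonneg (by linarith : (0:ℝ) < p) hs
  refine ⟨hpn, le_one_of_rpow (p := p) (by linarith) hpn ?_⟩
  nlinarith [sq_of_one_sub_phi hp hs]

lemma phi_lt_one {s : ℝ} (hp : 1 < p) (hs : s ∈ Icc (0:ℝ) 1) (hs2 : s < bb p) :
    phi p s < 1 := by
  refine lt_one_of_rpow (by linarith : (0:ℝ) < p) (phi_nonneg (by linarith) hs) ?_
  have h1 : s ^ p < bb p ^ p := Real.rpow_lt_rpow hs.1 hs2 (by linarith)
  rw [bb_rpow hp] at h1
  nlinarith [sq_of_one_sub_phi hp hs]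

lemma phi_psi {s : ℝ} (hp : 1 < p) (hs : s ∈ Icc (0:ℝ) 1) : phi p (psi p s) = phi p s := by
  have h1 : phi p (psi p s) ^ p = phi p s ^ p := by
    rw [phi_rpow hp (psi_mem (by linarith : (0:ℝ) < p) hs), phi_rpow hp hs, psi_rpow (by linarith) hs]
    ring
  have h2 := phi_nonneg (by linarith : (0:ℝ) < p) (psi_mem (by linarith : (0:ℝ) < p) hs)
  have h3 := phi_nonneg (by linarith : (0:ℝ) < p) hs
  have hpne : p ≠ 0 := by positivity
  calc phi p (psi p s) = (phi p (psi p s) ^ p) ^ (1/p) := by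
        rw [← Real.rpow_mul h2, show p * (1/p) = 1 by field_simp, Real.rpow_one]
    _ = (phi p s ^ p) ^ (1/p) := by rw [h1]
    _ = phi p s := by
        rw [← Real.rpow_mul h3, show p * (1/p) = 1 by field_simp, Real.rpow_one]

lemma phi_bb (hp : 1 < p) : phi p (bb p) = 1 := by
  have h1 : phi p (bb p) ^ p = 1 := by
    rw [phi_rpow hp ⟨(bb_mem hp).1.le, (bb_mem hp).2.le⟩, bb_rpow hp]
    norm_num
  have h2 := phi_nonneg (by linarith : (0:ℝ) < p) ⟨(bb_mem hp).1.le, (bb_mem hp).2.le⟩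
  have hpne : p ≠ 0 := by positivity
  calc phi p (bb p) = (phi p (bb p) ^ p) ^ (1/p) := by
        rw [← Real.rpow_mul h2, show p * (1/p) = 1 by field_simp, Real.rpow_one]
    _ = 1 := by rw [h1, Real.one_rpow]

/-! ### Derivatives of the substitution functions -/

lemma hasDerivAt_psi {s : ℝ} (hp : 1 < p) (hs : s ∈ Ico (0:ℝ) 1) :
    HasDerivAt (psi p) (-(s ^ (p-1)) * (1 - s ^ p) ^ (1/p - 1)) s := by
  have hb : 0 < 1 - s ^ p := base_pos (by linarith) ⟨by linarith [hs.1], hs.2⟩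
  have hin : HasDerivAt (fun t : ℝ => 1 - t ^ p) (-(p * s ^ (p-1))) s := by
    simpa using (Real.hasDerivAt_rpow_const (p := p) (x := s) (Or.inr hp.le)).const_sub 1
  have hout : HasDerivAt (fun u : ℝ => u ^ (1/p)) (1/p * (1 - s ^ p) ^ (1/p - 1)) (1 - s ^ p) :=
    Real.hasDerivAt_rpow_const (Or.inl hb.ne')
  have := hout.comp s hin
  have hpne : p ≠ 0 := by positivity
  refine this.congr_deriv ?_
  field_simp

lemma hasDerivAt_phi {s : ℝ} (hp : 1 < p) (hs : s ∈ Ico (0:ℝ) 1) :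
    HasDerivAt (phi p)
      (kk p * (psi p s + s * (-(s ^ (p-1)) * (1 - s ^ p) ^ (1/p - 1)))) s := by
  have h1 : HasDerivAt (fun t : ℝ => t * psi p t) (1 * psi p s + s * (-(s ^ (p-1)) * (1 - s ^ p) ^ (1/p - 1))) s :=
    (hasDerivAt_id s).mul (hasDerivAt_psi hp hs)
  have := h1.const_mul (kk p)
  show HasDerivAt (fun y => kk p * (y * psi p y)) _ s
  simpa [phi, one_mul] using this

/-! ### Continuity of the substitution functions -/

lemma psi_continuous (hp : 1 < p) : Continuous (psi p) := by
  rw [continuous_iff_continuousAt]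
  intro s
  have h1 : ContinuousAt (fun u : ℝ => u ^ (1/p)) (1 - s ^ p) :=
    continuousAt_rpow_const _ _ (Or.inr (by positivity))
  have h2 : ContinuousAt (fun t : ℝ => 1 - t ^ p) s :=
    (continuous_base (by linarith)).continuousAt
  exact ContinuousAt.comp (f := fun t : ℝ => 1 - t ^ p) (x := s) h1 h2

lemma phi_continuous (hp : 1 < p) : Continuous (phi p) :=
  continuous_const.mul (continuous_id.mul (psi_continuous hp))

lemma cP_pos (hp : 1 < p) : (0:ℝ) < 1 - 1/p := by
  have h0 : (0:ℝ) < p := by linarith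
  have : 1/p < 1 := by rw [div_lt_one h0]; linarith
  linarith

lemma cP_lt_one (hp : 1 < p) : (1:ℝ) - 1/p < 1 := by
  have h0 : (0:ℝ) < p := by linarith
  have : 0 < 1/p := by positivity
  linarith

lemma le_of_rpow_le (hp0 : 0 < p) {a b : ℝ} (ha : 0 ≤ a) (hb : 0 ≤ b)
    (h : a ^ p ≤ b ^ p) : a ≤ b := by
  by_contra hc
  push_neg at hc
  exact absurd h (not_le.2 (Real.rpow_lt_rpow hb hc hp0))

/-! ### The key algebraic identity for the substitution -/

lemma key_alg (hp : 1 < p) {x : ℝ} (hx : x ∈ Ico (0:ℝ) 1) (hxb : x < bb p) :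
    ff p (1/2) (phi p x) *
      (kk p * (psi p x + x * (-(x ^ (p-1)) * (1 - x ^ p) ^ (1/p - 1))))
      = kk p * ff p (1 - 1/p) x := by
  have hx1 : x ∈ Icc (0:ℝ) 1 := ⟨hx.1, hx.2.le⟩
  have hb : 0 < 1 - x ^ p := base_pos (by linarith) ⟨by linarith [hx.1], hx.2⟩
  have hpne : p ≠ 0 := by positivity
  have hu : x ^ p < 1/2 := by
    have := Real.rpow_lt_rpow hx.1 hxb (by linarith : (0:ℝ) < p)
    rwa [bb_rpow hp] at this
  have hu0 : 0 ≤ x ^ p := rpow_nonneg hx.1 _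
  have h2u : (0:ℝ) < 1 - 2 * x ^ p := by linarith
  have h2 : ff p (1/2) (phi p x) = (1 - 2 * x ^ p)⁻¹ := by
    rw [ff, sq_of_one_sub_phi hp hx1, Real.mul_rpow h2u.le h2u.le,
      ← Real.rpow_add h2u, show -(1/2 : ℝ) + -(1/2) = -1 by norm_num,
      Real.rpow_neg_one]
  rw [h2, ff, show -(1 - 1/p) = 1/p - 1 by ring]
  rcases eq_or_lt_of_le hx.1 with h0 | h0
  · rw [← h0, Real.zero_rpow hpne, psi_zero (by linarith : (0:ℝ) < p)]
    norm_num
  · have hxx : x * x ^ (p-1) = x ^ p := by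
      nth_rewrite 1 [← Real.rpow_one x]
      rw [← Real.rpow_add h0]
      norm_num
    have hpsi_split : psi p x = (1 - x ^ p) ^ (1/p - 1) * (1 - x ^ p) := by
      rw [psi]
      nth_rewrite 3 [← Real.rpow_one (1 - x ^ p)]
      rw [← Real.rpow_add hb]
      norm_num
    rw [hpsi_split]
    have expand : (1 - x ^ p) ^ (1/p - 1) * (1 - x ^ p)
        + x * (-(x ^ (p-1)) * (1 - x ^ p) ^ (1/p - 1))
        = (1 - 2 * x ^ p) * (1 - x ^ p) ^ (1/p - 1) := by
      linear_combination (-(1 - x ^ p) ^ (1/p - 1)) * hxx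
    rw [expand]
    field_simp

/-! ### Substitution identity on `[0, bb p]` -/

lemma subst_D (hp : 1 < p) {s : ℝ} (hs : s ∈ Icc (0:ℝ) (bb p)) :
    AA p (1/2) (phi p s) = kk p * AA p (1 - 1/p) s := by
  have hb := bb_mem hp
  have hbb1 : Icc (0:ℝ) (bb p) ⊆ Icc 0 1 := Icc_subset_Icc le_rfl hb.2.le
  have hcP0 : (0:ℝ) ≤ 1 - 1/p := (cP_pos hp).le
  have hcP1 : (1:ℝ) - 1/p < 1 := cP_lt_one hp
  set G : ℝ → ℝ := fun t => AA p (1/2) (phi p t) - kk p * AA p (1 - 1/p) t with hG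
  have hcont : ContinuousOn G (Icc 0 (bb p)) := by
    refine ContinuousOn.sub ?_ (continuousOn_const.mul
      ((AA_continuousOn hp hcP0 hcP1).mono hbb1))
    exact (AA_continuousOn hp (by norm_num) (by norm_num)).comp
      (phi_continuous hp).continuousOn (fun t ht => phi_mem hp (hbb1 ht))
  have hderiv : ∀ x ∈ Ico 0 (bb p), HasDerivWithinAt G 0 (Ici x) x := by
    intro x hx
    have hx1 : x ∈ Icc (0:ℝ) 1 := hbb1 ⟨hx.1, hx.2.le⟩
    have hxI : x ∈ Ico (0:ℝ) 1 := ⟨hx.1, lt_of_lt_of_le hx.2 hb.2.le⟩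
    have hphimem : phi p x ∈ Ioo (-1:ℝ) 1 :=
      ⟨by linarith [phi_nonneg (by linarith : (0:ℝ) < p) hx1], phi_lt_one hp hx1 hx.2⟩
    have hA2 : HasDerivAt (AA p (1/2)) (ff p (1/2) (phi p x)) (phi p x) :=
      AA_hasDerivAt (by linarith) hphimem
    have hphi := hasDerivAt_phi hp hxI
    have hcomp := hA2.comp x hphi
    have hAP : HasDerivAt (AA p (1-1/p)) (ff p (1-1/p) x) x :=
      AA_hasDerivAt (by linarith) ⟨by linarith [hx.1], hxI.2⟩
    have hGd := hcomp.sub ((hAP.const_mul (kk p)))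
    rw [key_alg hp hxI hx.2, sub_self] at hGd
    exact hGd.hasDerivWithinAt
  have hconst := constant_of_has_deriv_right_zero hcont hderiv
  have h0 : G 0 = 0 := by
    have hphi0 : phi p 0 = 0 := by simp [phi]
    simp [hG, hphi0, AA_zero]
  have := hconst s hs
  rw [h0] at this
  simpa [hG, sub_eq_zero] using this

/-! ### Reflection identity -/

lemma subst_F (hp : 1 < p) {s : ℝ} (hs : s ∈ Icc (0:ℝ) 1) :
    AA p (1-1/p) s + AA p (1-1/p) (psi p s) = AA p (1-1/p) 1 := by
  have hcP0 : (0:ℝ) ≤ 1 - 1/p := (cP_pos hp).le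
  have hcP1 : (1:ℝ) - 1/p < 1 := cP_lt_one hp
  have hpne : p ≠ 0 := by positivity
  rcases eq_or_lt_of_le hs.1 with h0 | h0
  · rw [← h0, psi_zero (by linarith), AA_zero]
    ring
  rcases eq_or_lt_of_le hs.2 with h1 | h1
  · rw [h1, psi_one (by linarith), AA_zero]
    ring
  set H : ℝ → ℝ := fun t => AA p (1-1/p) t + AA p (1-1/p) (psi p t) with hH
  have hcont : ContinuousOn H (Icc 0 1) := by
    refine ContinuousOn.add (AA_continuousOn hp hcP0 hcP1) ?_
    exact (AA_continuousOn hp hcP0 hcP1).comp (psi_continuous hp).continuousOn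
      (fun t ht => psi_mem (by linarith) ht)
  have hderiv : ∀ x ∈ Ioo (0:ℝ) 1, HasDerivAt H 0 x := by
    intro x hx
    have hxI : x ∈ Ico (0:ℝ) 1 := ⟨hx.1.le, hx.2⟩
    have hbase : 0 < 1 - x ^ p := base_pos (by linarith) ⟨by linarith [hx.1], hx.2⟩
    have hbase1 : 1 - x ^ p < 1 := by
      have : 0 < x ^ p := rpow_pos_of_pos hx.1 _
      linarith
    have hpsimem : psi p x ∈ Ioo (-1:ℝ) 1 := by
      constructor
      · have := rpow_pos_of_pos hbase (1/p)
        rw [psi]; linarith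
      · rw [psi]
        exact Real.rpow_lt_one hbase.le hbase1 (by positivity)
    have hA1 : HasDerivAt (AA p (1-1/p)) (ff p (1-1/p) x) x :=
      AA_hasDerivAt (by linarith) ⟨by linarith [hx.1], hx.2⟩
    have hA2 : HasDerivAt (AA p (1-1/p)) (ff p (1-1/p) (psi p x)) (psi p x) :=
      AA_hasDerivAt (by linarith) hpsimem
    have hpsid := hasDerivAt_psi hp hxI
    have hcomp := hA2.comp x hpsid
    have hHd := hA1.add hcomp
    have hkey : ff p (1-1/p) x
        + ff p (1-1/p) (psi p x) * (-(x ^ (p-1)) * (1 - x ^ p) ^ (1/p - 1)) = 0 := by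
      have hexp : p * -(1 - 1/p) = 1 - p := by field_simp; ring
      have hffpsi : ff p (1-1/p) (psi p x) = x ^ (1 - p) := by
        rw [ff, psi_rpow (by linarith) ⟨hx.1.le, hx.2.le⟩,
          show (1:ℝ) - (1 - x ^ p) = x ^ p by ring, ← Real.rpow_mul hx.1.le, hexp]
      have hxx : x ^ (1-p) * x ^ (p-1) = 1 := by
        rw [← Real.rpow_add hx.1, show (1:ℝ) - p + (p - 1) = 0 by ring, Real.rpow_zero]
      rw [hffpsi, ff, show -(1 - 1/p) = 1/p - 1 by ring]
      linear_combination (-(1 - x ^ p) ^ (1/p - 1)) * hxx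
    rw [hkey] at hHd
    exact hHd
  have key : ∀ a ∈ Ioo (0:ℝ) 1, H a = H 1 := by
    intro a ha
    have hconst := constant_of_has_deriv_right_zero (a := a) (b := 1)
      (hcont.mono (Icc_subset_Icc ha.1.le le_rfl))
      (fun x hx => (hderiv x ⟨lt_of_lt_of_le ha.1 hx.1, hx.2⟩).hasDerivWithinAt)
    exact (hconst 1 ⟨ha.2.le, le_rfl⟩).symm
  have hks := key s ⟨h0, h1⟩
  have h1' : H 1 = AA p (1-1/p) 1 := by
    simp [hH, psi_one (show (0:ℝ) < p by linarith), AA_zero]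
  calc AA p (1-1/p) s + AA p (1-1/p) (psi p s) = H s := rfl
    _ = H 1 := hks
    _ = AA p (1-1/p) 1 := h1'


/-! ### Corollaries of the substitution identities -/

lemma AA_bb_eq (hp : 1 < p) : AA p (1-1/p) (bb p) = AA p (1-1/p) 1 / 2 := by
  have h := subst_F hp ⟨(bb_mem hp).1.le, (bb_mem hp).2.le⟩
  rw [psi_bb hp] at h
  linarith

lemma pi_rel (hp : 1 < p) : AA p (1/2) 1 = kk p * AA p (1-1/p) 1 / 2 := by
  have h := subst_D hp (right_mem_Icc.2 (bb_mem hp).1.le)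
  rw [phi_bb hp, AA_bb_eq hp] at h
  linarith

lemma subst_D' (hp : 1 < p) {s : ℝ} (hs : s ∈ Icc (bb p) 1) :
    AA p (1/2) (phi p s) = kk p * (AA p (1-1/p) 1 - AA p (1-1/p) s) := by
  have hb := bb_mem hp
  have hs1 : s ∈ Icc (0:ℝ) 1 := ⟨le_trans hb.1.le hs.1, hs.2⟩
  have hpsile : psi p s ≤ bb p := by
    refine le_of_rpow_le (by linarith : (0:ℝ) < p)
      (psi_nonneg (by linarith : (0:ℝ) < p) hs1) hb.1.le ?_
    rw [psi_rpow (by linarith) hs1, bb_rpow hp]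
    have h2 : bb p ^ p ≤ s ^ p := Real.rpow_le_rpow hb.1.le hs.1 (by linarith)
    rw [bb_rpow hp] at h2
    linarith
  have hD := subst_D hp ⟨psi_nonneg (by linarith : (0:ℝ) < p) hs1, hpsile⟩
  rw [phi_psi hp hs1] at hD
  have hF := subst_F hp hs1
  rw [hD, show AA p (1-1/p) (psi p s) = AA p (1-1/p) 1 - AA p (1-1/p) s by linarith]

/-! ### Tail estimate -/

lemma tail_bound (hp : 1 < p) {s : ℝ} (hs : s ∈ Icc (0:ℝ) 1) :
    (p * (1 - s)) ^ (1/p) ≤ AA p (1-1/p) 1 - AA p (1-1/p) s := by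
  have hcP0 : (0:ℝ) ≤ 1 - 1/p := (cP_pos hp).le
  have hcP1 := cP_lt_one hp
  have hp0 : (0:ℝ) < p := by linarith
  have hint1 : IntervalIntegrable (ff p (1-1/p)) volume 0 s :=
    ff_intervalIntegrable_sub hp hcP0 hcP1 (by norm_num) hs
  have hint2 : IntervalIntegrable (ff p (1-1/p)) volume s 1 :=
    ff_intervalIntegrable_sub hp hcP0 hcP1 hs (by norm_num)
  have hadd : AA p (1-1/p) s + ∫ t in s..1, ff p (1-1/p) t = AA p (1-1/p) 1 :=
    intervalIntegral.integral_add_adjacent_intervals hint1 hint2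
  have hgint : IntervalIntegrable
      (fun t : ℝ => p ^ (-(1-1/p)) * (1-t) ^ (-(1-1/p))) volume s 1 :=
    (g_intervalIntegrable hcP1 s 1).const_mul _
  have hmono : (∫ t in s..1, p ^ (-(1-1/p)) * (1-t) ^ (-(1-1/p)))
      ≤ ∫ t in s..1, ff p (1-1/p) t := by
    refine intervalIntegral.integral_mono_on hs.2 hgint hint2 (fun t ht => ?_)
    rcases eq_or_lt_of_le ht.2 with rfl | h1
    · have hcne : -(1-1/p) ≠ 0 := by
        have := cP_pos hp
        intro h
        rw [neg_eq_zero] at h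
        linarith
      rw [ff, Real.one_rpow, sub_self, Real.zero_rpow hcne, mul_zero]
    · have h1t : (0:ℝ) < 1 - t := by linarith
      have htmem : t ∈ Icc (0:ℝ) 1 := ⟨le_trans hs.1 ht.1, ht.2⟩
      have hbase : 0 < 1 - t ^ p := base_pos hp0 ⟨by linarith [htmem.1], h1⟩
      have hBern : 1 - t ^ p ≤ p * (1 - t) := by
        have hB := one_add_mul_self_le_rpow_one_add
          (show (-1:ℝ) ≤ t - 1 by linarith [htmem.1]) hp.le
        rw [show (1:ℝ) + (t - 1) = t by ring] at hB
        linarith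
      rw [ff, ← Real.mul_rpow hp0.le h1t.le]
      exact Real.rpow_le_rpow_of_nonpos hbase hBern (by linarith [cP_pos hp])
  have hcomp : (∫ t in s..1, p ^ (-(1-1/p)) * (1-t) ^ (-(1-1/p)))
      = (p * (1-s)) ^ (1/p) := by
    rw [intervalIntegral.integral_const_mul]
    have hsub : (∫ t in s..1, (1-t) ^ (-(1-1/p)))
        = ∫ u in (0:ℝ)..(1-s), u ^ (-(1-1/p)) := by
      have h := intervalIntegral.integral_comp_sub_left
        (a := s) (b := 1) (fun u : ℝ => u ^ (-(1-1/p))) 1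
      simpa using h
    rw [hsub, integral_rpow (Or.inl (by linarith [cP_pos hp] : (-1:ℝ) < -(1-1/p)))]
    rw [show -(1-1/p) + 1 = 1/p by ring,
      Real.zero_rpow (by positivity : (1:ℝ)/p ≠ 0), sub_zero]
    rw [Real.mul_rpow hp0.le (by linarith [hs.2] : (0:ℝ) ≤ 1 - s)]
    have hppow : p ^ (-(1 - 1/p)) * p = p ^ ((1:ℝ)/p) := by
      nth_rewrite 3 [← Real.rpow_one p]
      rw [← Real.rpow_add hp0, show -(1-1/p) + 1 = 1/p by ring]
    rw [div_div_eq_mul_div, div_one]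
    linear_combination ((1-s) ^ ((1:ℝ)/p)) * hppow
  linarith [hmono, hcomp, hadd]

lemma one_sub_SS_le (hp : 1 < p) {d : ℝ} (hd0 : 0 ≤ d) (hd : d ≤ AA p (1-1/p) 1) :
    1 - SS p (1-1/p) (AA p (1-1/p) 1 - d) ≤ d ^ p / p := by
  have hcP0 : (0:ℝ) ≤ 1 - 1/p := (cP_pos hp).le
  have hcP1 := cP_lt_one hp
  have hp0 : (0:ℝ) < p := by linarith
  have hy : AA p (1-1/p) 1 - d ∈ Icc 0 (AA p (1-1/p) 1) := ⟨by linarith, by linarith⟩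
  set s := SS p (1-1/p) (AA p (1-1/p) 1 - d) with hsdef
  have hsmem : s ∈ Icc (0:ℝ) 1 := SS_mem hp hcP0 hcP1 hy
  have hAs : AA p (1-1/p) s = AA p (1-1/p) 1 - d := SS_rightInv hp hcP0 hcP1 hy
  have htb := tail_bound hp hsmem
  rw [hAs] at htb
  have hps : (0:ℝ) ≤ p * (1 - s) := mul_nonneg hp0.le (by linarith [hsmem.2])
  have h2 : ((p * (1-s)) ^ ((1:ℝ)/p)) ^ p ≤ d ^ p :=
    Real.rpow_le_rpow (rpow_nonneg hps _) (by linarith) hp0.le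
  rw [← Real.rpow_mul hps, show (1:ℝ)/p * p = 1 by field_simp, Real.rpow_one] at h2
  rw [le_div_iff₀ hp0]
  linarith

/-! ### Elementary bounds on `AA` -/

lemma le_AA (hp : 1 < p) (hc0 : 0 ≤ c) (hc1 : c < 1) {s : ℝ} (hs : s ∈ Ico (0:ℝ) 1) :
    s ≤ AA p c s := by
  have hint : IntervalIntegrable (ff p c) volume 0 s :=
    ff_intervalIntegrable_sub hp hc0 hc1 (by norm_num) ⟨hs.1, hs.2.le⟩
  have h1 : ∀ t ∈ Icc (0:ℝ) s, (1:ℝ) ≤ ff p c t := fun t ht =>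
    one_le_ff (by linarith) hc0 ⟨ht.1, lt_of_le_of_lt ht.2 hs.2⟩
  calc s = ∫ _ in (0:ℝ)..s, (1:ℝ) := by simp
    _ ≤ AA p c s := intervalIntegral.integral_mono_on hs.1 intervalIntegrable_const hint h1

lemma AA_le (hp : 1 < p) (hc0 : 0 ≤ c) (hc1 : c < 1) {s : ℝ} (hs : s ∈ Ico (0:ℝ) 1) :
    AA p c s ≤ s * ff p c s := by
  have hint : IntervalIntegrable (ff p c) volume 0 s :=
    ff_intervalIntegrable_sub hp hc0 hc1 (by norm_num) ⟨hs.1, hs.2.le⟩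
  have h1 : ∀ t ∈ Icc (0:ℝ) s, ff p c t ≤ ff p c s := by
    intro t ht
    have hbs : 0 < 1 - s ^ p := base_pos (by linarith) ⟨by linarith [hs.1], hs.2⟩
    have htp : t ^ p ≤ s ^ p := Real.rpow_le_rpow ht.1 ht.2 (by linarith)
    exact Real.rpow_le_rpow_of_nonpos hbs (by linarith) (by linarith)
  calc AA p c s ≤ ∫ _ in (0:ℝ)..s, ff p c s :=
        intervalIntegral.integral_mono_on hs.1 hint intervalIntegrable_const h1
    _ = s * ff p c s := by simp [mul_comm]

/-! ### The image of `SS` and inverse function theorem -/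

lemma SS_image (hp : 1 < p) (hc0 : 0 ≤ c) (hc1 : c < 1) :
    SS p c '' Icc 0 (AA p c 1) = Icc 0 1 := by
  apply Subset.antisymm
  · rintro _ ⟨y, hy, rfl⟩
    exact SS_mem hp hc0 hc1 hy
  · intro t ht
    refine ⟨AA p c t, ?_, SS_leftInv hp hc0 hc1 ht⟩
    rw [← AA_image hp hc0 hc1]
    exact mem_image_of_mem _ ht

lemma hasDerivAt_SS (hp : 1 < p) (hc0 : 0 ≤ c) (hc1 : c < 1) {x : ℝ}
    (hx : x ∈ Ioo (0:ℝ) (AA p c 1)) :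
    HasDerivAt (SS p c) ((1 - (SS p c x) ^ p) ^ c) x := by
  have hxmem : x ∈ Icc 0 (AA p c 1) := ⟨hx.1.le, hx.2.le⟩
  have hsmem : SS p c x ∈ Icc (0:ℝ) 1 := SS_mem hp hc0 hc1 hxmem
  have hAs : AA p c (SS p c x) = x := SS_rightInv hp hc0 hc1 hxmem
  have hs0 : 0 < SS p c x := by
    rcases eq_or_lt_of_le hsmem.1 with h | h
    · exfalso
      rw [← h, AA_zero] at hAs
      exact absurd hAs.symm (ne_of_gt hx.1)
    · exact h
  have hs1 : SS p c x < 1 := by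
    rcases eq_or_lt_of_le hsmem.2 with h | h
    · exfalso
      rw [h] at hAs
      exact absurd hAs (ne_of_gt hx.2)
    · exact h
  have hsIoo : SS p c x ∈ Ioo (-1:ℝ) 1 := ⟨by linarith, hs1⟩
  have hfd : HasDerivAt (AA p c) (ff p c (SS p c x)) (SS p c x) :=
    AA_hasDerivAt (by linarith) hsIoo
  have hne : ff p c (SS p c x) ≠ 0 := (ff_pos (by linarith) hsIoo).ne'
  have hg : ContinuousAt (SS p c) x := by
    refine StrictMonoOn.continuousAt_of_image_mem_nhds (SS_strictMonoOn hp hc0 hc1)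
      (Icc_mem_nhds hx.1 hx.2) ?_
    rw [SS_image hp hc0 hc1]
    exact Icc_mem_nhds hs0 hs1
  have hfg : ∀ᶠ y in 𝓝 x, AA p c (SS p c y) = y := by
    filter_upwards [Ioo_mem_nhds hx.1 hx.2] with y hy
    exact SS_rightInv hp hc0 hc1 ⟨hy.1.le, hy.2.le⟩
  have hinv := HasDerivAt.of_local_left_inverse hg hfd hne hfg
  have heq : (ff p c (SS p c x))⁻¹ = (1 - (SS p c x) ^ p) ^ c := by
    rw [ff, ← Real.rpow_neg (by nlinarith [hsIoo, base_pos (show (0:ℝ) < p by linarith) hsIoo] : (0:ℝ) ≤ 1 - (SS p c x) ^ p), neg_neg]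
  rwa [heq] at hinv

/-! ### Derivative of `sinpq` -/

lemma pipq_pos {r q : ℝ} (hq : 1 < q) (hc0 : 0 ≤ 1/r) (hc1 : 1/r < 1) :
    0 < pipq r q := by
  rw [pipq_eq]
  linarith [AA_one_pos hq hc0 hc1]

lemma hasDerivAt_sinpq_interior {r q : ℝ} (hq : 1 < q) (hc0 : 0 ≤ 1/r) (hc1 : 1/r < 1)
    {x : ℝ} (hx : x ∈ Ioo (0:ℝ) (pipq r q / 2)) :
    HasDerivAt (sinpq r q) ((1 - (sinHalf r q x) ^ q) ^ (1/r)) x := by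
  have hT : 0 < pipq r q := pipq_pos hq hc0 hc1
  have hT2 : pipq r q / 2 = AA q (1/r) 1 := by rw [pipq_eq]; ring
  have hx' : x ∈ Ioo (0:ℝ) (AA q (1/r) 1) := by rw [← hT2]; exact hx
  have hS := hasDerivAt_SS hq hc0 hc1 hx'
  rw [sinHalf_eq]
  refine HasDerivAt.congr_of_eventuallyEq hS ?_
  filter_upwards [Ioo_mem_nhds hx.1 hx.2] with y hy
  rw [sinpq_eq_sinHalf hT hy.1.le hy.2.le, sinHalf_eq]

lemma sinpq_zero {r q : ℝ} (hq : 1 < q) (hc0 : 0 ≤ 1/r) (hc1 : 1/r < 1) :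
    sinpq r q 0 = 0 := by
  have hT : 0 < pipq r q := pipq_pos hq hc0 hc1
  rw [sinpq_eq_sinHalf hT le_rfl (by linarith), sinHalf_eq, SS_zero hq hc0 hc1]

lemma hasDerivAt_sinpq_zero {r q : ℝ} (hq : 1 < q) (hc0 : 0 < 1/r) (hc1 : 1/r < 1) :
    HasDerivAt (sinpq r q) 1 0 := by
  have hA1 : 0 < AA q (1/r) 1 := AA_one_pos hq hc0.le hc1
  have hT : 0 < pipq r q := pipq_pos hq hc0.le hc1
  have hT2 : pipq r q / 2 = AA q (1/r) 1 := by rw [pipq_eq]; ring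
  have hs0 : sinpq r q 0 = 0 := sinpq_zero hq hc0.le hc1
  rw [hasDerivAt_iff_tendsto_slope]
  have hbnd : ∀ y : ℝ, y ≠ 0 → |y| < AA q (1/r) 1 →
      (1 - (SS q (1/r) |y|) ^ q) ^ (1/r) ≤ slope (sinpq r q) 0 y ∧
        slope (sinpq r q) 0 y ≤ 1 ∧ 0 ≤ SS q (1/r) |y| ∧ SS q (1/r) |y| ≤ |y| := by
    intro y hy0 hyA
    have habs : 0 < |y| := abs_pos.2 hy0
    have hslope : slope (sinpq r q) 0 y = SS q (1/r) |y| / |y| := by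
      rw [slope_def_field, hs0, sub_zero, sub_zero]
      rcases lt_or_gt_of_ne hy0 with hneg | hpos
      · have hyT : -(pipq r q) / 2 ≤ y := by
          rw [neg_div]
          have : -y ≤ |y| := neg_le_abs y
          linarith
        rw [abs_of_neg hneg, sinpq_neg hT hyT hneg, sinHalf_eq, div_neg, neg_div]
      · rw [abs_of_pos hpos, sinpq_eq_sinHalf hT hpos.le (by linarith [le_abs_self y]),
          sinHalf_eq]
    have hymem : |y| ∈ Icc 0 (AA q (1/r) 1) := ⟨habs.le, hyA.le⟩
    have hsmem : SS q (1/r) |y| ∈ Icc (0:ℝ) 1 := SS_mem hq hc0.le hc1 hymem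
    have hAs : AA q (1/r) (SS q (1/r) |y|) = |y| := SS_rightInv hq hc0.le hc1 hymem
    have hs1 : SS q (1/r) |y| < 1 := by
      rcases eq_or_lt_of_le hsmem.2 with h | h
      · exfalso; rw [h] at hAs; exact absurd hAs (ne_of_gt hyA)
      · exact h
    have hsIco : SS q (1/r) |y| ∈ Ico (0:ℝ) 1 := ⟨hsmem.1, hs1⟩
    have hle : SS q (1/r) |y| ≤ |y| := by
      have h := le_AA hq hc0.le hc1 hsIco
      rwa [hAs] at h
    refine ⟨?_, ?_, hsmem.1, hle⟩
    · rw [hslope, le_div_iff₀ habs]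
      have h2 := AA_le hq hc0.le hc1 hsIco
      rw [hAs] at h2
      have hbp : (0:ℝ) < 1 - (SS q (1/r) |y|) ^ q :=
        base_pos (by linarith) ⟨by linarith [hsmem.1], hs1⟩
      have hffpos : 0 < ff q (1/r) (SS q (1/r) |y|) :=
        ff_pos (by linarith) ⟨by linarith [hsmem.1], hs1⟩
      have hinv : (ff q (1/r) (SS q (1/r) |y|))⁻¹
          = (1 - (SS q (1/r) |y|) ^ q) ^ (1/r) := by
        rw [ff, ← Real.rpow_neg hbp.le, neg_neg]
      calc (1 - (SS q (1/r) |y|) ^ q) ^ (1/r) * |y|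
          ≤ (1 - (SS q (1/r) |y|) ^ q) ^ (1/r) *
            (SS q (1/r) |y| * ff q (1/r) (SS q (1/r) |y|)) :=
            mul_le_mul_of_nonneg_left h2 (rpow_nonneg hbp.le _)
        _ = SS q (1/r) |y| := by
            rw [← hinv]
            field_simp
    · rw [hslope, div_le_one habs]
      exact hle
  have hev' : ∀ᶠ y in (𝓝[≠] (0:ℝ)), y ≠ 0 ∧ |y| < AA q (1/r) 1 := by
    filter_upwards [self_mem_nhdsWithin,
      nhdsWithin_le_nhds ((continuous_abs.tendsto' 0 0 abs_zero).eventually_lt_const hA1)]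
      with y h1 h2
    exact ⟨h1, h2⟩
  have hS0 : Tendsto (fun y => SS q (1/r) |y|) (𝓝[≠] (0:ℝ)) (𝓝 0) := by
    refine tendsto_of_tendsto_of_tendsto_of_le_of_le' tendsto_const_nhds
      ((continuous_abs.tendsto' 0 0 abs_zero).mono_left nhdsWithin_le_nhds) ?_ ?_
    · filter_upwards [hev'] with y hy using (hbnd y hy.1 hy.2).2.2.1
    · filter_upwards [hev'] with y hy using (hbnd y hy.1 hy.2).2.2.2
  have hcontw : ContinuousAt (fun z : ℝ => (1 - z ^ q) ^ (1/r)) 0 := by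
    have h1 : ContinuousAt (fun u : ℝ => u ^ ((1:ℝ)/r)) (1 - (0:ℝ) ^ q) := by
      rw [Real.zero_rpow (by positivity : q ≠ 0), sub_zero]
      exact continuousAt_rpow_const _ _ (Or.inl (by norm_num))
    have h2 : ContinuousAt (fun z : ℝ => 1 - z ^ q) 0 :=
      (continuous_base (by linarith)).continuousAt
    exact ContinuousAt.comp (f := fun z : ℝ => 1 - z ^ q) (x := (0:ℝ)) h1 h2
  have hlow : Tendsto (fun y => (1 - (SS q (1/r) |y|) ^ q) ^ (1/r)) (𝓝[≠] (0:ℝ)) (𝓝 1) := by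
    have h := hcontw.tendsto.comp hS0
    have hval : (1 - (0:ℝ) ^ q) ^ ((1:ℝ)/r) = 1 := by
      rw [Real.zero_rpow (by positivity : q ≠ 0), sub_zero, Real.one_rpow]
    rw [hval] at h
    exact h
  refine tendsto_of_tendsto_of_tendsto_of_le_of_le' hlow tendsto_const_nhds ?_ ?_
  · filter_upwards [hev'] with y hy using (hbnd y hy.1 hy.2).1
  · filter_upwards [hev'] with y hy using (hbnd y hy.1 hy.2).2.1

lemma hasDerivAt_sinpq_top {r q : ℝ} (hq : 1 < q) (heq : (1:ℝ)/r = 1 - 1/q) :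
    HasDerivAt (sinpq r q) 0 (pipq r q / 2) := by
  have hcP0 : (0:ℝ) ≤ 1 - 1/q := (cP_pos hq).le
  have hcP1 : (1:ℝ) - 1/q < 1 := cP_lt_one hq
  have hc0 : (0:ℝ) < 1/r := by rw [heq]; exact cP_pos hq
  have hc1 : 1/r < 1 := by rw [heq]; exact cP_lt_one hq
  have hA1 : 0 < AA q (1-1/q) 1 := AA_one_pos hq hcP0 hcP1
  have hT : 0 < pipq r q := pipq_pos hq hc0.le hc1
  have hT2 : pipq r q / 2 = AA q (1-1/q) 1 := by rw [pipq_eq, heq]; ring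
  have hval : sinpq r q (pipq r q / 2) = 1 := by
    rw [sinpq_eq_sinHalf hT (by linarith) le_rfl, sinHalf_eq, heq, hT2,
      SS_one hq hcP0 hcP1]
  rw [hasDerivAt_iff_tendsto_slope]
  have hbnd : ∀ y : ℝ, y ≠ pipq r q / 2 → |y - pipq r q / 2| < AA q (1-1/q) 1 →
      ‖slope (sinpq r q) (pipq r q / 2) y‖ ≤ |y - pipq r q / 2| ^ (q-1) / q := by
    intro y hy0 hyM
    set d := |y - pipq r q / 2| with hd
    have hd0 : 0 < d := abs_pos.2 (sub_ne_zero.2 hy0)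
    have hvy : sinpq r q y = SS q (1-1/q) (AA q (1-1/q) 1 - d) := by
      rcases lt_or_gt_of_ne hy0 with hlt | hgt
      · have hdy : d = pipq r q / 2 - y := by
          rw [hd, abs_of_neg (by linarith : y - pipq r q / 2 < 0)]
          ring
        have h0y : (0:ℝ) ≤ y := by
          rw [hdy] at hyM
          linarith [hT2]
        rw [sinpq_eq_sinHalf hT h0y (by linarith), sinHalf_eq, heq]
        congr 1
        rw [← hT2, hdy]
        ring
      · have hdy : d = y - pipq r q / 2 := by
          rw [hd, abs_of_pos (by linarith : 0 < y - pipq r q / 2)]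
        have hylt : y < pipq r q := by
          rw [hdy] at hyM
          linarith [hT2]
        rw [sinpq_eq_reflect hT hgt hylt, sinHalf_eq, heq]
        congr 1
        rw [← hT2, hdy]
        ring
    have hmem1 : AA q (1-1/q) 1 - d ∈ Icc 0 (AA q (1-1/q) 1) := ⟨by linarith, by linarith⟩
    have hSmem : SS q (1-1/q) (AA q (1-1/q) 1 - d) ∈ Icc (0:ℝ) 1 := SS_mem hq hcP0 hcP1 hmem1
    have hest := one_sub_SS_le (p := q) hq hd0.le hyM.le
    have hq0 : (0:ℝ) < q := by linarith
    rw [Real.norm_eq_abs, slope_def_field, hval, hvy, abs_div, ← hd]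
    rw [abs_of_nonpos (by linarith [hSmem.2] :
      SS q (1-1/q) (AA q (1-1/q) 1 - d) - 1 ≤ 0), neg_sub]
    rw [div_le_div_iff₀ hd0 hq0]
    have hdq : d ^ (q-1) * d = d ^ q := by
      nth_rewrite 2 [← Real.rpow_one d]
      rw [← Real.rpow_add hd0]
      norm_num
    have h2 : (1 - SS q (1-1/q) (AA q (1-1/q) 1 - d)) * q ≤ d ^ q :=
      (le_div_iff₀ hq0).1 hest
    linarith
  have hdist : ∀ᶠ y in 𝓝 (pipq r q / 2), |y - pipq r q / 2| < AA q (1-1/q) 1 := by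
    have hcontd : Tendsto (fun y : ℝ => |y - pipq r q / 2|) (𝓝 (pipq r q / 2)) (𝓝 0) := by
      have := ((continuous_id.sub continuous_const).abs :
        Continuous fun y : ℝ => |y - pipq r q / 2|)
      have h0 : |pipq r q / 2 - pipq r q / 2| = 0 := by simp
      exact this.tendsto' _ _ h0
    exact hcontd.eventually_lt_const hA1
  have hev : ∀ᶠ y in 𝓝[≠] (pipq r q / 2),
      y ≠ pipq r q / 2 ∧ |y - pipq r q / 2| < AA q (1-1/q) 1 := by
    filter_upwards [self_mem_nhdsWithin, nhdsWithin_le_nhds hdist] with y h1 h2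
    exact ⟨h1, h2⟩
  refine squeeze_zero_norm' (a := fun y => |y - pipq r q / 2| ^ (q-1) / q) ?_ ?_
  · filter_upwards [hev] with y hy using hbnd y hy.1 hy.2
  · have h1 : Tendsto (fun y : ℝ => |y - pipq r q / 2|) (𝓝[≠] (pipq r q / 2)) (𝓝 0) := by
      have := ((continuous_id.sub continuous_const).abs :
        Continuous fun y : ℝ => |y - pipq r q / 2|)
      have h0 : |pipq r q / 2 - pipq r q / 2| = 0 := by simp
      exact (this.tendsto' _ _ h0).mono_left nhdsWithin_le_nhds
    have h2 : ContinuousAt (fun z : ℝ => z ^ (q-1)) 0 :=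
      Real.continuousAt_rpow_const 0 (q-1) (Or.inr (by linarith))
    have h3 := h2.tendsto.comp h1
    rw [Real.zero_rpow (by linarith : (0:ℝ) < q - 1).ne'] at h3
    simpa using h3.div_const q

lemma cospq_formula {r q : ℝ} (hq : 1 < q) (heq : (1:ℝ)/r = 1 - 1/q) {x : ℝ}
    (hx : x ∈ Icc (0:ℝ) (pipq r q / 2)) :
    cospq r q x = (1 - (sinHalf r q x) ^ q) ^ ((1:ℝ) - 1/q) := by
  have hcP0 : (0:ℝ) ≤ 1 - 1/q := (cP_pos hq).le
  have hcP1 : (1:ℝ) - 1/q < 1 := cP_lt_one hq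
  have hc0 : (0:ℝ) < 1/r := by rw [heq]; exact cP_pos hq
  have hc1 : 1/r < 1 := by rw [heq]; exact cP_lt_one hq
  have hT2 : pipq r q / 2 = AA q (1-1/q) 1 := by rw [pipq_eq, heq]; ring
  have hq0 : (0:ℝ) < q := by linarith
  rcases eq_or_lt_of_le hx.1 with h0 | h0
  · rw [← h0]
    have hd := hasDerivAt_sinpq_zero hq hc0 hc1
    simp only [cospq]
    rw [hd.deriv, sinHalf_eq, heq, SS_zero hq hcP0 hcP1,
      Real.zero_rpow hq0.ne', sub_zero, Real.one_rpow]
  rcases eq_or_lt_of_le hx.2 with h1 | h1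
  · rw [h1]
    have hd := hasDerivAt_sinpq_top hq heq
    simp only [cospq]
    rw [hd.deriv, sinHalf_eq, heq, hT2, SS_one hq hcP0 hcP1, Real.one_rpow,
      sub_self, Real.zero_rpow (by linarith [cP_pos hq] : (1:ℝ) - 1/q ≠ 0)]
  · have hd := hasDerivAt_sinpq_interior hq hc0.le hc1 ⟨h0, h1⟩
    simp only [cospq]
    rw [hd.deriv, heq]

end GenTrig

/-- Multiple-angle formula: `sin_{2,p}(2^{2/p}x) = 2^{2/p} sin_{p*,p}(x) cos_{p*,p}(x)^{p*-1}`
for `x ∈ [0, π_{p*,p}/2] = [0, 2^{-2/p}π_{2,p}]`, where `p* = p/(p-1)`. -/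
theorem multiple_angle_sin (p : ℝ) (hp : 1 < p) :
    Set.Icc (0:ℝ) (pipq (p/(p-1)) p / 2) = Set.Icc (0:ℝ) ((2:ℝ) ^ (-(2/p)) * pipq 2 p) ∧
    ∀ x ∈ Set.Icc (0:ℝ) (pipq (p/(p-1)) p / 2),
      sinpq 2 p ((2:ℝ) ^ (2/p) * x)
        = (2:ℝ) ^ (2/p) * sinpq (p/(p-1)) p x * cospq (p/(p-1)) p x ^ (p/(p-1) - 1) := by
  open GenTrig in
  have hp0 : (0:ℝ) < p := by linarith
  have hp1 : p - 1 ≠ 0 := by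
    intro h
    rw [sub_eq_zero] at h
    exact absurd h (ne_of_gt hp)
  have heq : (1:ℝ)/(p/(p-1)) = 1 - 1/p := by field_simp
  have hcP0 : (0:ℝ) ≤ 1 - 1/p := (GenTrig.cP_pos hp).le
  have hcP1 : (1:ℝ) - 1/p < 1 := GenTrig.cP_lt_one hp
  have hA1 : 0 < GenTrig.AA p (1-1/p) 1 := GenTrig.AA_one_pos hp hcP0 hcP1
  have hTP2 : pipq (p/(p-1)) p / 2 = GenTrig.AA p (1-1/p) 1 := by
    rw [GenTrig.pipq_eq, heq]; ring
  have hpirel := GenTrig.pi_rel hp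
  have hT2A : pipq 2 p = GenTrig.kk p * GenTrig.AA p (1-1/p) 1 := by
    rw [GenTrig.pipq_eq 2 p, hpirel]; ring
  have hkinv : (2:ℝ) ^ (-(2/p)) * GenTrig.kk p = 1 := by
    rw [GenTrig.kk, ← Real.rpow_add two_pos]
    norm_num
  have hend : pipq (p/(p-1)) p / 2 = (2:ℝ) ^ (-(2/p)) * pipq 2 p := by
    rw [hTP2, hT2A]
    linear_combination (-(GenTrig.AA p (1-1/p) 1)) * hkinv
  constructor
  · rw [hend]
  · intro x hx0
    have hx : x ∈ Set.Icc (0:ℝ) (GenTrig.AA p (1-1/p) 1) := by rwa [hTP2] at hx0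
    have hTP : 0 < pipq (p/(p-1)) p := by
      rw [GenTrig.pipq_eq, heq]
      linarith
    have hT2pos : 0 < pipq 2 p := by
      rw [GenTrig.pipq_eq 2 p]
      linarith [GenTrig.AA_one_pos hp (by norm_num : (0:ℝ) ≤ 1/2) (by norm_num : (1:ℝ)/2 < 1)]
    set s := GenTrig.SS p (1-1/p) x with hs
    have hsmem : s ∈ Set.Icc (0:ℝ) 1 := GenTrig.SS_mem hp hcP0 hcP1 hx
    have hAs : GenTrig.AA p (1-1/p) s = x := GenTrig.SS_rightInv hp hcP0 hcP1 hx
    have hsin : sinpq (p/(p-1)) p x = s := by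
      rw [GenTrig.sinpq_eq_sinHalf hTP hx.1 (by rw [hTP2]; exact hx.2),
        GenTrig.sinHalf_eq, heq, hs]
    have hcos : cospq (p/(p-1)) p x = (1 - s ^ p) ^ ((1:ℝ) - 1/p) := by
      rw [GenTrig.cospq_formula hp heq hx0, GenTrig.sinHalf_eq, heq, ← hs]
    have hkk : (2:ℝ) ^ (2/p) = GenTrig.kk p := rfl
    have hLHS : sinpq 2 p ((2:ℝ) ^ (2/p) * x) = GenTrig.phi p s := by
      rw [hkk]
      rcases eq_or_lt_of_le hx.2 with hxe | hxlt
      · rw [hxe, ← hT2A, GenTrig.sinpq_at_pi hT2pos, GenTrig.sinHalf_eq,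
          GenTrig.SS_zero hp (by norm_num) (by norm_num), neg_zero]
        have hs1 : s = 1 := by rw [hs, hxe, GenTrig.SS_one hp hcP0 hcP1]
        rw [hs1, GenTrig.phi, GenTrig.psi_one hp0]
        ring
      · rcases le_or_gt s (GenTrig.bb p) with hsb | hsb
        · have hxb : x ≤ GenTrig.AA p (1-1/p) (GenTrig.bb p) := by
            rw [← hAs]
            exact (GenTrig.AA_strictMonoOn hp hcP0 hcP1).monotoneOn hsmem
              ⟨(GenTrig.bb_mem hp).1.le, (GenTrig.bb_mem hp).2.le⟩ hsb
          rw [GenTrig.AA_bb_eq hp] at hxb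
          have hkx2 : GenTrig.kk p * x ≤ pipq 2 p / 2 := by
            rw [hT2A]
            have h' := mul_le_mul_of_nonneg_left hxb (GenTrig.kk_pos (p := p)).le
            linarith
          have hD := GenTrig.subst_D hp ⟨hsmem.1, hsb⟩
          rw [GenTrig.sinpq_eq_sinHalf hT2pos
            (mul_nonneg (GenTrig.kk_pos (p := p)).le hx.1) hkx2, GenTrig.sinHalf_eq]
          rw [show GenTrig.kk p * x = GenTrig.AA p (1/2) (GenTrig.phi p s) by
            rw [hD, hAs]]
          exact GenTrig.SS_leftInv hp (by norm_num) (by norm_num)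
            (GenTrig.phi_mem hp hsmem)
        · have hxb : GenTrig.AA p (1-1/p) (GenTrig.bb p) < x := by
            rw [← hAs]
            exact (GenTrig.AA_strictMonoOn hp hcP0 hcP1)
              ⟨(GenTrig.bb_mem hp).1.le, (GenTrig.bb_mem hp).2.le⟩ hsmem hsb
          rw [GenTrig.AA_bb_eq hp] at hxb
          have hkx1 : pipq 2 p / 2 < GenTrig.kk p * x := by
            rw [hT2A]
            have h' := mul_lt_mul_of_pos_left hxb (GenTrig.kk_pos (p := p))
            linarith
          have hkx2 : GenTrig.kk p * x < pipq 2 p := by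
            rw [hT2A]
            exact mul_lt_mul_of_pos_left hxlt (GenTrig.kk_pos (p := p))
          rw [GenTrig.sinpq_eq_reflect hT2pos hkx1 hkx2, GenTrig.sinHalf_eq]
          have hD' := GenTrig.subst_D' hp ⟨hsb.le, hsmem.2⟩
          rw [show pipq 2 p - GenTrig.kk p * x = GenTrig.AA p (1/2) (GenTrig.phi p s) by
            rw [hD', hAs, hT2A]; ring]
          exact GenTrig.SS_leftInv hp (by norm_num) (by norm_num)
            (GenTrig.phi_mem hp hsmem)
    rw [hLHS, hsin, hcos]
    have hexp : ((1 - s ^ p) ^ ((1:ℝ) - 1/p)) ^ (p/(p-1) - 1)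
        = (1 - s ^ p) ^ ((1:ℝ)/p) := by
      rw [← Real.rpow_mul (GenTrig.base_mem hp0 hsmem).1]
      congr 1
      field_simp
      ring
    rw [hexp, GenTrig.phi, GenTrig.psi, GenTrig.kk]
    ring
end

section
/- For every p ∈ (1,∞), setting p* = p/(p−1), and for every real x, one has sin_{2,p}(2^{2/p}·x) = 2^{2/p}·sin_{p*,p}(x)·|cos_{p*,p}(x)|^{p*−2}·cos_{p*,p}(x), and cos_{2,p}(2^{2/p}·x) = |cos_{p*,p}(x)|^{p*} − |sin_{p*,p}(x)|^p = 1 − 2|sin_{p*,p}(x)|^p = 2|cos_{p*,p}(x)|^{p*} − 1. -/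
open Real Set MeasureTheory Filter

open Topology

/-- Auxiliary: the value of `sinpq` as a function of the normalized argument. -/
noncomputable def Wfun (a q T x : ℝ) : ℝ :=
  if x < 0 then -(sinHalf a q (if -x ≤ T / 2 then -x else T + x))
  else sinHalf a q (if x ≤ T / 2 then x else T - x)

section General

variable {a q : ℝ} (ha : 1 < a) (hq : 1 < q)

include hq in
lemma base_pos (t : ℝ) (ht : t ∈ Ico (0:ℝ) 1) : 0 < 1 - t ^ q := by
  have : t ^ q < 1 := rpow_lt_one ht.1 ht.2 (by linarith)
  linarith

include hq in
lemma integrand_pos (t : ℝ) (ht : t ∈ Ico (0:ℝ) 1) : 0 < (1 - t ^ q) ^ (-(1 / a)) :=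
  rpow_pos_of_pos (base_pos hq t ht) _

lemma integrand_measurable : Measurable fun t : ℝ => (1 - t ^ q) ^ (-(1 / a)) := by
  fun_prop

include ha hq in
lemma integrand_le (t : ℝ) (ht : t ∈ Ico (0:ℝ) 1) :
    (1 - t ^ q) ^ (-(1 / a)) ≤ (1 - t) ^ (-(1 / a)) := by
  have h1 : t ^ q ≤ t := by
    rcases eq_or_lt_of_le ht.1 with h | h
    · rw [← h, zero_rpow (by linarith : q ≠ 0)]
    · calc t ^ q ≤ t ^ (1:ℝ) := rpow_le_rpow_of_exponent_ge h ht.2.le (by linarith)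
        _ = t := rpow_one t
  have h2 : t ^ q ≤ t ^ q := le_refl _
  exact rpow_le_rpow_of_nonpos (by linarith [ht.2]) (by linarith)
    (neg_nonpos.mpr (by positivity))

include ha hq in
lemma integrable_main : IntervalIntegrable (fun t : ℝ => (1 - t ^ q) ^ (-(1 / a)))
    volume 0 1 := by
  have hr : (-1 : ℝ) < -(1 / a) := by
    have : 1 / a < 1 := by rw [div_lt_one (by linarith)]; linarith
    linarith
  have hg : IntervalIntegrable (fun t : ℝ => (1 - t) ^ (-(1 / a))) volume 0 1 := by
    have := (intervalIntegral.intervalIntegrable_rpow' (a := 0) (b := 1) hr).comp_sub_left 1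
    simpa using this.symm
  refine hg.mono_fun ((integrand_measurable (a := a) (q := q)).aestronglyMeasurable.restrict) ?_
  refine (ae_restrict_iff' measurableSet_uIoc).mpr (ae_of_all _ fun t ht => ?_)
  rw [uIoc_of_le (by norm_num : (0:ℝ) ≤ 1)] at ht
  simp only [Real.norm_eq_abs]
  rcases eq_or_lt_of_le ht.2 with h | h
  · have h1 : (1:ℝ) - t ^ q = 0 := by rw [h, Real.one_rpow]; ring
    have h2 : (1:ℝ) - t = 0 := by rw [h]; ring
    rw [h1, h2, zero_rpow (by simp; positivity : -(1/a) ≠ 0)]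
  · have htI : t ∈ Ico (0:ℝ) 1 := ⟨ht.1.le, h⟩
    rw [abs_of_nonneg (rpow_nonneg (by linarith [base_pos hq t htI]) _),
      abs_of_nonneg (rpow_nonneg (by linarith [htI.2]) _)]
    exact integrand_le ha hq t htI

include ha hq in
lemma integrable_sub (x y : ℝ) (hx : x ∈ Icc (0:ℝ) 1) (hy : y ∈ Icc (0:ℝ) 1) :
    IntervalIntegrable (fun t : ℝ => (1 - t ^ q) ^ (-(1 / a))) volume x y := by
  apply (integrable_main ha hq).mono_set
  rw [uIcc_of_le (by norm_num : (0:ℝ) ≤ 1)]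
  exact uIcc_subset_Icc hx hy

include ha hq in
lemma arcsinpq_sub (x y : ℝ) (hx : x ∈ Icc (0:ℝ) 1) (hy : y ∈ Icc (0:ℝ) 1) :
    arcsinpq a q y - arcsinpq a q x = ∫ t in x..y, (1 - t ^ q) ^ (-(1 / a)) := by
  unfold arcsinpq
  exact intervalIntegral.integral_interval_sub_left
    (integrable_sub ha hq 0 y (by simp) hy) (integrable_sub ha hq 0 x (by simp) hx)

include ha hq in
lemma arcsinpq_strictMonoOn : StrictMonoOn (arcsinpq a q) (Icc 0 1) := by
  intro x hx y hy hxy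
  have hsub := arcsinpq_sub ha hq x y hx hy
  have hpos : 0 < ∫ t in x..y, (1 - t ^ q) ^ (-(1 / a)) := by
    apply intervalIntegral.intervalIntegral_pos_of_pos_on (integrable_sub ha hq x y hx hy) _ hxy
    intro t ht
    exact integrand_pos hq t ⟨le_trans hx.1 ht.1.le, lt_of_lt_of_le ht.2 hy.2⟩
  linarith

include ha hq in
lemma arcsinpq_continuousOn : ContinuousOn (arcsinpq a q) (Icc 0 1) := by
  have h := intervalIntegral.continuousOn_primitive_interval'
    ((integrable_main ha hq)) (left_mem_uIcc (a := (0:ℝ)) (b := 1))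
  rw [uIcc_of_le (by norm_num : (0:ℝ) ≤ 1)] at h
  exact h

lemma arcsinpq_zero : arcsinpq a q 0 = 0 := intervalIntegral.integral_same

lemma arcsinpq_one_eq : arcsinpq a q 1 = pipq a q / 2 := by unfold pipq; ring

include ha hq in
lemma pipq_pos : 0 < pipq a q := by
  have h0 : (0:ℝ) ∈ Icc (0:ℝ) 1 := by simp
  have h1 : (1:ℝ) ∈ Icc (0:ℝ) 1 := by simp
  have := arcsinpq_strictMonoOn ha hq h0 h1 one_pos
  rw [arcsinpq_zero] at this
  unfold pipq; linarith

include ha hq in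
lemma arcsinpq_mem (x : ℝ) (hx : x ∈ Icc (0:ℝ) 1) :
    arcsinpq a q x ∈ Icc 0 (pipq a q / 2) := by
  have h0 : (0:ℝ) ∈ Icc (0:ℝ) 1 := by simp
  have h1 : (1:ℝ) ∈ Icc (0:ℝ) 1 := by simp
  have hm := (arcsinpq_strictMonoOn ha hq).monotoneOn
  constructor
  · have := hm h0 hx hx.1
    rwa [arcsinpq_zero] at this
  · have := hm hx h1 hx.2
    rwa [arcsinpq_one_eq] at this

include ha hq in
lemma arcsinpq_surjOn : SurjOn (arcsinpq a q) (Icc 0 1) (Icc 0 (pipq a q / 2)) := by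
  have h := intermediate_value_Icc (by norm_num : (0:ℝ) ≤ 1) (arcsinpq_continuousOn ha hq)
  rw [arcsinpq_zero, arcsinpq_one_eq] at h
  exact h

include ha hq in
lemma sinHalf_arcsinpq (s : ℝ) (hs : s ∈ Icc (0:ℝ) 1) :
    sinHalf a q (arcsinpq a q s) = s :=
  ((arcsinpq_strictMonoOn ha hq).injOn).leftInvOn_invFunOn hs

include ha hq in
lemma sinHalf_mem (y : ℝ) (hy : y ∈ Icc 0 (pipq a q / 2)) :
    sinHalf a q y ∈ Icc (0:ℝ) 1 := by
  obtain ⟨s, hs, hfs⟩ := arcsinpq_surjOn ha hq hy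
  exact Function.invFunOn_mem ⟨s, hs, hfs⟩

include ha hq in
lemma arcsinpq_sinHalf (y : ℝ) (hy : y ∈ Icc 0 (pipq a q / 2)) :
    arcsinpq a q (sinHalf a q y) = y := by
  obtain ⟨s, hs, hfs⟩ := arcsinpq_surjOn ha hq hy
  exact Function.invFunOn_eq ⟨s, hs, hfs⟩

include ha hq in
lemma sinHalf_zero : sinHalf a q 0 = 0 := by
  have := sinHalf_arcsinpq ha hq 0 (by simp)
  rwa [arcsinpq_zero] at this

include ha hq in
lemma sinHalf_half : sinHalf a q (pipq a q / 2) = 1 := by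
  have := sinHalf_arcsinpq ha hq 1 (by simp)
  rwa [arcsinpq_one_eq] at this

include ha hq in
lemma sinHalf_mem_Ioo (y : ℝ) (hy : y ∈ Ioo 0 (pipq a q / 2)) :
    sinHalf a q y ∈ Ioo (0:ℝ) 1 := by
  have hyI : y ∈ Icc 0 (pipq a q / 2) := ⟨hy.1.le, hy.2.le⟩
  have hmem := sinHalf_mem ha hq y hyI
  have hFy := arcsinpq_sinHalf ha hq y hyI
  constructor
  · rcases eq_or_lt_of_le hmem.1 with h | h
    · exfalso; rw [← h, arcsinpq_zero] at hFy; exact absurd hFy.symm (ne_of_gt hy.1)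
    · exact h
  · rcases eq_or_lt_of_le hmem.2 with h | h
    · exfalso; rw [h, arcsinpq_one_eq] at hFy
      exact absurd hFy (by intro hc; exact absurd hc.symm (ne_of_lt hy.2))
    · exact h

include ha hq in
lemma sinHalf_continuousOn : ContinuousOn (sinHalf a q) (Icc 0 (pipq a q / 2)) := by
  let e : Icc (0:ℝ) 1 ≃ Icc (0:ℝ) (pipq a q / 2) :=
    { toFun := fun x => ⟨arcsinpq a q x.1, arcsinpq_mem ha hq x.1 x.2⟩
      invFun := fun y => ⟨sinHalf a q y.1, sinHalf_mem ha hq y.1 y.2⟩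
      left_inv := fun x => Subtype.ext (sinHalf_arcsinpq ha hq x.1 x.2)
      right_inv := fun y => Subtype.ext (arcsinpq_sinHalf ha hq y.1 y.2) }
  have hcont : Continuous (⇑e) := by
    apply Continuous.subtype_mk
    exact continuousOn_iff_continuous_restrict.mp (arcsinpq_continuousOn ha hq)
  let homeo := hcont.homeoOfEquivCompactToT2
  rw [continuousOn_iff_continuous_restrict]
  have heq : restrict (Icc 0 (pipq a q / 2)) (sinHalf a q)
      = (fun x : Icc (0:ℝ) 1 => (x : ℝ)) ∘ ⇑homeo.symm := by
    funext y
    show sinHalf a q y.1 = ((homeo.symm y : Icc (0:ℝ) 1) : ℝ)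
    have h2 : arcsinpq a q ((homeo.symm y : Icc (0:ℝ) 1) : ℝ) = y.1 :=
      congrArg Subtype.val (homeo.apply_symm_apply y)
    rw [← h2, sinHalf_arcsinpq ha hq _ (homeo.symm y).2]
  change Continuous (restrict (Icc 0 (pipq a q / 2)) (sinHalf a q))
  rw [heq]
  exact continuous_subtype_val.comp homeo.symm.continuous

include ha hq in
lemma arcsinpq_hasDerivAt (s : ℝ) (hs : s ∈ Ico (0:ℝ) 1) :
    HasDerivAt (arcsinpq a q) ((1 - s ^ q) ^ (-(1 / a))) s := by
  have hcont : ContinuousAt (fun t : ℝ => (1 - t ^ q) ^ (-(1 / a))) s := by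
    have h1 : ContinuousAt (fun t : ℝ => t ^ q) s :=
      continuousAt_id.rpow_const (Or.inr (by linarith))
    exact (continuousAt_const.sub h1).rpow_const (Or.inl (ne_of_gt (base_pos hq s hs)))
  exact intervalIntegral.integral_hasDerivAt_right
    (integrable_sub ha hq 0 s (by simp) ⟨hs.1, hs.2.le⟩)
    ((integrand_measurable (a := a) (q := q)).aestronglyMeasurable.stronglyMeasurableAtFilter)
    hcont



include ha hq in
lemma arcsinpq_ge (s : ℝ) (hs : s ∈ Ico (0:ℝ) 1) : s ≤ arcsinpq a q s := by
  have hone : IntervalIntegrable (fun _ : ℝ => (1:ℝ)) volume 0 s :=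
    intervalIntegrable_const
  have h := intervalIntegral.integral_mono_on hs.1 hone
    (integrable_sub ha hq 0 s (by simp) ⟨hs.1, hs.2.le⟩) (fun t ht => ?_)
  · unfold arcsinpq; simpa using h
  · have htI : t ∈ Ico (0:ℝ) 1 := ⟨ht.1, lt_of_le_of_lt ht.2 hs.2⟩
    have h1 : (0:ℝ) < 1 - t ^ q := base_pos hq t htI
    have h2 : 1 - t ^ q ≤ 1 := by
      have : (0:ℝ) ≤ t ^ q := rpow_nonneg htI.1 q
      linarith
    exact Real.one_le_rpow_of_pos_of_le_one_of_nonpos h1 h2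
      (neg_nonpos.mpr (by positivity))

include ha hq in
lemma arcsinpq_le (s : ℝ) (hs : s ∈ Ico (0:ℝ) 1) :
    arcsinpq a q s ≤ s * (1 - s ^ q) ^ (-(1 / a)) := by
  have hcI : IntervalIntegrable (fun _ : ℝ => (1 - s ^ q) ^ (-(1 / a))) volume 0 s :=
    intervalIntegrable_const
  have h := intervalIntegral.integral_mono_on hs.1
    (integrable_sub ha hq 0 s (by simp) ⟨hs.1, hs.2.le⟩) hcI (fun t ht => ?_)
  · unfold arcsinpq; simpa [mul_comm] using h
  · have htI : t ∈ Ico (0:ℝ) 1 := ⟨ht.1, lt_of_le_of_lt ht.2 hs.2⟩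
    have h1 : t ^ q ≤ s ^ q := rpow_le_rpow ht.1 ht.2 (by linarith)
    exact rpow_le_rpow_of_nonpos (base_pos hq s hs) (by linarith)
      (neg_nonpos.mpr (by positivity))

include ha hq in
lemma arcsinpq_tail (s : ℝ) (hs : s ∈ Icc (0:ℝ) 1) :
    q ^ (-(1 / a)) * ((1 - s) ^ (1 - 1 / a) / (1 - 1 / a)) ≤
      arcsinpq a q 1 - arcsinpq a q s := by
  have ha0 : (0:ℝ) < a := by linarith
  have hβ : 0 < 1 - 1 / a := by
    have : 1 / a < 1 := by rw [div_lt_one ha0]; linarith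
    linarith
  have hr : (-1 : ℝ) < -(1 / a) := by
    have : 1 / a < 1 := by rw [div_lt_one ha0]; linarith
    linarith
  rw [arcsinpq_sub ha hq s 1 hs (by simp)]
  have hg_int : IntervalIntegrable (fun t : ℝ => q ^ (-(1 / a)) * (1 - t) ^ (-(1 / a)))
      volume s 1 := by
    have h1 := (intervalIntegral.intervalIntegrable_rpow' (a := 1 - s) (b := 0) hr).comp_sub_left 1
    simp only [sub_sub_cancel, sub_zero] at h1
    exact h1.const_mul _
  have hcalc : (∫ t in s..1, q ^ (-(1 / a)) * (1 - t) ^ (-(1 / a)))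
      = q ^ (-(1 / a)) * ((1 - s) ^ (1 - 1 / a) / (1 - 1 / a)) := by
    rw [intervalIntegral.integral_const_mul]
    have h2 : (∫ t in s..1, (1 - t) ^ (-(1 / a)))
        = ∫ u in (0:ℝ)..(1 - s), u ^ (-(1 / a)) := by
      have h3 := intervalIntegral.integral_comp_sub_left (a := s) (b := 1)
        (fun u : ℝ => u ^ (-(1 / a))) 1
      simpa using h3
    rw [h2, integral_rpow (Or.inl hr),
      Real.zero_rpow (ne_of_gt (by linarith : (0:ℝ) < -(1 / a) + 1))]
    rw [show -(1 / a) + 1 = 1 - 1 / a by ring]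
    ring
  rw [← hcalc]
  refine intervalIntegral.integral_mono_on hs.2 hg_int
    (integrable_sub ha hq s 1 hs (by simp)) (fun t ht => ?_)
  have ht0 : 0 ≤ t := le_trans hs.1 ht.1
  have hane : -(1 / a) ≠ 0 := by
    have : (0:ℝ) < 1 / a := by positivity
    linarith
  rcases eq_or_lt_of_le ht.2 with h | h
  · rw [h, show (1:ℝ) - 1 = 0 by norm_num, show (1:ℝ) - 1 ^ q = 0 by simp,
      Real.zero_rpow hane]
    simp
  · have htI : t ∈ Ico (0:ℝ) 1 := ⟨ht0, h⟩
    have hb := one_add_mul_self_le_rpow_one_add (show (-1:ℝ) ≤ t - 1 by linarith) hq.le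
    rw [show (1:ℝ) + (t - 1) = t by ring] at hb
    have hBern : 1 - t ^ q ≤ q * (1 - t) := by linarith
    have h1 : (q * (1 - t)) ^ (-(1 / a)) ≤ (1 - t ^ q) ^ (-(1 / a)) :=
      rpow_le_rpow_of_nonpos (base_pos hq t htI) hBern (neg_nonpos.mpr (by positivity))
    calc q ^ (-(1 / a)) * (1 - t) ^ (-(1 / a)) = (q * (1 - t)) ^ (-(1 / a)) :=
          (Real.mul_rpow (by linarith) (by linarith)).symm
      _ ≤ (1 - t ^ q) ^ (-(1 / a)) := h1

/-! ### Normal form and symmetries of `sinpq` -/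

lemma sinpq_eq_Wfun (a q x : ℝ) :
    sinpq a q x
      = Wfun a q (pipq a q) (x - 2 * pipq a q * (⌊(x + pipq a q) / (2 * pipq a q)⌋ : ℝ)) := rfl

include ha hq in
lemma rfun_mem (x : ℝ) :
    x - 2 * pipq a q * (⌊(x + pipq a q) / (2 * pipq a q)⌋ : ℝ)
      ∈ Ico (-(pipq a q)) (pipq a q) := by
  have hT : 0 < pipq a q := pipq_pos ha hq
  set T := pipq a q with hTdef
  have hfr1 := Int.fract_nonneg ((x + T) / (2 * T))
  have hfr2 := Int.fract_lt_one ((x + T) / (2 * T))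
  have key : x - 2 * T * (⌊(x + T) / (2 * T)⌋ : ℝ)
      = 2 * T * Int.fract ((x + T) / (2 * T)) - T := by
    simp only [Int.fract]
    field_simp
    ring
  rw [key]
  constructor
  · nlinarith
  · nlinarith

include ha hq in
lemma rfun_of_mem (x : ℝ) (hx : x ∈ Ico (-(pipq a q)) (pipq a q)) :
    x - 2 * pipq a q * (⌊(x + pipq a q) / (2 * pipq a q)⌋ : ℝ) = x := by
  have hT : 0 < pipq a q := pipq_pos ha hq
  have h0 : ⌊(x + pipq a q) / (2 * pipq a q)⌋ = 0 := by
    rw [Int.floor_eq_zero_iff]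
    constructor
    · apply div_nonneg (by linarith [hx.1]) (by linarith)
    · rw [div_lt_one (by linarith)]
      linarith [hx.2]
  rw [h0]
  simp

include ha hq in
lemma rfun_shift (x : ℝ) (n : ℤ) :
    (x + 2 * pipq a q * n)
        - 2 * pipq a q * (⌊((x + 2 * pipq a q * n) + pipq a q) / (2 * pipq a q)⌋ : ℝ)
      = x - 2 * pipq a q * (⌊(x + pipq a q) / (2 * pipq a q)⌋ : ℝ) := by
  have hT : 0 < pipq a q := pipq_pos ha hq
  have h1 : ((x + 2 * pipq a q * n) + pipq a q) / (2 * pipq a q)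
      = (x + pipq a q) / (2 * pipq a q) + n := by
    field_simp
    ring
  rw [h1, Int.floor_add_intCast]
  push_cast
  ring

include ha hq in
lemma sinpq_shift (x : ℝ) (n : ℤ) : sinpq a q (x + 2 * pipq a q * n) = sinpq a q x := by
  rw [sinpq_eq_Wfun, sinpq_eq_Wfun, rfun_shift ha hq]

include ha hq in
lemma Wfun_zero' : Wfun a q (pipq a q) 0 = 0 := by
  have hT : 0 < pipq a q := pipq_pos ha hq
  unfold Wfun
  rw [if_neg (lt_irrefl 0), if_pos (by linarith)]
  exact sinHalf_zero ha hq

include ha hq in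
lemma Wfun_negT : Wfun a q (pipq a q) (-(pipq a q)) = 0 := by
  have hT : 0 < pipq a q := pipq_pos ha hq
  unfold Wfun
  rw [if_pos (by linarith), if_neg (by rw [neg_neg]; push_neg; linarith)]
  rw [show pipq a q + -(pipq a q) = 0 by ring, sinHalf_zero ha hq]
  simp

include ha hq in
lemma Wfun_odd (y : ℝ) (hy : y ∈ Ioo (-(pipq a q)) (pipq a q)) :
    Wfun a q (pipq a q) (-y) = -(Wfun a q (pipq a q) y) := by
  have hT : 0 < pipq a q := pipq_pos ha hq
  rcases lt_trichotomy y 0 with h | h | h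
  · unfold Wfun
    rw [if_neg (show ¬(-y < 0) by push_neg; linarith), if_pos h, neg_neg]
    congr 1
    split_ifs with hc
    · rfl
    · ring
  · rw [h, neg_zero, Wfun_zero' ha hq]
    simp
  · unfold Wfun
    rw [if_pos (show -y < 0 by linarith), if_neg (show ¬(y < 0) by push_neg; linarith)]
    simp only [neg_neg]
    rw [show pipq a q + -y = pipq a q - y by ring]

include ha hq in
lemma Wfun_reflect_pos (y : ℝ) (hy : y ∈ Ioo (0:ℝ) (pipq a q)) :
    Wfun a q (pipq a q) (pipq a q - y) = Wfun a q (pipq a q) y := by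
  have hT : 0 < pipq a q := pipq_pos ha hq
  unfold Wfun
  rw [if_neg (show ¬(pipq a q - y < 0) by push_neg; linarith [hy.2]),
    if_neg (show ¬(y < 0) by push_neg; linarith [hy.1])]
  congr 1
  split_ifs with h1 h2
  · linarith
  · rfl
  · ring
  · linarith

include ha hq in
lemma Wfun_reflect_neg (y : ℝ) (hy : y ∈ Ioo (-(pipq a q)) (0:ℝ)) :
    Wfun a q (pipq a q) (-(pipq a q) - y) = Wfun a q (pipq a q) y := by
  have hT : 0 < pipq a q := pipq_pos ha hq
  unfold Wfun
  rw [if_pos (show -(pipq a q) - y < 0 by linarith [hy.1]), if_pos hy.2]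
  congr 2
  split_ifs with h1 h2 h3 <;> linarith

include ha hq in
lemma sinpq_decompose (x : ℝ) :
    ∃ y ∈ Ico (-(pipq a q)) (pipq a q), ∃ k : ℤ,
      x = y + 2 * pipq a q * k ∧ sinpq a q x = Wfun a q (pipq a q) y := by
  refine ⟨x - 2 * pipq a q * (⌊(x + pipq a q) / (2 * pipq a q)⌋ : ℝ), rfun_mem ha hq x,
    ⌊(x + pipq a q) / (2 * pipq a q)⌋, by ring, sinpq_eq_Wfun a q x⟩

include ha hq in
lemma sinpq_of_mem (y : ℝ) (hy : y ∈ Ico (-(pipq a q)) (pipq a q)) :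
    sinpq a q y = Wfun a q (pipq a q) y := by
  rw [sinpq_eq_Wfun, rfun_of_mem ha hq y hy]

include ha hq in
lemma sinpq_T_eq : sinpq a q (pipq a q) = 0 := by
  have hT : 0 < pipq a q := pipq_pos ha hq
  have h1 : sinpq a q (-(pipq a q) + 2 * pipq a q * ((1:ℤ):ℝ)) = sinpq a q (-(pipq a q)) :=
    sinpq_shift ha hq _ 1
  have h2 : -(pipq a q) + 2 * pipq a q * ((1:ℤ):ℝ) = pipq a q := by push_cast; ring
  rw [h2] at h1
  rw [h1, sinpq_of_mem ha hq _ ⟨le_refl _, by linarith⟩, Wfun_negT ha hq]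

include ha hq in
lemma sinpq_zero_eq : sinpq a q 0 = 0 := by
  have hT : 0 < pipq a q := pipq_pos ha hq
  rw [sinpq_of_mem ha hq 0 ⟨by linarith, by linarith⟩, Wfun_zero' ha hq]

include ha hq in
lemma sinpq_neg (x : ℝ) : sinpq a q (-x) = -sinpq a q x := by
  have hT : 0 < pipq a q := pipq_pos ha hq
  obtain ⟨y, hy, k, hxk, hW⟩ := sinpq_decompose ha hq x
  have h2 : sinpq a q (-x) = sinpq a q (-y) := by
    rw [hxk, show -(y + 2 * pipq a q * k) = -y + 2 * pipq a q * (-k : ℤ) by push_cast; ring]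
    exact sinpq_shift ha hq _ _
  rcases eq_or_lt_of_le hy.1 with he | hlt
  · -- y = -T
    rw [hW, ← he, Wfun_negT ha hq, h2, ← he, neg_neg, sinpq_T_eq ha hq]
    simp
  · rw [h2, sinpq_of_mem ha hq (-y) ⟨by linarith [hy.2], by linarith⟩,
      Wfun_odd ha hq y ⟨hlt, hy.2⟩, hW]

include ha hq in
lemma sinpq_reflect (x : ℝ) : sinpq a q (pipq a q - x) = sinpq a q x := by
  have hT : 0 < pipq a q := pipq_pos ha hq
  obtain ⟨y, hy, k, hxk, hW⟩ := sinpq_decompose ha hq x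
  have h2 : sinpq a q (pipq a q - x) = sinpq a q (pipq a q - y) := by
    rw [hxk, show pipq a q - (y + 2 * pipq a q * k)
      = (pipq a q - y) + 2 * pipq a q * (-k : ℤ) by push_cast; ring]
    exact sinpq_shift ha hq _ _
  rcases lt_trichotomy y 0 with h | h | h
  · -- y < 0 : T - y ∈ (T, 2T); shift down to (-T, 0)
    have h3 : sinpq a q (pipq a q - y) = sinpq a q (-(pipq a q) - y) := by
      rw [show pipq a q - y = (-(pipq a q) - y) + 2 * pipq a q * (1:ℤ) by push_cast; ring]
      exact sinpq_shift ha hq _ _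
    rcases eq_or_lt_of_le hy.1 with he | hlt
    · have h4 : -(pipq a q) - y = 0 := by rw [← he]; ring
      rw [h2, h3, h4, sinpq_zero_eq ha hq, hW, ← he, Wfun_negT ha hq]
    · rw [h2, h3, sinpq_of_mem ha hq _ ⟨by linarith [hy.2], by linarith⟩,
        Wfun_reflect_neg ha hq y ⟨hlt, h⟩, hW]
  · -- y = 0
    rw [h2, h, sub_zero, sinpq_T_eq ha hq, hW, h, Wfun_zero' ha hq]
  · -- y > 0
    rw [h2, sinpq_of_mem ha hq _ ⟨by linarith [hy.2], by linarith⟩,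
      Wfun_reflect_pos ha hq y ⟨h, hy.2⟩, hW]

include ha hq in
lemma sinpq_antiperiod (x : ℝ) : sinpq a q (x + pipq a q) = -sinpq a q x := by
  have h1 : sinpq a q (x + pipq a q) = sinpq a q (-x) := by
    rw [show x + pipq a q = pipq a q - (-x) by ring]
    exact sinpq_reflect ha hq (-x)
  rw [h1, sinpq_neg ha hq]

include ha hq in
lemma sinpq_eq_sinHalf (y : ℝ) (hy : y ∈ Icc 0 (pipq a q / 2)) :
    sinpq a q y = sinHalf a q y := by
  have hT : 0 < pipq a q := pipq_pos ha hq
  rw [sinpq_of_mem ha hq y ⟨by linarith [hy.1], by linarith [hy.2]⟩]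
  unfold Wfun
  rw [if_neg (by push_neg; linarith [hy.1]), if_pos hy.2]

include ha hq in
lemma sinpq_half_eq : sinpq a q (pipq a q / 2) = 1 := by
  have hT : 0 < pipq a q := pipq_pos ha hq
  rw [sinpq_eq_sinHalf ha hq _ ⟨by linarith, le_refl _⟩, sinHalf_half ha hq]


/-! ### Derivatives of `sinpq` -/

include ha hq in
lemma sinpq_hasDerivAt_interior (y : ℝ) (hy : y ∈ Ioo 0 (pipq a q / 2)) :
    HasDerivAt (sinpq a q) ((1 - (sinHalf a q y) ^ q) ^ (1 / a)) y := by
  have hT : 0 < pipq a q := pipq_pos ha hq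
  have hyI : y ∈ Icc 0 (pipq a q / 2) := ⟨hy.1.le, hy.2.le⟩
  have hs : sinHalf a q y ∈ Ioo (0:ℝ) 1 := sinHalf_mem_Ioo ha hq y hy
  have hbase : 0 < 1 - (sinHalf a q y) ^ q := base_pos hq _ ⟨hs.1.le, hs.2⟩
  have hFd : HasDerivAt (arcsinpq a q) ((1 - (sinHalf a q y) ^ q) ^ (-(1 / a)))
      (sinHalf a q y) := arcsinpq_hasDerivAt ha hq _ ⟨hs.1.le, hs.2⟩
  have hne : (1 - (sinHalf a q y) ^ q) ^ (-(1 / a)) ≠ 0 :=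
    ne_of_gt (rpow_pos_of_pos hbase _)
  have hIoo_nhds : Ioo (0:ℝ) (pipq a q / 2) ∈ 𝓝 y := Ioo_mem_nhds hy.1 hy.2
  have hev : ∀ᶠ z in 𝓝 y, arcsinpq a q (sinpq a q z) = z := by
    filter_upwards [hIoo_nhds] with z hz
    rw [sinpq_eq_sinHalf ha hq z ⟨hz.1.le, hz.2.le⟩,
      arcsinpq_sinHalf ha hq z ⟨hz.1.le, hz.2.le⟩]
  have hca : ContinuousAt (sinpq a q) y := by
    have h1 : ContinuousAt (sinHalf a q) y :=
      ((sinHalf_continuousOn ha hq) y hyI).continuousAt (Icc_mem_nhds hy.1 hy.2)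
    apply h1.congr
    filter_upwards [hIoo_nhds] with z hz
    exact (sinpq_eq_sinHalf ha hq z ⟨hz.1.le, hz.2.le⟩).symm
  have hsy : sinpq a q y = sinHalf a q y := sinpq_eq_sinHalf ha hq y hyI
  have hFd' : HasDerivAt (arcsinpq a q) ((1 - (sinHalf a q y) ^ q) ^ (-(1 / a)))
      (sinpq a q y) := by rw [hsy]; exact hFd
  have hinv := HasDerivAt.of_local_left_inverse hca hFd' hne hev
  rw [show ((1 - (sinHalf a q y) ^ q) ^ (1 / a)) = ((1 - (sinHalf a q y) ^ q) ^ (-(1 / a)))⁻¹ by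
    rw [Real.rpow_neg hbase.le, inv_inv]]
  exact hinv

include ha hq in
lemma slope_bound_zero (h : ℝ) (h0 : 0 < h) (hh : h < pipq a q / 2) :
    (1 - (sinHalf a q h) ^ q) ^ (1 / a) ≤ sinHalf a q h / h ∧ sinHalf a q h / h ≤ 1 := by
  have hmem : h ∈ Icc 0 (pipq a q / 2) := ⟨h0.le, hh.le⟩
  have hs : sinHalf a q h ∈ Ioo (0:ℝ) 1 := sinHalf_mem_Ioo ha hq h ⟨h0, hh⟩
  have hF : arcsinpq a q (sinHalf a q h) = h := arcsinpq_sinHalf ha hq h hmem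
  have hge : sinHalf a q h ≤ h := by
    have := arcsinpq_ge ha hq (sinHalf a q h) ⟨hs.1.le, hs.2⟩; rwa [hF] at this
  have hle : h ≤ sinHalf a q h * (1 - (sinHalf a q h) ^ q) ^ (-(1 / a)) := by
    have := arcsinpq_le ha hq (sinHalf a q h) ⟨hs.1.le, hs.2⟩; rwa [hF] at this
  have hbase : 0 < 1 - (sinHalf a q h) ^ q := base_pos hq _ ⟨hs.1.le, hs.2⟩
  constructor
  · have hid : (1 - (sinHalf a q h) ^ q) ^ (-(1 / a)) * (1 - (sinHalf a q h) ^ q) ^ (1 / a)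
        = 1 := by
      rw [← Real.rpow_add hbase]; norm_num
    rw [le_div_iff₀ h0]
    calc (1 - (sinHalf a q h) ^ q) ^ (1 / a) * h
        ≤ (1 - (sinHalf a q h) ^ q) ^ (1 / a)
            * (sinHalf a q h * (1 - (sinHalf a q h) ^ q) ^ (-(1 / a))) :=
          mul_le_mul_of_nonneg_left hle (rpow_nonneg hbase.le _)
      _ = sinHalf a q h * ((1 - (sinHalf a q h) ^ q) ^ (-(1 / a))
            * (1 - (sinHalf a q h) ^ q) ^ (1 / a)) := by ring
      _ = sinHalf a q h := by rw [hid, mul_one]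
  · rw [div_le_one h0]; exact hge

include ha hq in
lemma sinpq_hasDerivAt_zero : HasDerivAt (sinpq a q) 1 0 := by
  have hT : 0 < pipq a q := pipq_pos ha hq
  rw [hasDerivAt_iff_tendsto_slope]
  have habs_ev : ∀ᶠ h in 𝓝[≠] (0:ℝ), 0 < |h| ∧ |h| < pipq a q / 2 := by
    have h1 : ∀ᶠ h in 𝓝 (0:ℝ), |h| < pipq a q / 2 := by
      have h2 := (continuous_abs.tendsto (0:ℝ)).eventually_lt_const
        (show |(0:ℝ)| < pipq a q / 2 by rw [abs_zero]; linarith)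
      exact h2
    filter_upwards [eventually_nhdsWithin_of_eventually_nhds h1, self_mem_nhdsWithin]
      with h hlt hne
    exact ⟨abs_pos.mpr hne, hlt⟩
  have hbound : ∀ᶠ h in 𝓝[≠] (0:ℝ),
      ‖slope (sinpq a q) 0 h - 1‖ ≤ 1 - (1 - (sinHalf a q |h|) ^ q) ^ (1 / a) := by
    filter_upwards [habs_ev] with h hh
    have hne : h ≠ 0 := by
      intro hc; rw [hc] at hh; simp at hh
    have key := slope_bound_zero ha hq |h| hh.1 hh.2
    have hsl : slope (sinpq a q) 0 h = sinHalf a q |h| / |h| := by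
      rw [slope_def_field, sinpq_zero_eq ha hq]
      rcases lt_or_gt_of_ne hne with hneg | hpos
      · rw [abs_of_neg hneg]
        have hmemneg : -h ∈ Icc 0 (pipq a q / 2) := by
          constructor
          · linarith
          · rw [abs_of_neg hneg] at hh; linarith [hh.2]
        have hval : sinpq a q h = -(sinHalf a q (-h)) := by
          rw [show h = -(-h) by ring, sinpq_neg ha hq, sinpq_eq_sinHalf ha hq (-h) hmemneg]
          ring_nf
        rw [hval]; ring
      · rw [abs_of_pos hpos]
        have hmempos : h ∈ Icc 0 (pipq a q / 2) := by
          constructor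
          · linarith
          · rw [abs_of_pos hpos] at hh; linarith [hh.2]
        rw [sinpq_eq_sinHalf ha hq h hmempos]; ring
    rw [hsl, Real.norm_eq_abs, abs_of_nonpos (by linarith [key.2])]
    linarith [key.1]
  have htend : Tendsto (fun h : ℝ => 1 - (1 - (sinHalf a q |h|) ^ q) ^ (1 / a))
      (𝓝[≠] (0:ℝ)) (𝓝 0) := by
    have hH : Tendsto (fun h : ℝ => sinHalf a q |h|) (𝓝[≠] (0:ℝ)) (𝓝 0) := by
      have hc : ContinuousWithinAt (sinHalf a q) (Icc 0 (pipq a q / 2)) 0 :=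
        (sinHalf_continuousOn ha hq) 0 ⟨le_refl _, by linarith⟩
      have hc' : Tendsto (sinHalf a q) (𝓝[Icc 0 (pipq a q / 2)] 0) (𝓝 0) := by
        have h2 := hc
        rw [ContinuousWithinAt, sinHalf_zero ha hq] at h2
        exact h2
      apply hc'.comp
      rw [tendsto_nhdsWithin_iff]
      constructor
      · exact (continuous_abs.tendsto' 0 0 abs_zero).mono_left nhdsWithin_le_nhds
      · filter_upwards [habs_ev] with h hh; exact ⟨abs_nonneg h, hh.2.le⟩
    have hout : ContinuousAt (fun s : ℝ => 1 - (1 - s ^ q) ^ (1 / a)) 0 := by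
      have h1 : ContinuousAt (fun s : ℝ => s ^ q) 0 :=
        continuousAt_id.rpow_const (Or.inr (by linarith))
      have h2 : (1 : ℝ) - (0:ℝ) ^ q ≠ 0 := by
        rw [Real.zero_rpow (by linarith : q ≠ 0)]; norm_num
      exact continuousAt_const.sub ((continuousAt_const.sub h1).rpow_const (Or.inl h2))
    have hcomp := hout.tendsto.comp hH
    simpa [Function.comp_def, Real.zero_rpow (show q ≠ 0 by linarith)] using hcomp
  have h0 := squeeze_zero_norm' hbound htend
  have h1 := h0.add_const 1
  simpa using h1

include ha hq in
lemma sinpq_hasDerivAt_half : HasDerivAt (sinpq a q) 0 (pipq a q / 2) := by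
  have hT : 0 < pipq a q := pipq_pos ha hq
  have ha0 : (0:ℝ) < a := by linarith
  have hβ : 0 < 1 - 1 / a := by
    have : 1 / a < 1 := by rw [div_lt_one ha0]; linarith
    linarith
  have hKpos : 0 < q ^ (-(1 / a)) / (1 - 1 / a) :=
    div_pos (rpow_pos_of_pos (by linarith) _) hβ
  rw [hasDerivAt_iff_tendsto_slope]
  have habs_ev : ∀ᶠ z in 𝓝[≠] (pipq a q / 2),
      0 < |z - pipq a q / 2| ∧ |z - pipq a q / 2| < pipq a q / 2 := by
    have h1 : ∀ᶠ z in 𝓝 (pipq a q / 2), |z - pipq a q / 2| < pipq a q / 2 := by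
      have hcont : ContinuousAt (fun z : ℝ => |z - pipq a q / 2|) (pipq a q / 2) := by
        fun_prop
      have h2 := hcont.tendsto.eventually_lt_const
        (show |(pipq a q / 2) - pipq a q / 2| < pipq a q / 2 by
          rw [sub_self, abs_zero]; linarith)
      exact h2
    filter_upwards [eventually_nhdsWithin_of_eventually_nhds h1, self_mem_nhdsWithin]
      with z hlt hne
    refine ⟨abs_pos.mpr ?_, hlt⟩
    intro hc
    exact hne (by linarith [sub_eq_zero.mp hc] : z = pipq a q / 2)
  have hval : ∀ z : ℝ, 0 < |z - pipq a q / 2| → |z - pipq a q / 2| < pipq a q / 2 →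
      sinpq a q z = sinHalf a q (pipq a q / 2 - |z - pipq a q / 2|) := by
    intro z h1 h2
    rcases lt_trichotomy z (pipq a q / 2) with hc | hc | hc
    · rw [abs_of_neg (by linarith : z - pipq a q / 2 < 0)] at h2 ⊢
      rw [show pipq a q / 2 - -(z - pipq a q / 2) = z by ring]
      exact sinpq_eq_sinHalf ha hq z ⟨by linarith, by linarith⟩
    · exfalso; rw [hc] at h1; simp at h1
    · rw [abs_of_pos (by linarith : 0 < z - pipq a q / 2)] at h2 ⊢
      rw [show pipq a q / 2 - (z - pipq a q / 2) = pipq a q - z by ring,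
        ← sinpq_reflect ha hq z]
      exact sinpq_eq_sinHalf ha hq (pipq a q - z) ⟨by linarith, by linarith⟩
  have hbound : ∀ᶠ z in 𝓝[≠] (pipq a q / 2),
      ‖slope (sinpq a q) (pipq a q / 2) z‖ ≤
        (q ^ (-(1 / a)) / (1 - 1 / a))⁻¹
          * (1 - sinHalf a q (pipq a q / 2 - |z - pipq a q / 2|)) ^ (1 / a) := by
    filter_upwards [habs_ev] with z hz
    have humem : pipq a q / 2 - |z - pipq a q / 2| ∈ Icc 0 (pipq a q / 2) :=
      ⟨by linarith [hz.2], by linarith [abs_nonneg (z - pipq a q / 2)]⟩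
    have hsmem : sinHalf a q (pipq a q / 2 - |z - pipq a q / 2|) ∈ Icc (0:ℝ) 1 :=
      sinHalf_mem ha hq _ humem
    have hFs : arcsinpq a q (sinHalf a q (pipq a q / 2 - |z - pipq a q / 2|))
        = pipq a q / 2 - |z - pipq a q / 2| := arcsinpq_sinHalf ha hq _ humem
    set s := sinHalf a q (pipq a q / 2 - |z - pipq a q / 2|) with hsdef
    have htail := arcsinpq_tail ha hq s hsmem
    have hk : |z - pipq a q / 2| = arcsinpq a q 1 - arcsinpq a q s := by
      rw [hFs, arcsinpq_one_eq]; ring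
    have hsl : slope (sinpq a q) (pipq a q / 2) z = (1 - s) / (pipq a q / 2 - z) := by
      have hzne : z - pipq a q / 2 ≠ 0 := abs_pos.mp hz.1
      have hzne' : pipq a q / 2 - z ≠ 0 := by intro hc; apply hzne; linarith
      rw [slope_def_field, sinpq_half_eq ha hq, hval z hz.1 hz.2, ← hsdef,
        show (1 - s) = -(s - 1) by ring,
        show pipq a q / 2 - z = -(z - pipq a q / 2) by ring, neg_div_neg_eq]
      
    have hnorm : ‖slope (sinpq a q) (pipq a q / 2) z‖ = (1 - s) / |z - pipq a q / 2| := by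
      rw [hsl, Real.norm_eq_abs, abs_div, abs_of_nonneg (by linarith [hsmem.2]),
        abs_sub_comm]
    rw [hnorm]
    have hks : (q ^ (-(1 / a)) / (1 - 1 / a)) * (1 - s) ^ (1 - 1 / a)
        ≤ |z - pipq a q / 2| := by
      rw [hk]
      calc (q ^ (-(1 / a)) / (1 - 1 / a)) * (1 - s) ^ (1 - 1 / a)
          = q ^ (-(1 / a)) * ((1 - s) ^ (1 - 1 / a) / (1 - 1 / a)) := by ring
        _ ≤ arcsinpq a q 1 - arcsinpq a q s := htail
    have hsum : (1 - s) ^ (1 - 1 / a) * (1 - s) ^ (1 / a) = 1 - s := by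
      rw [← Real.rpow_add' (by linarith [hsmem.2] : (0:ℝ) ≤ 1 - s)
        (by norm_num : (1 - 1 / a) + 1 / a ≠ 0)]
      norm_num
    rw [div_le_iff₀ hz.1]
    have hrnn : (0:ℝ) ≤ (1 - s) ^ (1 / a) := rpow_nonneg (by linarith [hsmem.2]) _
    have hstep : (1 - s) ^ (1 - 1 / a) ≤ (q ^ (-(1 / a)) / (1 - 1 / a))⁻¹
        * |z - pipq a q / 2| := by
      rw [inv_mul_eq_div, le_div_iff₀ hKpos]
      calc (1 - s) ^ (1 - 1 / a) * (q ^ (-(1 / a)) / (1 - 1 / a))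
          = (q ^ (-(1 / a)) / (1 - 1 / a)) * (1 - s) ^ (1 - 1 / a) := by ring
        _ ≤ |z - pipq a q / 2| := hks
    calc 1 - s = (1 - s) ^ (1 - 1 / a) * (1 - s) ^ (1 / a) := hsum.symm
      _ ≤ ((q ^ (-(1 / a)) / (1 - 1 / a))⁻¹ * |z - pipq a q / 2|) * (1 - s) ^ (1 / a) :=
          mul_le_mul_of_nonneg_right hstep hrnn
      _ = (q ^ (-(1 / a)) / (1 - 1 / a))⁻¹ * (1 - s) ^ (1 / a) * |z - pipq a q / 2| := by
          ring
  have htend : Tendsto (fun z : ℝ => (q ^ (-(1 / a)) / (1 - 1 / a))⁻¹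
      * (1 - sinHalf a q (pipq a q / 2 - |z - pipq a q / 2|)) ^ (1 / a))
      (𝓝[≠] (pipq a q / 2)) (𝓝 0) := by
    have hH : Tendsto (fun z : ℝ => sinHalf a q (pipq a q / 2 - |z - pipq a q / 2|))
        (𝓝[≠] (pipq a q / 2)) (𝓝 1) := by
      have hc : ContinuousWithinAt (sinHalf a q) (Icc 0 (pipq a q / 2)) (pipq a q / 2) :=
        (sinHalf_continuousOn ha hq) _ ⟨by linarith, le_refl _⟩
      have hc' : Tendsto (sinHalf a q) (𝓝[Icc 0 (pipq a q / 2)] (pipq a q / 2)) (𝓝 1) := by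
        have h2 := hc
        rw [ContinuousWithinAt, sinHalf_half ha hq] at h2
        exact h2
      apply hc'.comp
      rw [tendsto_nhdsWithin_iff]
      constructor
      · have hcont : Continuous (fun z : ℝ => pipq a q / 2 - |z - pipq a q / 2|) := by
          fun_prop
        have := hcont.tendsto (pipq a q / 2)
        simpa using this.mono_left nhdsWithin_le_nhds
      · filter_upwards [habs_ev] with z hz
        exact ⟨by linarith [hz.2], by linarith [abs_nonneg (z - pipq a q / 2)]⟩
    have hout : ContinuousAt (fun s : ℝ => (q ^ (-(1 / a)) / (1 - 1 / a))⁻¹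
        * (1 - s) ^ (1 / a)) 1 := by
      apply ContinuousAt.mul continuousAt_const
      exact (continuousAt_const.sub continuousAt_id).rpow_const (Or.inr (by positivity))
    have hcomp := hout.tendsto.comp hH
    simpa [Function.comp_def, Real.zero_rpow (show (a:ℝ)⁻¹ ≠ 0 by positivity)] using hcomp
  exact squeeze_zero_norm' hbound htend

/-! ### Values of `cospq` -/

include ha hq in
lemma cospq_interior (y : ℝ) (hy : y ∈ Ioo 0 (pipq a q / 2)) :
    cospq a q y = (1 - (sinHalf a q y) ^ q) ^ (1 / a) :=
  (sinpq_hasDerivAt_interior ha hq y hy).deriv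

include ha hq in
lemma cospq_zero_eq : cospq a q 0 = 1 := (sinpq_hasDerivAt_zero ha hq).deriv

include ha hq in
lemma cospq_half_eq : cospq a q (pipq a q / 2) = 0 := (sinpq_hasDerivAt_half ha hq).deriv

include ha hq in
lemma cospq_reflect (y : ℝ) : cospq a q (pipq a q - y) = -(cospq a q y) := by
  have hfe : sinpq a q = fun z => sinpq a q (pipq a q - z) :=
    funext fun z => (sinpq_reflect ha hq z).symm
  have h1 : deriv (sinpq a q) y = deriv (fun z => sinpq a q (pipq a q - z)) y := by
    conv_lhs => rw [hfe]
  rw [deriv_comp_const_sub] at h1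
  unfold cospq
  linarith [h1]

include ha hq in
lemma cospq_even (y : ℝ) : cospq a q (-y) = cospq a q y := by
  have hfe : sinpq a q = fun z => -(sinpq a q (-z)) :=
    funext fun z => by rw [sinpq_neg ha hq, neg_neg]
  have h1 : deriv (sinpq a q) y = deriv (fun z => -(sinpq a q (-z))) y := by
    conv_lhs => rw [hfe]
  rw [deriv.fun_neg, deriv_comp_neg] at h1
  unfold cospq
  linarith [h1]

include ha hq in
lemma cospq_antiperiod (x : ℝ) : cospq a q (x + pipq a q) = -(cospq a q x) := by
  have hfe : sinpq a q = fun z => -(sinpq a q (z + pipq a q)) :=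
    funext fun z => by rw [sinpq_antiperiod ha hq z, neg_neg]
  have h1 : deriv (sinpq a q) x = deriv (fun z => -(sinpq a q (z + pipq a q))) x := by
    conv_lhs => rw [hfe]
  rw [deriv.fun_neg, deriv_comp_add_const] at h1
  unfold cospq
  linarith [h1]

include ha hq in
lemma cospq_period2 (z : ℝ) : cospq a q (z + 2 * pipq a q) = cospq a q z := by
  rw [show z + 2 * pipq a q = (z + pipq a q) + pipq a q by ring,
    cospq_antiperiod ha hq, cospq_antiperiod ha hq, neg_neg]

include ha hq in
lemma cospq_T_eq : cospq a q (pipq a q) = -1 := by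
  have := cospq_reflect ha hq 0
  rw [sub_zero, cospq_zero_eq ha hq] at this
  exact this

end General

/-! ### The key substitution identities -/

section Specific

variable {p : ℝ} (hp : 1 < p)

include hp in
lemma conj_gt_one : 1 < p / (p - 1) := by
  rw [lt_div_iff₀ (by linarith)]
  linarith

include hp in
lemma conj_exp : -(1 / (p / (p - 1))) = 1 / p - 1 := by
  rw [one_div_div]
  field_simp
  ring

include hp in
lemma s1_mem : (2:ℝ) ^ (-(1 / p)) ∈ Ioo (0:ℝ) 1 := by
  constructor
  · exact Real.rpow_pos_of_pos (by norm_num) _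
  · apply Real.rpow_lt_one_of_one_lt_of_neg one_lt_two
    have : 0 < 1 / p := div_pos one_pos (by linarith)
    linarith

include hp in
lemma s1_pow : ((2:ℝ) ^ (-(1 / p))) ^ p = 1 / 2 := by
  rw [← Real.rpow_mul (by norm_num : (0:ℝ) ≤ 2),
    show -(1 / p) * p = -1 by field_simp, Real.rpow_neg_one]
  norm_num

include hp in
lemma c_pow : ((2:ℝ) ^ (2 / p)) ^ p = 4 := by
  rw [← Real.rpow_mul (by norm_num : (0:ℝ) ≤ 2),
    show 2 / p * p = 2 by field_simp,
    show (2:ℝ) = ((2:ℕ):ℝ) by norm_num, Real.rpow_natCast]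
  norm_num

include hp in
lemma phi_pow (σ : ℝ) (hσ0 : 0 ≤ σ) (hσp : σ ^ p ≤ 1) :
    ((2:ℝ) ^ (2 / p) * (σ * (1 - σ ^ p) ^ (1 / p))) ^ p = 4 * (σ ^ p * (1 - σ ^ p)) := by
  rw [Real.mul_rpow (Real.rpow_nonneg (by norm_num) _)
      (mul_nonneg hσ0 (Real.rpow_nonneg (by linarith) _)),
    Real.mul_rpow hσ0 (Real.rpow_nonneg (by linarith) _),
    ← Real.rpow_mul (by linarith : (0:ℝ) ≤ 1 - σ ^ p),
    show 1 / p * p = 1 by field_simp, Real.rpow_one, c_pow hp]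

include hp in
lemma phi_le_one (σ : ℝ) (hσ0 : 0 ≤ σ) (hσp : σ ^ p ≤ 1) :
    (2:ℝ) ^ (2 / p) * (σ * (1 - σ ^ p) ^ (1 / p)) ≤ 1 := by
  by_contra hc
  push_neg at hc
  have h1 : (1:ℝ) ^ p < ((2:ℝ) ^ (2 / p) * (σ * (1 - σ ^ p) ^ (1 / p))) ^ p :=
    rpow_lt_rpow (by norm_num) hc (by linarith)
  rw [Real.one_rpow, phi_pow hp σ hσ0 hσp] at h1
  nlinarith [sq_nonneg (1 - 2 * σ ^ p)]

include hp in
lemma phi_lt_one (σ : ℝ) (hσ0 : 0 ≤ σ) (hσp : σ ^ p < 1/2) :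
    (2:ℝ) ^ (2 / p) * (σ * (1 - σ ^ p) ^ (1 / p)) < 1 := by
  rcases eq_or_lt_of_le (phi_le_one hp σ hσ0 (by linarith)) with h | h
  · exfalso
    have h1 := phi_pow hp σ hσ0 (by linarith)
    rw [h, Real.one_rpow] at h1
    nlinarith [sq_nonneg (1 - 2 * σ ^ p)]
  · exact h

lemma sq_rpow_half (w : ℝ) (hw : 0 ≤ w) : ((w ^ (2:ℕ) : ℝ)) ^ ((1:ℝ)/2) = w := by
  rw [← Real.rpow_natCast w 2, ← Real.rpow_mul hw]
  norm_num

lemma sq_rpow_neg_half (w : ℝ) (hw : 0 < w) : ((w ^ (2:ℕ) : ℝ)) ^ (-(1:ℝ)/2) = w⁻¹ := by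
  rw [← Real.rpow_natCast w 2, ← Real.rpow_mul hw.le,
    show ((2:ℕ):ℝ) * (-1/2) = -1 by norm_num, Real.rpow_neg_one]

include hp in
lemma psi_deriv (x : ℝ) (hbase : 0 < 1 - x ^ p) :
    HasDerivAt (fun t : ℝ => (1 - t ^ p) ^ (1 / p))
      ((1 / p) * (1 - x ^ p) ^ (1 / p - 1) * -(p * x ^ (p - 1))) x := by
  have hpow : HasDerivAt (fun t : ℝ => t ^ p) (p * x ^ (p - 1)) x :=
    Real.hasDerivAt_rpow_const (Or.inr hp.le)
  have hin : HasDerivAt (fun t : ℝ => 1 - t ^ p) (-(p * x ^ (p - 1))) x :=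
    hpow.const_sub 1
  have hout : HasDerivAt (fun z : ℝ => z ^ (1 / p))
      ((1 / p) * (1 - x ^ p) ^ (1 / p - 1)) (1 - x ^ p) :=
    Real.hasDerivAt_rpow_const (Or.inl (ne_of_gt hbase))
  exact hout.comp x hin

include hp in
lemma key_identity (σ : ℝ) (hσ : σ ∈ Icc 0 ((2:ℝ) ^ (-(1 / p)))) :
    arcsinpq 2 p ((2:ℝ) ^ (2 / p) * (σ * (1 - σ ^ p) ^ (1 / p)))
      = (2:ℝ) ^ (2 / p) * arcsinpq (p / (p - 1)) p σ := by
  have hP : 1 < p / (p - 1) := conj_gt_one hp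
  have h2 : (1:ℝ) < 2 := one_lt_two
  have hs1 := s1_mem hp
  have hs1p := s1_pow hp
  have hp0 : (p:ℝ) ≠ 0 := by linarith
  have key : ∀ y ∈ Icc (0:ℝ) ((2:ℝ) ^ (-(1 / p))),
      arcsinpq 2 p ((2:ℝ) ^ (2 / p) * (y * (1 - y ^ p) ^ (1 / p)))
        = (2:ℝ) ^ (2 / p) * arcsinpq (p / (p - 1)) p y := by
    apply eq_of_has_deriv_right_eq
      (f' := fun σ => (2:ℝ) ^ (2 / p) * (1 - σ ^ p) ^ (-(1 / (p / (p - 1)))))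
    · -- derivative of LHS on Ico
      intro x hx
      have hxp : x ^ p < 1 / 2 := by
        have := rpow_lt_rpow hx.1 hx.2 (by linarith : (0:ℝ) < p)
        rwa [hs1p] at this
      have hbase : 0 < 1 - x ^ p := by linarith
      have hφ0 : (0:ℝ) ≤ (2:ℝ) ^ (2 / p) * (x * (1 - x ^ p) ^ (1 / p)) :=
        mul_nonneg (Real.rpow_nonneg (by norm_num) _)
          (mul_nonneg hx.1 (Real.rpow_nonneg (by linarith) _))
      have hφ1 : (2:ℝ) ^ (2 / p) * (x * (1 - x ^ p) ^ (1 / p)) < 1 :=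
        phi_lt_one hp x hx.1 hxp
      have harc : HasDerivAt (arcsinpq 2 p)
          ((1 - ((2:ℝ) ^ (2 / p) * (x * (1 - x ^ p) ^ (1 / p))) ^ p) ^ (-(1 / 2 : ℝ)))
          ((2:ℝ) ^ (2 / p) * (x * (1 - x ^ p) ^ (1 / p))) :=
        arcsinpq_hasDerivAt h2 hp _ ⟨hφ0, hφ1⟩
      have hcomp := psi_deriv hp x hbase
      have hprod : HasDerivAt (fun t : ℝ => t * (1 - t ^ p) ^ (1 / p))
          (1 * (1 - x ^ p) ^ (1 / p) +
            x * ((1 / p) * (1 - x ^ p) ^ (1 / p - 1) * -(p * x ^ (p - 1)))) x :=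
        (hasDerivAt_id x).mul hcomp
      have hφ : HasDerivAt (fun t : ℝ => (2:ℝ) ^ (2 / p) * (t * (1 - t ^ p) ^ (1 / p)))
          ((2:ℝ) ^ (2 / p) * (1 * (1 - x ^ p) ^ (1 / p) +
            x * ((1 / p) * (1 - x ^ p) ^ (1 / p - 1) * -(p * x ^ (p - 1))))) x :=
        hprod.const_mul _
      have hchain := harc.comp x hφ
      have hxx : x * x ^ (p - 1) = x ^ p := by
        have h1 : x ^ ((1:ℝ) + (p - 1)) = x ^ (1:ℝ) * x ^ (p - 1) :=
          Real.rpow_add' hx.1 (by intro hc; apply hp0; linarith)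
        rw [show (1:ℝ) + (p - 1) = p by ring, Real.rpow_one] at h1
        exact h1.symm
      have hB : (1 - x ^ p) ^ ((1:ℝ) / p)
          = (1 - x ^ p) ^ ((1:ℝ) / p - 1) * (1 - x ^ p) := by
        have h1 := Real.rpow_add hbase (1 / p - 1) 1
        rw [Real.rpow_one, show (1 / p - 1) + 1 = 1/p by ring] at h1
        exact h1
      have hsimp : (1 * (1 - x ^ p) ^ (1 / p) +
            x * ((1 / p) * (1 - x ^ p) ^ (1 / p - 1) * -(p * x ^ (p - 1))))
          = (1 - x ^ p) ^ (1 / p - 1) * (1 - 2 * x ^ p) := by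
        calc 1 * (1 - x ^ p) ^ (1 / p) +
              x * ((1 / p) * (1 - x ^ p) ^ (1 / p - 1) * -(p * x ^ (p - 1)))
            = (1 - x ^ p) ^ (1 / p)
              - ((1 / p) * p) * (x * x ^ (p - 1)) * (1 - x ^ p) ^ (1 / p - 1) := by ring
          _ = (1 - x ^ p) ^ (1 / p - 1) * (1 - 2 * x ^ p) := by
              rw [hxx, one_div_mul_cancel hp0, hB]; ring
      have hA : (1 - ((2:ℝ) ^ (2 / p) * (x * (1 - x ^ p) ^ (1 / p))) ^ p) ^ (-(1 / 2 : ℝ))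
          = (1 - 2 * x ^ p)⁻¹ := by
        rw [phi_pow hp x hx.1 (by linarith),
          show (1:ℝ) - 4 * (x ^ p * (1 - x ^ p)) = (1 - 2 * x ^ p) ^ (2:ℕ) by ring,
          show (-(1 / 2 : ℝ)) = -1/2 by norm_num]
        exact sq_rpow_neg_half _ (by linarith)
      have heval : (1 - ((2:ℝ) ^ (2 / p) * (x * (1 - x ^ p) ^ (1 / p))) ^ p) ^ (-(1 / 2 : ℝ)) *
          ((2:ℝ) ^ (2 / p) * (1 * (1 - x ^ p) ^ (1 / p) +
            x * ((1 / p) * (1 - x ^ p) ^ (1 / p - 1) * -(p * x ^ (p - 1)))))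
          = (2:ℝ) ^ (2 / p) * (1 - x ^ p) ^ (-(1 / (p / (p - 1)))) := by
        rw [hA, hsimp, conj_exp hp]
        have h2xp : (1:ℝ) - 2 * x ^ p ≠ 0 := ne_of_gt (by linarith)
        field_simp
      rw [heval] at hchain
      exact hchain.hasDerivWithinAt
    · intro x hx
      have hx1 : x < 1 := lt_trans hx.2 hs1.2
      exact ((arcsinpq_hasDerivAt hP hp x ⟨hx.1, hx1⟩).const_mul
        ((2:ℝ) ^ (2 / p))).hasDerivWithinAt
    · -- continuity of LHS
      have hφcont : ContinuousOn (fun σ : ℝ => (2:ℝ) ^ (2 / p) * (σ * (1 - σ ^ p) ^ (1 / p)))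
          (Icc 0 ((2:ℝ) ^ (-(1 / p)))) := by
        apply ContinuousOn.mul continuousOn_const
        apply ContinuousOn.mul continuousOn_id
        apply ContinuousOn.rpow_const
        · exact continuousOn_const.sub
            (continuousOn_id.rpow_const (fun x _ => Or.inr (by linarith)))
        · intro x _
          right
          exact le_of_lt (div_pos one_pos (by linarith))
      apply (arcsinpq_continuousOn h2 hp).comp hφcont
      intro x hx
      have hxp1 : x ^ p ≤ 1 :=
        rpow_le_one hx.1 (le_of_lt (lt_of_le_of_lt hx.2 hs1.2)) (by linarith)
      exact ⟨mul_nonneg (Real.rpow_nonneg (by norm_num) _)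
        (mul_nonneg hx.1 (Real.rpow_nonneg (by linarith) _)),
        phi_le_one hp x hx.1 hxp1⟩
    · exact continuousOn_const.mul
        ((arcsinpq_continuousOn hP hp).mono (Icc_subset_Icc le_rfl hs1.2.le))
    · rw [show (2:ℝ) ^ (2 / p) * ((0:ℝ) * ((1:ℝ) - 0 ^ p) ^ (1 / p)) = 0 by ring,
        arcsinpq_zero, arcsinpq_zero, mul_zero]
  exact key σ hσ

include hp in
lemma complement_identity (σ : ℝ) (hσ : σ ∈ Icc ((2:ℝ) ^ (-(1 / p))) 1) :
    arcsinpq (p / (p - 1)) p σ + arcsinpq (p / (p - 1)) p ((1 - σ ^ p) ^ (1 / p))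
      = arcsinpq (p / (p - 1)) p 1 := by
  have hP : 1 < p / (p - 1) := conj_gt_one hp
  have hs1 := s1_mem hp
  have hp0 : (p:ℝ) ≠ 0 := by linarith
  have hconst : ∀ y ∈ Icc ((2:ℝ) ^ (-(1 / p))) 1,
      (fun σ : ℝ => arcsinpq (p / (p - 1)) p σ
        + arcsinpq (p / (p - 1)) p ((1 - σ ^ p) ^ (1 / p))) y
      = (fun σ : ℝ => arcsinpq (p / (p - 1)) p σ
        + arcsinpq (p / (p - 1)) p ((1 - σ ^ p) ^ (1 / p))) ((2:ℝ) ^ (-(1 / p))) := by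
    apply constant_of_has_deriv_right_zero
    · -- continuity
      apply ContinuousOn.add
      · exact (arcsinpq_continuousOn hP hp).mono (Icc_subset_Icc hs1.1.le le_rfl)
      · apply (arcsinpq_continuousOn hP hp).comp
        · apply ContinuousOn.rpow_const
          · exact continuousOn_const.sub
              (continuousOn_id.rpow_const (fun x _ => Or.inr (by linarith)))
          · intro x _; right
            exact le_of_lt (div_pos one_pos (by linarith))
        · intro x hx
          have hx0 : (0:ℝ) ≤ x := le_trans hs1.1.le hx.1
          have hxp : x ^ p ≤ 1 := rpow_le_one hx0 hx.2 (by linarith)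
          constructor
          · exact rpow_nonneg (by linarith) _
          · exact rpow_le_one (by linarith) (by nlinarith [rpow_nonneg hx0 p])
              (le_of_lt (div_pos one_pos (by linarith)))
    · intro x hx
      have hx0 : 0 < x := lt_of_lt_of_le hs1.1 hx.1
      have hx1 : x < 1 := hx.2
      have hxp1 : x ^ p < 1 := rpow_lt_one hx0.le hx1 (by linarith)
      have hxp0 : 0 < x ^ p := rpow_pos_of_pos hx0 p
      have hψ0 : (0:ℝ) < (1 - x ^ p) ^ (1 / p) := rpow_pos_of_pos (by linarith) _
      have hψ1 : (1 - x ^ p) ^ (1 / p) < 1 :=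
        rpow_lt_one (by linarith) (by linarith) (div_pos one_pos (by linarith))
      have hψp : ((1 - x ^ p) ^ ((1:ℝ) / p)) ^ p = 1 - x ^ p := by
        rw [← Real.rpow_mul (by linarith : (0:ℝ) ≤ 1 - x ^ p),
          show (1:ℝ) / p * p = 1 by field_simp, Real.rpow_one]
      have hd1 : HasDerivAt (arcsinpq (p / (p - 1)) p)
          ((1 - x ^ p) ^ (-(1 / (p / (p - 1))))) x :=
        arcsinpq_hasDerivAt hP hp x ⟨hx0.le, hx1⟩
      have hd2 : HasDerivAt (arcsinpq (p / (p - 1)) p)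
          ((1 - ((1 - x ^ p) ^ ((1:ℝ) / p)) ^ p) ^ (-(1 / (p / (p - 1)))))
          ((1 - x ^ p) ^ ((1:ℝ) / p)) :=
        arcsinpq_hasDerivAt hP hp _ ⟨hψ0.le, hψ1⟩
      have hcompψ := psi_deriv hp x (by linarith)
      have hsum := hd1.add (hd2.comp x hcompψ)
      have hval : (1 - x ^ p) ^ (-(1 / (p / (p - 1)))) +
          (1 - ((1 - x ^ p) ^ ((1:ℝ) / p)) ^ p) ^ (-(1 / (p / (p - 1)))) *
            ((1 / p) * (1 - x ^ p) ^ (1 / p - 1) * -(p * x ^ (p - 1))) = 0 := by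
        rw [hψp, show (1:ℝ) - (1 - x ^ p) = x ^ p by ring]
        have e1 : (x ^ p) ^ (-(1 / (p / (p - 1)))) = x ^ (-(p - 1)) := by
          rw [← Real.rpow_mul hx0.le,
            show p * -(1 / (p / (p - 1))) = -(p - 1) by
              rw [one_div_div]; field_simp]
        have e2 : x ^ (-(p - 1)) * x ^ (p - 1) = 1 := by
          rw [← Real.rpow_add hx0]; norm_num
        rw [e1, conj_exp hp]
        have e4 : (1 - x ^ p) ^ ((1:ℝ)/p - 1) + x ^ (-(p - 1)) *
            ((1 / p) * (1 - x ^ p) ^ (1/p - 1) * -(p * x ^ (p - 1)))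
            = (1 - x ^ p) ^ ((1:ℝ)/p - 1) *
              (1 - (1 / p * p) * (x ^ (-(p - 1)) * x ^ (p - 1))) := by ring
        rw [e4, e2, one_div_mul_cancel hp0]
        ring
      rw [hval] at hsum
      exact hsum.hasDerivWithinAt
  have hs1mem : (2:ℝ) ^ (-(1 / p)) ∈ Icc ((2:ℝ) ^ (-(1 / p))) (1:ℝ) :=
    ⟨le_refl _, hs1.2.le⟩
  have h1 := hconst 1 ⟨hs1.2.le, le_refl 1⟩
  have hpsi1 : ((1:ℝ) - 1 ^ p) ^ ((1:ℝ) / p) = 0 := by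
    rw [Real.one_rpow, sub_self,
      Real.zero_rpow (ne_of_gt (div_pos one_pos (by linarith)))]
  simp only [hpsi1] at h1
  rw [arcsinpq_zero, add_zero] at h1
  have h2 := hconst σ hσ
  simp only at h1 h2
  rw [h2, ← h1]

include hp in
lemma psi_s1 : ((1:ℝ) - ((2:ℝ) ^ (-(1 / p))) ^ p) ^ ((1:ℝ) / p) = (2:ℝ) ^ (-(1 / p)) := by
  rw [s1_pow hp, show (1:ℝ) - 1/2 = 1/2 by norm_num,
    show (1/2 : ℝ) = (2:ℝ) ^ (-1 : ℝ) by rw [Real.rpow_neg_one]; norm_num,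
    ← Real.rpow_mul (by norm_num : (0:ℝ) ≤ 2)]
  norm_num

include hp in
lemma quarter_eq : arcsinpq (p / (p - 1)) p ((2:ℝ) ^ (-(1 / p)))
    = pipq (p / (p - 1)) p / 4 := by
  have hs1 := s1_mem hp
  have h := complement_identity hp ((2:ℝ) ^ (-(1 / p))) ⟨le_refl _, hs1.2.le⟩
  rw [psi_s1 hp, arcsinpq_one_eq] at h
  linarith

include hp in
lemma phi_s1_eq_one :
    (2:ℝ) ^ (2 / p) * ((2:ℝ) ^ (-(1 / p)) * (1 - ((2:ℝ) ^ (-(1 / p))) ^ p) ^ (1 / p)) = 1 := by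
  have hs1 := s1_mem hp
  have h1 := phi_pow hp ((2:ℝ) ^ (-(1 / p))) hs1.1.le (by rw [s1_pow hp]; norm_num)
  have h1' : ((2:ℝ) ^ (2 / p) * ((2:ℝ) ^ (-(1 / p))
      * (1 - ((2:ℝ) ^ (-(1 / p))) ^ p) ^ (1 / p))) ^ p = 1 := by
    rw [h1, s1_pow hp]; norm_num
  have hb0 : (0:ℝ) ≤ 1 - ((2:ℝ) ^ (-(1 / p))) ^ p := by rw [s1_pow hp]; norm_num
  have hφ0 : (0:ℝ) ≤ (2:ℝ) ^ (2 / p) * ((2:ℝ) ^ (-(1 / p))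
      * (1 - ((2:ℝ) ^ (-(1 / p))) ^ p) ^ (1 / p)) :=
    mul_nonneg (Real.rpow_nonneg (by norm_num) _)
      (mul_nonneg (Real.rpow_nonneg (by norm_num) _) (Real.rpow_nonneg hb0 _))
  have h3 : (((2:ℝ) ^ (2 / p) * ((2:ℝ) ^ (-(1 / p))
      * (1 - ((2:ℝ) ^ (-(1 / p))) ^ p) ^ (1 / p))) ^ p) ^ ((1:ℝ)/p)
      = (2:ℝ) ^ (2 / p) * ((2:ℝ) ^ (-(1 / p)) * (1 - ((2:ℝ) ^ (-(1 / p))) ^ p) ^ (1 / p)) := by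
    rw [← Real.rpow_mul hφ0, show p * ((1:ℝ)/p) = 1 by field_simp, Real.rpow_one]
  rw [h1', Real.one_rpow] at h3
  exact h3.symm

include hp in
lemma pi_two_eq : pipq 2 p = (2:ℝ) ^ (2 / p) * pipq (p / (p - 1)) p / 2 := by
  have hs1 := s1_mem hp
  have hk := key_identity hp ((2:ℝ) ^ (-(1 / p))) ⟨hs1.1.le, le_refl _⟩
  rw [phi_s1_eq_one hp, quarter_eq hp, arcsinpq_one_eq] at hk
  linarith

end Specific

/-! ### Assembly -/

section Main

variable {p : ℝ}

/-- The statement of the multiple-angle formula at a point. -/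
def MAngle (p y : ℝ) : Prop :=
  sinpq 2 p ((2:ℝ) ^ (2/p) * y)
      = (2:ℝ) ^ (2/p) * sinpq (p/(p-1)) p y * |cospq (p/(p-1)) p y| ^ (p/(p-1) - 2)
          * cospq (p/(p-1)) p y ∧
  cospq 2 p ((2:ℝ) ^ (2/p) * y)
      = |cospq (p/(p-1)) p y| ^ (p/(p-1)) - |sinpq (p/(p-1)) p y| ^ p ∧
  cospq 2 p ((2:ℝ) ^ (2/p) * y) = 1 - 2 * |sinpq (p/(p-1)) p y| ^ p ∧
  cospq 2 p ((2:ℝ) ^ (2/p) * y) = 2 * |cospq (p/(p-1)) p y| ^ (p/(p-1)) - 1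

variable (hp : 1 < p)

include hp in
lemma conj_exp2 : (1/(p/(p-1))) * (p/(p-1) - 1) = 1/p := by
  rw [one_div_div]
  have h1 : p - 1 ≠ 0 := by intro hc; linarith
  have h2 : (p:ℝ) ≠ 0 := by linarith
  field_simp
  ring

include hp in
lemma conj_exp3 : (1/(p/(p-1))) * (p/(p-1)) = 1 := by
  have h1 : p / (p - 1) ≠ 0 := by
    have := conj_gt_one hp; intro hc; rw [hc] at this; linarith
  field_simp
  exact div_self (by intro hc; linarith : p - 1 ≠ 0)

include hp in
lemma main_core (x : ℝ) (hx : x ∈ Ioo 0 (pipq (p/(p-1)) p / 2)) :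
    sinpq 2 p ((2:ℝ)^(2/p) * x)
        = (2:ℝ)^(2/p) * (sinHalf (p/(p-1)) p x * (1 - (sinHalf (p/(p-1)) p x)^p)^(1/p)) ∧
    cospq 2 p ((2:ℝ)^(2/p) * x) = 1 - 2*(sinHalf (p/(p-1)) p x)^p := by
  have hP : 1 < p / (p - 1) := conj_gt_one hp
  have h2 : (1:ℝ) < 2 := one_lt_two
  have hT2 := pi_two_eq hp
  have hq4 := quarter_eq hp
  have hc0 : (0:ℝ) < (2:ℝ)^(2/p) := Real.rpow_pos_of_pos (by norm_num) _
  have hs1 := s1_mem hp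
  set s := sinHalf (p/(p-1)) p x with hsdef
  have hsIoo : s ∈ Ioo (0:ℝ) 1 := sinHalf_mem_Ioo hP hp x hx
  have hFs : arcsinpq (p/(p-1)) p s = x := arcsinpq_sinHalf hP hp x ⟨hx.1.le, hx.2.le⟩
  have hsp1 : s^p < 1 := rpow_lt_one hsIoo.1.le hsIoo.2 (by linarith)
  have hsp0 : 0 < s^p := rpow_pos_of_pos hsIoo.1 p
  have hsIcc : s ∈ Icc (0:ℝ) 1 := ⟨hsIoo.1.le, hsIoo.2.le⟩
  have hs1Icc : (2:ℝ)^(-(1/p)) ∈ Icc (0:ℝ) 1 := ⟨hs1.1.le, hs1.2.le⟩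
  rcases lt_trichotomy x (pipq (p/(p-1)) p / 4) with hlt | heq | hgt
  · -- x < T*/4
    have hss1 : s < (2:ℝ)^(-(1/p)) := by
      by_contra hc; push_neg at hc
      have := (arcsinpq_strictMonoOn hP hp).monotoneOn hs1Icc hsIcc hc
      rw [hq4, hFs] at this; linarith
    have hsps1 : s^p < 1/2 := by
      have := rpow_lt_rpow hsIoo.1.le hss1 (by linarith : (0:ℝ) < p)
      rwa [s1_pow hp] at this
    have hK := key_identity hp s ⟨hsIoo.1.le, hss1.le⟩
    rw [hFs] at hK
    have hcx : (2:ℝ)^(2/p) * x ∈ Ioo 0 (pipq 2 p / 2) := by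
      constructor
      · exact mul_pos hc0 hx.1
      · have h3 : (2:ℝ)^(2/p) * x < (2:ℝ)^(2/p) * (pipq (p/(p-1)) p / 4) :=
          mul_lt_mul_of_pos_left hlt hc0
        rw [hT2]; linarith
    have hφmem : (2:ℝ)^(2/p) * (s * (1 - s^p)^(1/p)) ∈ Icc (0:ℝ) 1 :=
      ⟨mul_nonneg hc0.le (mul_nonneg hsIoo.1.le (Real.rpow_nonneg (by linarith) _)),
        phi_le_one hp s hsIoo.1.le hsp1.le⟩
    have hsin2 : sinpq 2 p ((2:ℝ)^(2/p) * x)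
        = (2:ℝ)^(2/p) * (s * (1 - s^p)^(1/p)) := by
      rw [sinpq_eq_sinHalf h2 hp _ ⟨hcx.1.le, hcx.2.le⟩, ← hK,
        sinHalf_arcsinpq h2 hp _ hφmem]
    refine ⟨hsin2, ?_⟩
    have hsh : sinHalf 2 p ((2:ℝ)^(2/p) * x) = (2:ℝ)^(2/p) * (s * (1 - s^p)^(1/p)) := by
      rw [← sinpq_eq_sinHalf h2 hp _ ⟨hcx.1.le, hcx.2.le⟩]; exact hsin2
    rw [cospq_interior h2 hp _ hcx, hsh, phi_pow hp s hsIoo.1.le hsp1.le,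
      show (1:ℝ) - 4*(s^p*(1-s^p)) = (1-2*s^p)^(2:ℕ) by ring,
      sq_rpow_half _ (by linarith)]
  · -- x = T*/4
    have hseq : s = (2:ℝ)^(-(1/p)) := by
      apply (arcsinpq_strictMonoOn hP hp).injOn hsIcc hs1Icc
      rw [hFs, hq4, heq]
    have hcx : (2:ℝ)^(2/p)*x = pipq 2 p / 2 := by rw [heq, hT2]; ring
    constructor
    · rw [hcx, sinpq_half_eq h2 hp, hseq]
      exact (phi_s1_eq_one hp).symm
    · rw [hcx, cospq_half_eq h2 hp, hseq, s1_pow hp]; norm_num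
  · -- x > T*/4
    have hs1s : (2:ℝ)^(-(1/p)) ≤ s := by
      by_contra hc; push_neg at hc
      have := (arcsinpq_strictMonoOn hP hp) hsIcc hs1Icc hc
      rw [hFs, hq4] at this; linarith
    have hsps1 : 1/2 ≤ s^p := by
      have := rpow_le_rpow hs1.1.le hs1s (by linarith : (0:ℝ) ≤ p)
      rwa [s1_pow hp] at this
    have hσ0 : 0 < (1 - s^p)^(1/p) := rpow_pos_of_pos (by linarith) _
    have hσp : ((1 - s^p)^((1:ℝ)/p))^p = 1 - s^p := by
      rw [← Real.rpow_mul (by linarith : (0:ℝ) ≤ 1 - s^p),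
        show (1:ℝ)/p*p = 1 by field_simp, Real.rpow_one]
    have hσs1 : (1 - s^p)^((1:ℝ)/p) ≤ (2:ℝ)^(-(1/p)) := by
      by_contra hc; push_neg at hc
      have := rpow_lt_rpow hs1.1.le hc (by linarith : (0:ℝ) < p)
      rw [s1_pow hp, hσp] at this; linarith
    have hCZ := complement_identity hp s ⟨hs1s, hsIoo.2.le⟩
    rw [hFs, arcsinpq_one_eq] at hCZ
    have hFσ : arcsinpq (p/(p-1)) p ((1 - s^p)^((1:ℝ)/p))
        = pipq (p/(p-1)) p / 2 - x := by linarith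
    have hK := key_identity hp ((1 - s^p)^((1:ℝ)/p)) ⟨hσ0.le, hσs1⟩
    rw [hFσ] at hK
    have hu : (2:ℝ)^(2/p) * (pipq (p/(p-1)) p / 2 - x)
        = pipq 2 p - (2:ℝ)^(2/p) * x := by rw [hT2]; ring
    have humem : (2:ℝ)^(2/p) * (pipq (p/(p-1)) p/2 - x) ∈ Ioo 0 (pipq 2 p / 2) := by
      constructor
      · exact mul_pos hc0 (by linarith [hx.2])
      · have h3 : (2:ℝ)^(2/p) * (pipq (p/(p-1)) p/2 - x)
            < (2:ℝ)^(2/p) * (pipq (p/(p-1)) p / 4) :=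
          mul_lt_mul_of_pos_left (by linarith) hc0
        rw [hT2]; linarith
    have hσp1 : ((1 - s^p)^((1:ℝ)/p))^p ≤ 1 := by rw [hσp]; linarith
    have hφσmem : (2:ℝ)^(2/p) * ((1 - s^p)^((1:ℝ)/p)
        * (1 - ((1 - s^p)^((1:ℝ)/p))^p)^(1/p)) ∈ Icc (0:ℝ) 1 := by
      constructor
      · apply mul_nonneg hc0.le
        apply mul_nonneg hσ0.le
        apply Real.rpow_nonneg
        nlinarith [hσp]
      · exact phi_le_one hp _ hσ0.le hσp1
    have hsinu : sinpq 2 p ((2:ℝ)^(2/p) * (pipq (p/(p-1)) p/2 - x))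
        = (2:ℝ)^(2/p) * ((1 - s^p)^((1:ℝ)/p)
          * (1 - ((1 - s^p)^((1:ℝ)/p))^p)^(1/p)) := by
      rw [sinpq_eq_sinHalf h2 hp _ ⟨humem.1.le, humem.2.le⟩, ← hK,
        sinHalf_arcsinpq h2 hp _ hφσmem]
    have hss : ((s:ℝ)^p)^((1:ℝ)/p) = s := by
      rw [← Real.rpow_mul hsIoo.1.le, show p*((1:ℝ)/p) = 1 by field_simp, Real.rpow_one]
    have hφσ : (2:ℝ)^(2/p) * ((1 - s^p)^((1:ℝ)/p)
          * (1 - ((1 - s^p)^((1:ℝ)/p))^p)^(1/p))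
        = (2:ℝ)^(2/p) * (s * (1 - s^p)^(1/p)) := by
      rw [hσp, show (1:ℝ) - (1 - s^p) = s^p by ring]
      rw [show ((s:ℝ)^p)^((1:ℝ)/p) = s from hss]
      ring
    constructor
    · have hrefl := sinpq_reflect h2 hp ((2:ℝ)^(2/p)*x)
      rw [← hrefl, ← hu, hsinu, hφσ]
    · have hrefl2 := cospq_reflect h2 hp ((2:ℝ)^(2/p) * (pipq (p/(p-1)) p/2 - x))
      have harg : pipq 2 p - ((2:ℝ)^(2/p) * (pipq (p/(p-1)) p/2 - x))
          = (2:ℝ)^(2/p)*x := by rw [hT2]; ring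
      rw [harg] at hrefl2
      have hshu : sinHalf 2 p ((2:ℝ)^(2/p) * (pipq (p/(p-1)) p/2 - x))
          = (2:ℝ)^(2/p) * ((1 - s^p)^((1:ℝ)/p)
            * (1 - ((1 - s^p)^((1:ℝ)/p))^p)^(1/p)) := by
        rw [← sinpq_eq_sinHalf h2 hp _ ⟨humem.1.le, humem.2.le⟩]; exact hsinu
      rw [hrefl2, cospq_interior h2 hp _ humem, hshu,
        phi_pow hp _ hσ0.le hσp1, hσp,
        show (1:ℝ) - 4*((1 - s^p)*(1 - (1-s^p))) = (1-2*(1 - s^p))^(2:ℕ) by ring,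
        sq_rpow_half _ (by linarith)]
      ring

include hp in
lemma mangle_base (x : ℝ) (hx : x ∈ Icc 0 (pipq (p/(p-1)) p / 2)) : MAngle p x := by
  have hP : 1 < p / (p - 1) := conj_gt_one hp
  have h2 : (1:ℝ) < 2 := one_lt_two
  have hT2 := pi_two_eq hp
  have hPne : p/(p-1) ≠ 0 := by intro hc; rw [hc] at hP; linarith
  have hpne : (p:ℝ) ≠ 0 := by linarith
  rcases eq_or_lt_of_le hx.1 with h0 | h0
  · -- x = 0
    rw [← h0]
    have e1 : sinpq (p/(p-1)) p 0 = 0 := sinpq_zero_eq hP hp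
    have e2 : cospq (p/(p-1)) p 0 = 1 := cospq_zero_eq hP hp
    have e3 : sinpq 2 p ((2:ℝ)^(2/p) * 0) = 0 := by rw [mul_zero]; exact sinpq_zero_eq h2 hp
    have e4 : cospq 2 p ((2:ℝ)^(2/p) * 0) = 1 := by rw [mul_zero]; exact cospq_zero_eq h2 hp
    refine ⟨?_, ?_, ?_, ?_⟩
    · rw [e1, e2, e3]; ring
    · rw [e1, e2, e4, abs_one, Real.one_rpow, abs_zero,
        Real.zero_rpow hpne]; norm_num
    · rw [e1, e4, abs_zero, Real.zero_rpow hpne]; norm_num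
    · rw [e2, e4, abs_one, Real.one_rpow]; norm_num
  rcases eq_or_lt_of_le hx.2 with h1 | h1
  · -- x = T*/2
    rw [h1]
    have e1 : sinpq (p/(p-1)) p (pipq (p/(p-1)) p / 2) = 1 := sinpq_half_eq hP hp
    have e2 : cospq (p/(p-1)) p (pipq (p/(p-1)) p / 2) = 0 := cospq_half_eq hP hp
    have hcx : (2:ℝ)^(2/p) * (pipq (p/(p-1)) p / 2) = pipq 2 p := by rw [hT2]; ring
    have e3 : sinpq 2 p ((2:ℝ)^(2/p) * (pipq (p/(p-1)) p / 2)) = 0 := by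
      rw [hcx]; exact sinpq_T_eq h2 hp
    have e4 : cospq 2 p ((2:ℝ)^(2/p) * (pipq (p/(p-1)) p / 2)) = -1 := by
      rw [hcx]; exact cospq_T_eq h2 hp
    refine ⟨?_, ?_, ?_, ?_⟩
    · rw [e1, e2, e3]; ring
    · rw [e1, e2, e4, abs_one, Real.one_rpow, abs_zero, Real.zero_rpow hPne]; norm_num
    · rw [e1, e4, abs_one, Real.one_rpow]; norm_num
    · rw [e2, e4, abs_zero, Real.zero_rpow hPne]; norm_num
  -- interior
  have hxI : x ∈ Ioo 0 (pipq (p/(p-1)) p / 2) := ⟨h0, h1⟩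
  obtain ⟨hsin2, hcos2⟩ := main_core hp x hxI
  set s := sinHalf (p/(p-1)) p x with hsdef
  have hsIoo : s ∈ Ioo (0:ℝ) 1 := sinHalf_mem_Ioo hP hp x hxI
  have hsp1 : s^p < 1 := rpow_lt_one hsIoo.1.le hsIoo.2 (by linarith)
  have hsin : sinpq (p/(p-1)) p x = s := sinpq_eq_sinHalf hP hp x ⟨hxI.1.le, hxI.2.le⟩
  have hcos : cospq (p/(p-1)) p x = (1 - s^p)^(1/(p/(p-1))) := cospq_interior hP hp x hxI
  have hγ0 : 0 < (1 - s^p)^((1:ℝ)/(p/(p-1))) := rpow_pos_of_pos (by linarith) _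
  have habs : |(1 - s^p)^((1:ℝ)/(p/(p-1)))| = (1 - s^p)^((1:ℝ)/(p/(p-1))) :=
    abs_of_pos hγ0
  have hγP : ((1 - s^p)^((1:ℝ)/(p/(p-1))))^(p/(p-1)) = 1 - s^p := by
    rw [← Real.rpow_mul (by linarith : (0:ℝ) ≤ 1 - s^p), conj_exp3 hp, Real.rpow_one]
  have hγP1 : ((1 - s^p)^((1:ℝ)/(p/(p-1))))^(p/(p-1) - 2)
      * (1 - s^p)^((1:ℝ)/(p/(p-1))) = (1 - s^p)^((1:ℝ)/p) := by
    have hadd := Real.rpow_add hγ0 (p/(p-1) - 2) 1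
    rw [Real.rpow_one] at hadd
    rw [← hadd, show p/(p-1) - 2 + 1 = p/(p-1) - 1 by ring,
      ← Real.rpow_mul (by linarith : (0:ℝ) ≤ 1 - s^p)]
    rw [show (1:ℝ)/(p/(p-1)) * (p/(p-1) - 1) = (1:ℝ)/p from conj_exp2 hp]
  have hsabs : |s| = s := abs_of_pos hsIoo.1
  refine ⟨?_, ?_, ?_, ?_⟩
  · rw [hsin, hcos, habs, hsin2]
    calc (2:ℝ)^(2/p) * (s * (1 - s^p)^(1/p))
        = (2:ℝ)^(2/p) * s * (((1 - s^p)^((1:ℝ)/(p/(p-1))))^(p/(p-1) - 2)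
            * (1 - s^p)^((1:ℝ)/(p/(p-1)))) := by rw [hγP1]; ring
      _ = (2:ℝ)^(2/p) * s * ((1 - s^p)^((1:ℝ)/(p/(p-1))))^(p/(p-1) - 2)
            * (1 - s^p)^((1:ℝ)/(p/(p-1))) := by ring
  · rw [hsin, hcos, habs, hsabs, hcos2, hγP]; ring
  · rw [hsin, hsabs, hcos2]
  · rw [hcos, habs, hcos2, hγP]
    ring

include hp in
lemma mangle_neg (x : ℝ) (h : MAngle p x) : MAngle p (-x) := by
  have hP : 1 < p / (p - 1) := conj_gt_one hp
  have h2 : (1:ℝ) < 2 := one_lt_two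
  obtain ⟨h1, hc1, hc2, hc3⟩ := h
  have e1 : sinpq (p/(p-1)) p (-x) = -(sinpq (p/(p-1)) p x) := sinpq_neg hP hp x
  have e2 : cospq (p/(p-1)) p (-x) = cospq (p/(p-1)) p x := cospq_even hP hp x
  have e3 : sinpq 2 p ((2:ℝ)^(2/p) * (-x)) = -(sinpq 2 p ((2:ℝ)^(2/p) * x)) := by
    rw [show (2:ℝ)^(2/p) * (-x) = -((2:ℝ)^(2/p) * x) by ring, sinpq_neg h2 hp]
  have e4 : cospq 2 p ((2:ℝ)^(2/p) * (-x)) = cospq 2 p ((2:ℝ)^(2/p) * x) := by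
    rw [show (2:ℝ)^(2/p) * (-x) = -((2:ℝ)^(2/p) * x) by ring, cospq_even h2 hp]
  refine ⟨?_, ?_, ?_, ?_⟩
  · rw [e3, e1, e2, h1]; ring
  · rw [e4, e1, e2, abs_neg]; exact hc1
  · rw [e4, e1, abs_neg]; exact hc2
  · rw [e4, e2]; exact hc3

include hp in
lemma mangle_shift_up (x : ℝ) (h : MAngle p x) : MAngle p (x + pipq (p/(p-1)) p) := by
  have hP : 1 < p / (p - 1) := conj_gt_one hp
  have h2 : (1:ℝ) < 2 := one_lt_two
  have hT2 := pi_two_eq hp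
  obtain ⟨h1, hc1, hc2, hc3⟩ := h
  have e1 : sinpq (p/(p-1)) p (x + pipq (p/(p-1)) p) = -(sinpq (p/(p-1)) p x) :=
    sinpq_antiperiod hP hp x
  have e2 : cospq (p/(p-1)) p (x + pipq (p/(p-1)) p) = -(cospq (p/(p-1)) p x) :=
    cospq_antiperiod hP hp x
  have harg : (2:ℝ)^(2/p) * (x + pipq (p/(p-1)) p)
      = ((2:ℝ)^(2/p) * x) + 2 * pipq 2 p := by rw [hT2]; ring
  have e3 : sinpq 2 p ((2:ℝ)^(2/p) * (x + pipq (p/(p-1)) p))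
      = sinpq 2 p ((2:ℝ)^(2/p) * x) := by
    rw [harg]
    have := sinpq_shift h2 hp ((2:ℝ)^(2/p) * x) 1
    rw [show ((2:ℝ)^(2/p) * x) + 2 * pipq 2 p * ((1:ℤ):ℝ)
        = ((2:ℝ)^(2/p) * x) + 2 * pipq 2 p by push_cast; ring] at this
    exact this
  have e4 : cospq 2 p ((2:ℝ)^(2/p) * (x + pipq (p/(p-1)) p))
      = cospq 2 p ((2:ℝ)^(2/p) * x) := by
    rw [harg, cospq_period2 h2 hp]
  refine ⟨?_, ?_, ?_, ?_⟩
  · rw [e3, e1, e2, h1, abs_neg]; ring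
  · rw [e4, e1, e2, abs_neg, abs_neg]; exact hc1
  · rw [e4, e1, abs_neg]; exact hc2
  · rw [e4, e2, abs_neg]; exact hc3

include hp in
lemma mangle_shift_down (x : ℝ) (h : MAngle p x) : MAngle p (x - pipq (p/(p-1)) p) := by
  have hP : 1 < p / (p - 1) := conj_gt_one hp
  have h2 : (1:ℝ) < 2 := one_lt_two
  have hT2 := pi_two_eq hp
  obtain ⟨h1, hc1, hc2, hc3⟩ := h
  have e1 : sinpq (p/(p-1)) p (x - pipq (p/(p-1)) p) = -(sinpq (p/(p-1)) p x) := by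
    have := sinpq_antiperiod hP hp (x - pipq (p/(p-1)) p)
    rw [sub_add_cancel] at this
    linarith
  have e2 : cospq (p/(p-1)) p (x - pipq (p/(p-1)) p) = -(cospq (p/(p-1)) p x) := by
    have := cospq_antiperiod hP hp (x - pipq (p/(p-1)) p)
    rw [sub_add_cancel] at this
    linarith
  have harg : (2:ℝ)^(2/p) * (x - pipq (p/(p-1)) p)
      = ((2:ℝ)^(2/p) * x) + 2 * pipq 2 p * ((-1:ℤ):ℝ) := by
    rw [hT2]; push_cast; ring
  have e3 : sinpq 2 p ((2:ℝ)^(2/p) * (x - pipq (p/(p-1)) p))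
      = sinpq 2 p ((2:ℝ)^(2/p) * x) := by
    rw [harg]; exact sinpq_shift h2 hp _ (-1)
  have e4 : cospq 2 p ((2:ℝ)^(2/p) * (x - pipq (p/(p-1)) p))
      = cospq 2 p ((2:ℝ)^(2/p) * x) := by
    have harg2 : (2:ℝ)^(2/p) * (x - pipq (p/(p-1)) p) + 2 * pipq 2 p
        = (2:ℝ)^(2/p) * x := by rw [hT2]; ring
    have := cospq_period2 h2 hp ((2:ℝ)^(2/p) * (x - pipq (p/(p-1)) p))
    rw [harg2] at this
    exact this.symm
  refine ⟨?_, ?_, ?_, ?_⟩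
  · rw [e3, e1, e2, h1, abs_neg]; ring
  · rw [e4, e1, e2, abs_neg, abs_neg]; exact hc1
  · rw [e4, e1, abs_neg]; exact hc2
  · rw [e4, e2, abs_neg]; exact hc3

include hp in
lemma mangle_all (x : ℝ) : MAngle p x := by
  have hP : 1 < p / (p - 1) := conj_gt_one hp
  have hT : 0 < pipq (p/(p-1)) p := pipq_pos hP hp
  have hstep : ∀ (n : ℤ) (y : ℝ), MAngle p y → MAngle p (y + n * pipq (p/(p-1)) p) := by
    intro n
    induction n using Int.induction_on with
    | zero => intro y h; simpa using h
    | succ k ih =>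
        intro y h
        have harg : y + (((k:ℤ) + 1 : ℤ) : ℝ) * pipq (p/(p-1)) p
            = (y + (k:ℝ) * pipq (p/(p-1)) p) + pipq (p/(p-1)) p := by push_cast; ring
        rw [harg]
        exact mangle_shift_up hp _ (ih y h)
    | pred k ih =>
        intro y h
        have harg : y + ((-(k:ℤ) - 1 : ℤ) : ℝ) * pipq (p/(p-1)) p
            = (y + ((-(k:ℤ) : ℤ) : ℝ) * pipq (p/(p-1)) p) - pipq (p/(p-1)) p := by
          push_cast; ring
        rw [harg]
        exact mangle_shift_down hp _ (ih y h)
  set n := ⌊x / pipq (p/(p-1)) p + 1/2⌋ with hn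
  have hfl1 : (n:ℝ) ≤ x / pipq (p/(p-1)) p + 1/2 := Int.floor_le _
  have hfl2 : x / pipq (p/(p-1)) p + 1/2 < (n:ℝ) + 1 := Int.lt_floor_add_one _
  have hy1 : -(pipq (p/(p-1)) p / 2) ≤ x - n * pipq (p/(p-1)) p := by
    have h3 : ((n:ℝ) - 1/2) * pipq (p/(p-1)) p ≤ x := by
      rw [← le_div_iff₀ hT]; linarith
    linarith
  have hy2 : x - n * pipq (p/(p-1)) p < pipq (p/(p-1)) p / 2 := by
    have h3 : x < ((n:ℝ) + 1/2) * pipq (p/(p-1)) p := by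
      rw [← div_lt_iff₀ hT]; linarith
    linarith
  have hybase : MAngle p (x - n * pipq (p/(p-1)) p) := by
    rcases le_or_gt 0 (x - n * pipq (p/(p-1)) p) with h0 | h0
    · exact mangle_base hp _ ⟨h0, hy2.le⟩
    · have hmem : -(x - n * pipq (p/(p-1)) p) ∈ Icc 0 (pipq (p/(p-1)) p / 2) :=
        ⟨by linarith, by linarith⟩
      have := mangle_neg hp _ (mangle_base hp _ hmem)
      rwa [neg_neg] at this
  have := hstep n _ hybase
  rwa [show x - n * pipq (p/(p-1)) p + n * pipq (p/(p-1)) p = x by ring] at this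

end Main

/-- Multiple-angle formulas on all of `ℝ`:
`sin_{2,p}(2^{2/p}x) = 2^{2/p} sin_{p*,p}(x)|cos_{p*,p}(x)|^{p*-2} cos_{p*,p}(x)` and
`cos_{2,p}(2^{2/p}x) = |cos_{p*,p}(x)|^{p*} - |sin_{p*,p}(x)|^p = 1 - 2|sin_{p*,p}(x)|^p
 = 2|cos_{p*,p}(x)|^{p*} - 1`, where `p* = p/(p-1)`. -/
theorem multiple_angle_real (p : ℝ) (hp : 1 < p) :
    ∀ x : ℝ,
      sinpq 2 p ((2:ℝ) ^ (2/p) * x)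
          = (2:ℝ) ^ (2/p) * sinpq (p/(p-1)) p x * |cospq (p/(p-1)) p x| ^ (p/(p-1) - 2)
              * cospq (p/(p-1)) p x ∧
      cospq 2 p ((2:ℝ) ^ (2/p) * x)
          = |cospq (p/(p-1)) p x| ^ (p/(p-1)) - |sinpq (p/(p-1)) p x| ^ p ∧
      cospq 2 p ((2:ℝ) ^ (2/p) * x) = 1 - 2 * |sinpq (p/(p-1)) p x| ^ p ∧
      cospq 2 p ((2:ℝ) ^ (2/p) * x) = 2 * |cospq (p/(p-1)) p x| ^ (p/(p-1)) - 1 := by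
  intro x
  obtain ⟨h1, h2, h3, h4⟩ := mangle_all hp x
  exact ⟨h1, h2, h3, h4⟩
end

section
/- Let p ∈ (1,∞) and let n be an integer with 2 ≤ n < p+1. Then ∏_{k=1}^{n−1} π_{p/(p−k), p} = n^{1−n/p} · ∏_{k=1}^{n−1} π_{n/(n−k), p}; equivalently, in terms of the Beta function, ∏_{k=1}^{n−1} B(k/p, 1/p) = n^{1−n/p} · ∏_{k=1}^{n−1} B(k/n, 1/p). -/
open Real Set MeasureTheory Filter Topology

/-- The real Beta function `B(x,y) = Γ(x)Γ(y)/Γ(x+y)`. -/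
noncomputable def realBeta (x y : ℝ) : ℝ := Real.Gamma x * Real.Gamma y / Real.Gamma (x + y)

lemma realBeta_eq_integral {u v : ℝ} (hu : 0 < u) (hv : 0 < v) :
    realBeta u v = ∫ x in (0:ℝ)..1, x ^ (u-1) * (1-x) ^ (v-1) := by
  have hbeta : Complex.betaIntegral u v
      = ((∫ x in (0:ℝ)..1, x ^ (u-1) * (1-x) ^ (v-1) : ℝ) : ℂ) := by
    rw [Complex.betaIntegral, ← intervalIntegral.integral_ofReal]
    apply intervalIntegral.integral_congr
    intro x hx
    rw [uIcc_of_le (by norm_num : (0:ℝ) ≤ 1)] at hx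
    have hx0 : (0:ℝ) ≤ x := hx.1
    have hx1 : (0:ℝ) ≤ 1 - x := by linarith [hx.2]
    push_cast
    rw [Complex.ofReal_cpow hx0, Complex.ofReal_cpow hx1]
    push_cast
    ring
  have h := Complex.Gamma_mul_Gamma_eq_betaIntegral
    (s := (u:ℂ)) (t := (v:ℂ)) (by simpa using hu) (by simpa using hv)
  rw [hbeta, ← Complex.ofReal_add, Complex.Gamma_ofReal, Complex.Gamma_ofReal,
    Complex.Gamma_ofReal, ← Complex.ofReal_mul, ← Complex.ofReal_mul] at h
  have h' := Complex.ofReal_injective h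
  have hG : Real.Gamma (u + v) ≠ 0 := (Real.Gamma_pos_of_pos (by linarith)).ne'
  rw [realBeta, h']
  field_simp

lemma integral_one_sub_rpow {q a : ℝ} (hq : 1 < q) (ha : 0 < a) :
    ∫ t in (0:ℝ)..1, (1 - t ^ q) ^ (a - 1) = (1/q) * realBeta (1/q) a := by
  have hq0 : (0:ℝ) < q := by linarith
  set g : ℝ → ℝ := (Ioo (0:ℝ) 1).indicator (fun u => u ^ (1/q - 1) * (1-u) ^ (a-1) / q) with hg
  have key := MeasureTheory.integral_comp_rpow_Ioi g hq0.ne'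
  -- LHS of key equals our integral
  have hL : ∫ x in Ioi (0:ℝ), (|q| * x ^ (q - 1)) • g (x ^ q)
      = ∫ t in (0:ℝ)..1, (1 - t ^ q) ^ (a - 1) := by
    rw [intervalIntegral.integral_of_le (by norm_num : (0:ℝ) ≤ 1),
      MeasureTheory.integral_Ioc_eq_integral_Ioo]
    have : ∫ x in Ioi (0:ℝ), (|q| * x ^ (q - 1)) • g (x ^ q)
        = ∫ x in Ioi (0:ℝ), (Ioo (0:ℝ) 1).indicator (fun t => (1 - t ^ q) ^ (a-1)) x := by
      apply MeasureTheory.setIntegral_congr_fun measurableSet_Ioi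
      intro x hx
      have hx0 : (0:ℝ) < x := hx
      by_cases hmem : x ∈ Ioo (0:ℝ) 1
      · have hxq : x ^ q ∈ Ioo (0:ℝ) 1 := by
          constructor
          · exact Real.rpow_pos_of_pos hx0 q
          · exact Real.rpow_lt_one hx0.le hmem.2 hq0
        rw [hg]
        simp only [Set.indicator_of_mem hxq, Set.indicator_of_mem hmem, smul_eq_mul]
        rw [abs_of_pos hq0, ← Real.rpow_mul hx0.le]
        have h1 : q * (1/q - 1) = 1 - q := by field_simp
        rw [h1, show q * x^(q-1) * (x^(1-q) * (1-x^q)^(a-1)/q)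
            = (x^(q-1) * x^(1-q)) * (1-x^q)^(a-1) * (q/q) from by ring,
          ← Real.rpow_add hx0, div_self hq0.ne']
        norm_num
      · have hxq : x ^ q ∉ Ioo (0:ℝ) 1 := by
          intro hc
          apply hmem
          refine ⟨hx0, ?_⟩
          by_contra hge
          push_neg at hge
          exact absurd (Real.one_le_rpow hge hq0.le) (not_le.2 hc.2)
        rw [hg]
        simp [Set.indicator_of_notMem hxq, Set.indicator_of_notMem hmem]
    rw [this, MeasureTheory.setIntegral_indicator measurableSet_Ioo,
      Set.Ioi_inter_Ioo, max_eq_right le_rfl]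
  have hR : ∫ y in Ioi (0:ℝ), g y = (1/q) * realBeta (1/q) a := by
    rw [hg, MeasureTheory.setIntegral_indicator measurableSet_Ioo,
      Set.Ioi_inter_Ioo, max_eq_right le_rfl,
      realBeta_eq_integral (by positivity) ha,
      intervalIntegral.integral_of_le (by norm_num : (0:ℝ) ≤ 1),
      MeasureTheory.integral_Ioc_eq_integral_Ioo]
    rw [← MeasureTheory.integral_const_mul]
    apply MeasureTheory.setIntegral_congr_fun measurableSet_Ioo
    intro x _
    field_simp
  rw [← hL, key, hR]

lemma prod_range_mul' (f : ℕ → ℝ) (a b : ℕ) :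
    ∏ i ∈ Finset.range (a*b), f i
      = ∏ j ∈ Finset.range b, ∏ k ∈ Finset.range a, f (a*j + k) := by
  induction b with
  | zero => simp
  | succ b ih => rw [Nat.mul_succ, Finset.prod_range_add, ih, Finset.prod_range_succ]

lemma prod_poch (n m : ℕ) (hn : 0 < n) (z : ℝ) :
    ∏ i ∈ Finset.range (n*(m+1)), ((n:ℝ)*z + i)
      = (n:ℝ)^(n*(m+1)) * ∏ k ∈ Finset.range n, ∏ j ∈ Finset.range (m+1), (z + (k:ℝ)/n + j) := by
  have hn' : ((n:ℝ)) ≠ 0 := Nat.cast_ne_zero.2 hn.ne'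
  rw [prod_range_mul']
  have h1 : ∀ j ∈ Finset.range (m+1), ∏ k ∈ Finset.range n, ((n:ℝ)*z + (n*j+k : ℕ))
      = (n:ℝ)^n * ∏ k ∈ Finset.range n, (z + (k:ℝ)/n + j) := by
    intro j _
    rw [show ((n:ℝ))^n = ∏ _k ∈ Finset.range n, (n:ℝ) by
      rw [Finset.prod_const, Finset.card_range], ← Finset.prod_mul_distrib]
    apply Finset.prod_congr rfl
    intro k _
    push_cast
    field_simp
    ring
  rw [Finset.prod_congr rfl h1, Finset.prod_mul_distrib, Finset.prod_const,
    Finset.card_range, ← pow_mul, Finset.prod_comm, mul_comm n (m+1)]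

lemma gammaSeq_prod_eq (n m : ℕ) (hn : 0 < n) (hm : 0 < m) {z : ℝ} (hz : 0 < z) :
    ∏ k ∈ Finset.range n, Real.GammaSeq (z + (k:ℝ)/n) m
    = (((m:ℝ)^z)^n * (∏ k ∈ Finset.range n, (m:ℝ)^((k:ℝ)/n)) * (Nat.factorial m : ℝ)^n
        * (n:ℝ)^(n*(m+1)))
      / ((∏ j ∈ Finset.range (n*m+1), ((n:ℝ)*z + j))
          * ∏ k ∈ Finset.range (n-1), ((n:ℝ)*z + (n*m:ℕ) + k + 1)) := by
  have hm0 : (0:ℝ) < m := by exact_mod_cast hm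
  have hn0 : (0:ℝ) < n := by exact_mod_cast hn
  have hsplit : ∏ i ∈ Finset.range (n*(m+1)), ((n:ℝ)*z + i)
      = (∏ j ∈ Finset.range (n*m+1), ((n:ℝ)*z + j))
        * ∏ k ∈ Finset.range (n-1), ((n:ℝ)*z + (n*m:ℕ) + k + 1) := by
    have he : n*(m+1) = (n*m+1) + (n-1) := by
      have h : n*(m+1) = n*m + n := by ring
      omega
    rw [he, Finset.prod_range_add]
    congr 1
    apply Finset.prod_congr rfl
    intro k _
    push_cast
    ring
  have hμ : ∏ k ∈ Finset.range n, (m:ℝ)^(z + (k:ℝ)/n)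
      = ((m:ℝ)^z)^n * ∏ k ∈ Finset.range n, (m:ℝ)^((k:ℝ)/n) := by
    rw [show ((m:ℝ)^z)^n = ∏ _k ∈ Finset.range n, (m:ℝ)^z by
      rw [Finset.prod_const, Finset.card_range], ← Finset.prod_mul_distrib]
    exact Finset.prod_congr rfl fun k _ => Real.rpow_add hm0 _ _
  have hpos1 : (0:ℝ) < ∏ j ∈ Finset.range (n*m+1), ((n:ℝ)*z + j) :=
    Finset.prod_pos fun j _ => by
      have h1 : 0 < (n:ℝ)*z := mul_pos hn0 hz
      have h2 : (0:ℝ) ≤ j := Nat.cast_nonneg j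
      linarith
  have hpos2 : (0:ℝ) < ∏ k ∈ Finset.range (n-1), ((n:ℝ)*z + (n*m:ℕ) + k + 1) :=
    Finset.prod_pos fun k _ => by
      have h1 : 0 < (n:ℝ)*z := mul_pos hn0 hz
      have h2 : (0:ℝ) ≤ k := Nat.cast_nonneg k
      have h3 : (0:ℝ) ≤ ((n*m : ℕ):ℝ) := Nat.cast_nonneg _
      linarith
  have hpos3 : (0:ℝ) < ∏ k ∈ Finset.range n, ∏ j ∈ Finset.range (m+1), (z + (k:ℝ)/n + j) := by
    apply Finset.prod_pos
    intro k _
    apply Finset.prod_pos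
    intro j _
    have h2 : (0:ℝ) ≤ (k:ℝ)/n := by positivity
    have h3 : (0:ℝ) ≤ j := Nat.cast_nonneg j
    linarith
  simp only [Real.GammaSeq]
  rw [Finset.prod_div_distrib, Finset.prod_mul_distrib, Finset.prod_const, Finset.card_range, hμ]
  rw [← hsplit, prod_poch n m hn z]
  rw [div_eq_div_iff (by positivity) (by positivity)]
  ring

lemma gammaSeq_nm_eq (n m : ℕ) (hn : 0 < n) (hm : 0 < m) (z : ℝ) :
    Real.GammaSeq ((n:ℝ)*z) (n*m)
      = ((n:ℝ)^((n:ℝ)*z) * ((m:ℝ)^z)^n * (Nat.factorial (n*m) : ℝ))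
        / ∏ j ∈ Finset.range (n*m+1), ((n:ℝ)*z + j) := by
  have hm0 : (0:ℝ) < m := by exact_mod_cast hm
  have hn0 : (0:ℝ) < n := by exact_mod_cast hn
  rw [Real.GammaSeq]
  congr 2
  push_cast
  rw [Real.mul_rpow hn0.le hm0.le]
  congr 1
  rw [mul_comm (n:ℝ) z, Real.rpow_mul hm0.le, Real.rpow_natCast]

lemma claimA (n m : ℕ) (hn : 0 < n) (hm : 0 < m) {z w : ℝ} (hz : 0 < z) (hw : 0 < w) :
    (n:ℝ)^((n:ℝ)*z) * (∏ k ∈ Finset.range n, Real.GammaSeq (z + (k:ℝ)/n) m)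
      * Real.GammaSeq ((n:ℝ)*w) (n*m)
      * ∏ k ∈ Finset.range (n-1),
          (((n:ℝ)*z + (n*m:ℕ) + k + 1)/((n:ℝ)*w + (n*m:ℕ) + k + 1))
  = (n:ℝ)^((n:ℝ)*w) * (∏ k ∈ Finset.range n, Real.GammaSeq (w + (k:ℝ)/n) m)
      * Real.GammaSeq ((n:ℝ)*z) (n*m) := by
  have hm0 : (0:ℝ) < m := by exact_mod_cast hm
  have hn0 : (0:ℝ) < n := by exact_mod_cast hn
  have hpos : ∀ u : ℝ, 0 < u → (0:ℝ) < ∏ j ∈ Finset.range (n*m+1), ((n:ℝ)*u + j) := by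
    intro u hu
    apply Finset.prod_pos
    intro j _
    have h1 : 0 < (n:ℝ)*u := mul_pos hn0 hu
    have h2 : (0:ℝ) ≤ j := Nat.cast_nonneg j
    linarith
  have hpos2 : ∀ u : ℝ, 0 < u →
      (0:ℝ) < ∏ k ∈ Finset.range (n-1), ((n:ℝ)*u + (n*m:ℕ) + k + 1) := by
    intro u hu
    apply Finset.prod_pos
    intro k _
    have h1 : 0 < (n:ℝ)*u := mul_pos hn0 hu
    have h2 : (0:ℝ) ≤ k := Nat.cast_nonneg k
    have h3 : (0:ℝ) ≤ ((n*m : ℕ):ℝ) := Nat.cast_nonneg _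
    linarith
  rw [Finset.prod_div_distrib, gammaSeq_prod_eq n m hn hm hz, gammaSeq_prod_eq n m hn hm hw,
    gammaSeq_nm_eq n m hn hm z, gammaSeq_nm_eq n m hn hm w]
  have e1 := (hpos z hz).ne'
  have e2 := (hpos w hw).ne'
  have e3 := (hpos2 z hz).ne'
  have e4 := (hpos2 w hw).ne'
  field_simp


lemma gauss_ratio (n : ℕ) (hn : 0 < n) {z w : ℝ} (hz : 0 < z) (hw : 0 < w) :
    (n:ℝ)^((n:ℝ)*z) * (∏ k ∈ Finset.range n, Real.Gamma (z + (k:ℝ)/n)) * Real.Gamma ((n:ℝ)*w)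
  = (n:ℝ)^((n:ℝ)*w) * (∏ k ∈ Finset.range n, Real.Gamma (w + (k:ℝ)/n))
      * Real.Gamma ((n:ℝ)*z) := by
  have hn0 : (0:ℝ) < n := by exact_mod_cast hn
  have hnm : Tendsto (fun m : ℕ => n*m) atTop atTop :=
    Filter.tendsto_atTop_mono (fun m => Nat.le_mul_of_pos_left m hn) tendsto_id
  have hA : ∀ u : ℝ, Tendsto (fun m => ∏ k ∈ Finset.range n, Real.GammaSeq (u + (k:ℝ)/n) m)
      atTop (𝓝 (∏ k ∈ Finset.range n, Real.Gamma (u + (k:ℝ)/n))) := fun u =>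
    tendsto_finset_prod _ (fun k _ => Real.GammaSeq_tendsto_Gamma _)
  have hB : ∀ u : ℝ, Tendsto (fun m => Real.GammaSeq ((n:ℝ)*u) (n*m)) atTop
      (𝓝 (Real.Gamma ((n:ℝ)*u))) := fun u => (Real.GammaSeq_tendsto_Gamma _).comp hnm
  have hT : Tendsto (fun m : ℕ => ∏ k ∈ Finset.range (n-1),
      (((n:ℝ)*z + (n*m:ℕ) + k + 1)/((n:ℝ)*w + (n*m:ℕ) + k + 1))) atTop (𝓝 1) := by
    have h1 : (1:ℝ) = ∏ _k ∈ Finset.range (n-1), (1:ℝ) := by simp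
    rw [h1]
    apply tendsto_finset_prod
    intro k _
    have hzp : 0 < (n:ℝ)*z := mul_pos hn0 hz
    have hwp : 0 < (n:ℝ)*w := mul_pos hn0 hw
    have hden : Tendsto (fun m : ℕ => (n:ℝ)*w + (n*m:ℕ) + k + 1) atTop atTop := by
      apply Filter.tendsto_atTop_mono (f := fun m : ℕ => ((n*m:ℕ):ℝ))
      · intro m
        have h2 : (0:ℝ) ≤ k := Nat.cast_nonneg k
        linarith
      · exact tendsto_natCast_atTop_atTop.comp hnm
    have h0 : Tendsto (fun m : ℕ => ((n:ℝ)*z - (n:ℝ)*w) / ((n:ℝ)*w + (n*m:ℕ) + k + 1))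
        atTop (𝓝 0) := Tendsto.div_atTop tendsto_const_nhds hden
    have h2 := h0.add (tendsto_const_nhds (x := (1:ℝ)))
    rw [zero_add] at h2
    apply h2.congr
    intro m
    have hd : (0:ℝ) < (n:ℝ)*w + (n*m:ℕ) + k + 1 := by
      have h2 : (0:ℝ) ≤ k := Nat.cast_nonneg k
      have h3 : (0:ℝ) ≤ ((n*m : ℕ):ℝ) := Nat.cast_nonneg _
      linarith
    simp only [Finset.prod_const_one]
    field_simp
    ring
  have lim1 : Tendsto (fun m : ℕ =>
      (n:ℝ)^((n:ℝ)*z) * (∏ k ∈ Finset.range n, Real.GammaSeq (z + (k:ℝ)/n) m)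
        * Real.GammaSeq ((n:ℝ)*w) (n*m)
        * ∏ k ∈ Finset.range (n-1),
            (((n:ℝ)*z + (n*m:ℕ) + k + 1)/((n:ℝ)*w + (n*m:ℕ) + k + 1)))
      atTop (𝓝 ((n:ℝ)^((n:ℝ)*z) * (∏ k ∈ Finset.range n, Real.Gamma (z + (k:ℝ)/n))
        * Real.Gamma ((n:ℝ)*w) * 1)) :=
    (((tendsto_const_nhds.mul (hA z)).mul (hB w)).mul hT)
  have lim2 : Tendsto (fun m : ℕ =>
      (n:ℝ)^((n:ℝ)*w) * (∏ k ∈ Finset.range n, Real.GammaSeq (w + (k:ℝ)/n) m)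
        * Real.GammaSeq ((n:ℝ)*z) (n*m))
      atTop (𝓝 ((n:ℝ)^((n:ℝ)*w) * (∏ k ∈ Finset.range n, Real.Gamma (w + (k:ℝ)/n))
        * Real.Gamma ((n:ℝ)*z))) :=
    (tendsto_const_nhds.mul (hA w)).mul (hB z)
  have heq : ∀ᶠ m : ℕ in atTop, (fun m : ℕ =>
      (n:ℝ)^((n:ℝ)*z) * (∏ k ∈ Finset.range n, Real.GammaSeq (z + (k:ℝ)/n) m)
        * Real.GammaSeq ((n:ℝ)*w) (n*m)
        * ∏ k ∈ Finset.range (n-1),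
            (((n:ℝ)*z + (n*m:ℕ) + k + 1)/((n:ℝ)*w + (n*m:ℕ) + k + 1))) m
      = (fun m : ℕ =>
      (n:ℝ)^((n:ℝ)*w) * (∏ k ∈ Finset.range n, Real.GammaSeq (w + (k:ℝ)/n) m)
        * Real.GammaSeq ((n:ℝ)*z) (n*m)) m := by
    filter_upwards [eventually_ge_atTop 1] with m hm
    exact claimA n m hn hm hz hw
  have := tendsto_nhds_unique (lim1.congr' heq) lim2
  rw [mul_one] at this
  exact this

lemma prod_Icc_one (f : ℕ → ℝ) (m : ℕ) :
    ∏ k ∈ Finset.Icc 1 m, f k = ∏ k ∈ Finset.range m, f (k+1) := by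
  induction m with
  | zero => simp
  | succ m ih => rw [Finset.prod_Icc_succ_top (by omega), ih, Finset.prod_range_succ]

lemma gauss_cor (n : ℕ) (hn : 2 ≤ n) {c : ℝ} (hc : 0 < c) :
    ∏ k ∈ Finset.range n, Real.Gamma (c + (k:ℝ)/n)
      = (n:ℝ)^(1 - (n:ℝ)*c) * Real.Gamma ((n:ℝ)*c)
        * ∏ k ∈ Finset.Icc 1 (n-1), Real.Gamma ((k:ℝ)/n) := by
  have hn1 : 0 < n := by omega
  have hn0 : (0:ℝ) < n := by exact_mod_cast hn1
  have h := gauss_ratio n hn1 hc (one_div_pos.2 hn0)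
  rw [mul_one_div_cancel hn0.ne', Real.Gamma_one, mul_one, Real.rpow_one] at h
  have h2 : ∏ k ∈ Finset.range n, Real.Gamma (1/(n:ℝ) + (k:ℝ)/n)
      = ∏ k ∈ Finset.Icc 1 (n-1), Real.Gamma ((k:ℝ)/n) := by
    have e : ∀ k ∈ Finset.range n, Real.Gamma (1/(n:ℝ) + (k:ℝ)/n)
        = Real.Gamma (((k:ℝ)+1)/n) := by
      intro k _
      congr 1
      rw [← add_div, add_comm]
    have hrs := Finset.prod_range_succ (fun k : ℕ => Real.Gamma (((k:ℝ)+1)/n)) (n-1)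
    rw [show n-1+1 = n from by omega] at hrs
    have hlast : ((((n-1):ℕ):ℝ)+1)/n = 1 := by
      have hc1 : (((n-1):ℕ):ℝ) = (n:ℝ) - 1 := by
        push_cast [Nat.cast_sub (by omega : 1 ≤ n)]
        ring
      rw [hc1]
      field_simp
      ring
    rw [Finset.prod_congr rfl e, hrs, hlast, Real.Gamma_one, mul_one, prod_Icc_one]
    apply Finset.prod_congr rfl
    intro k _
    congr 1
    push_cast
    ring
  rw [h2] at h
  have hpow : ((n:ℝ))^((n:ℝ)*c) ≠ 0 := (Real.rpow_pos_of_pos hn0 _).ne'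
  rw [Real.rpow_sub hn0, Real.rpow_one]
  field_simp at h ⊢
  linarith [h]

lemma telescope (c : ℝ) (hc : 0 < c) (m : ℕ) :
    ∏ k ∈ Finset.Icc 1 m, realBeta ((k:ℝ)*c) c
      = Real.Gamma c ^ (m+1) / Real.Gamma (((m:ℝ)+1)*c) := by
  induction m with
  | zero =>
    simp [one_mul, pow_one, div_self (Real.Gamma_pos_of_pos hc).ne']
  | succ m ih =>
    rw [Finset.prod_Icc_succ_top (by omega : 1 ≤ m+1), ih, realBeta]
    have hG1 : Real.Gamma (((m:ℝ)+1)*c) ≠ 0 :=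
      (Real.Gamma_pos_of_pos (by positivity)).ne'
    have he : ((m+1:ℕ):ℝ)*c + c = (((m+1:ℕ):ℝ)+1)*c := by push_cast; ring
    have hG2 : Real.Gamma ((((m+1:ℕ):ℝ)+1)*c) ≠ 0 :=
      (Real.Gamma_pos_of_pos (by positivity)).ne'
    rw [he]
    push_cast
    rw [show ((m:ℝ)+1+1)*c = ((m:ℝ)+2)*c by ring]
    rw [show Real.Gamma c ^ (m+1+1) = Real.Gamma c ^ (m+1) * Real.Gamma c by ring]
    field_simp


lemma realBeta_symm (x y : ℝ) : realBeta x y = realBeta y x := by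
  rw [realBeta, realBeta, add_comm, mul_comm]

lemma pipq_eq_beta {q a : ℝ} (hq : 1 < q) (ha : 0 < a) (ha1 : a < 1) :
    pipq (1/(1-a)) q = 2/q * realBeta a (1/q) := by
  rw [pipq, arcsinpq, show -(1/(1/(1-a))) = a - 1 by rw [one_div_one_div]; ring,
    integral_one_sub_rpow hq ha, realBeta_symm]
  ring

/-- For `2 ≤ n < p+1`:
`∏_{k=1}^{n-1} π_{p/(p-k),p} = n^{1-n/p} ∏_{k=1}^{n-1} π_{n/(n-k),p}`, equivalently
`∏_{k=1}^{n-1} B(k/p,1/p) = n^{1-n/p} ∏_{k=1}^{n-1} B(k/n,1/p)`. -/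
theorem pi_product_formula (p : ℝ) (hp : 1 < p) (n : ℕ) (hn : 2 ≤ n) (hnp : (n : ℝ) < p + 1) :
    (∏ k ∈ Finset.Icc 1 (n-1), pipq (p/(p-(k:ℝ))) p)
      = (n : ℝ) ^ (1 - (n:ℝ)/p) * ∏ k ∈ Finset.Icc 1 (n-1), pipq ((n:ℝ)/((n:ℝ)-(k:ℝ))) p ∧
    (∏ k ∈ Finset.Icc 1 (n-1), realBeta ((k:ℝ)/p) (1/p))
      = (n : ℝ) ^ (1 - (n:ℝ)/p) * ∏ k ∈ Finset.Icc 1 (n-1), realBeta ((k:ℝ)/(n:ℝ)) (1/p) := by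
  obtain ⟨m, rfl⟩ : ∃ m, n = m + 1 := ⟨n-1, by omega⟩
  simp only [Nat.add_sub_cancel]
  have hm1 : 1 ≤ m := by omega
  have hn0 : (0:ℝ) < ((m+1:ℕ):ℝ) := by positivity
  have hp0 : (0:ℝ) < p := by linarith
  have hip : (0:ℝ) < 1/p := by positivity
  have hΓp := Real.Gamma_pos_of_pos hip
  have hΓnp := Real.Gamma_pos_of_pos (show (0:ℝ) < ((m+1:ℕ):ℝ)/p by positivity)
  have hkbound : ∀ k ∈ Finset.Icc 1 m, (1:ℝ) ≤ (k:ℝ) ∧ (k:ℝ) ≤ ((m+1:ℕ):ℝ) - 1 := by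
    intro k hk
    rw [Finset.mem_Icc] at hk
    have h1 : (k:ℝ) ≤ (m:ℝ) := by exact_mod_cast hk.2
    have h2 : (1:ℝ) ≤ (k:ℝ) := by exact_mod_cast hk.1
    refine ⟨h2, ?_⟩
    push_cast
    linarith
  -- LHS of the Beta identity, via telescoping
  have hL : ∏ k ∈ Finset.Icc 1 m, realBeta ((k:ℝ)/p) (1/p)
      = Real.Gamma (1/p) ^ (m+1) / Real.Gamma (((m+1:ℕ):ℝ)/p) := by
    have ht := telescope (1/p) hip m
    have e : ∀ k ∈ Finset.Icc 1 m,
        realBeta ((k:ℝ)/p) (1/p) = realBeta ((k:ℝ)*(1/p)) (1/p) := fun k _ => by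
      rw [mul_one_div]
    rw [Finset.prod_congr rfl e, ht, mul_one_div]
    congr 2
    push_cast
    ring
  have hcor := gauss_cor (m+1) (by omega) hip
  simp only [Nat.add_sub_cancel] at hcor
  have hsplit0 : ∏ k ∈ Finset.range (m+1), Real.Gamma (1/p + (k:ℝ)/((m+1:ℕ):ℝ))
      = Real.Gamma (1/p)
        * ∏ k ∈ Finset.Icc 1 m, Real.Gamma ((k:ℝ)/((m+1:ℕ):ℝ) + 1/p) := by
    rw [Finset.prod_range_succ' (fun k : ℕ => Real.Gamma (1/p + (k:ℝ)/((m+1:ℕ):ℝ))) m]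
    simp only [Nat.cast_zero, zero_div, add_zero]
    rw [mul_comm, prod_Icc_one]
    congr 1
    apply Finset.prod_congr rfl
    intro k _
    congr 1
    push_cast
    ring
  set P := ∏ k ∈ Finset.Icc 1 m, Real.Gamma ((k:ℝ)/((m+1:ℕ):ℝ)) with hPdef
  set Q := ∏ k ∈ Finset.Icc 1 m, Real.Gamma ((k:ℝ)/((m+1:ℕ):ℝ) + 1/p) with hQdef
  have hPpos : 0 < P := Finset.prod_pos fun k hk => by
    have h1 := (hkbound k hk).1
    exact Real.Gamma_pos_of_pos (div_pos (by linarith) hn0)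
  have hQpos : 0 < Q := Finset.prod_pos fun k hk => by
    have h1 := (hkbound k hk).1
    have h3 : 0 < (k:ℝ)/((m+1:ℕ):ℝ) := div_pos (by linarith) hn0
    exact Real.Gamma_pos_of_pos (by linarith)
  have key : Real.Gamma (1/p) * Q
      = ((m+1:ℕ):ℝ)^(1-((m+1:ℕ):ℝ)/p) * Real.Gamma (((m+1:ℕ):ℝ)/p) * P := by
    rw [← hsplit0, hcor, mul_one_div]
  have hcpos : (0:ℝ) < ((m+1:ℕ):ℝ)^(1-((m+1:ℕ):ℝ)/p) := Real.rpow_pos_of_pos hn0 _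
  have hbeta : (∏ k ∈ Finset.Icc 1 m, realBeta ((k:ℝ)/p) (1/p))
      = ((m+1:ℕ):ℝ) ^ (1 - ((m+1:ℕ):ℝ)/p)
        * ∏ k ∈ Finset.Icc 1 m, realBeta ((k:ℝ)/((m+1:ℕ):ℝ)) (1/p) := by
    have hR : ∏ k ∈ Finset.Icc 1 m, realBeta ((k:ℝ)/((m+1:ℕ):ℝ)) (1/p)
        = P * Real.Gamma (1/p) ^ m / Q := by
      simp only [realBeta]
      rw [Finset.prod_div_distrib, Finset.prod_mul_distrib, Finset.prod_const,
        Nat.card_Icc]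
      simp only [Nat.add_sub_cancel]
      rfl
    rw [hL, hR, mul_div_assoc', div_eq_div_iff hΓnp.ne' hQpos.ne']
    linear_combination (Real.Gamma (1/p))^m * key
  refine ⟨?_, hbeta⟩
  -- the pipq identity
  have e1 : ∀ k ∈ Finset.Icc 1 m, pipq (p/(p-(k:ℝ))) p
      = 2/p * realBeta ((k:ℝ)/p) (1/p) := by
    intro k hk
    obtain ⟨hk1, hk2⟩ := hkbound k hk
    have hkp : (k:ℝ) < p := by linarith
    have ha : (0:ℝ) < (k:ℝ)/p := by positivity
    have ha1 : (k:ℝ)/p < 1 := (div_lt_one hp0).2 hkp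
    have hrw : p/(p-(k:ℝ)) = 1/(1-(k:ℝ)/p) := by
      rw [show 1 - (k:ℝ)/p = (p-(k:ℝ))/p from by field_simp, one_div_div]
    rw [hrw, pipq_eq_beta hp ha ha1]
  have e2 : ∀ k ∈ Finset.Icc 1 m, pipq (((m+1:ℕ):ℝ)/(((m+1:ℕ):ℝ)-(k:ℝ))) p
      = 2/p * realBeta ((k:ℝ)/((m+1:ℕ):ℝ)) (1/p) := by
    intro k hk
    obtain ⟨hk1, hk2⟩ := hkbound k hk
    have ha : (0:ℝ) < (k:ℝ)/((m+1:ℕ):ℝ) := div_pos (by linarith) hn0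
    have ha1 : (k:ℝ)/((m+1:ℕ):ℝ) < 1 := (div_lt_one hn0).2 (by linarith)
    have hrw : ((m+1:ℕ):ℝ)/(((m+1:ℕ):ℝ)-(k:ℝ)) = 1/(1-(k:ℝ)/((m+1:ℕ):ℝ)) := by
      rw [show 1 - (k:ℝ)/((m+1:ℕ):ℝ) = (((m+1:ℕ):ℝ)-(k:ℝ))/((m+1:ℕ):ℝ) from by
        field_simp, one_div_div]
    rw [hrw, pipq_eq_beta hp ha ha1]
  rw [Finset.prod_congr rfl e1, Finset.prod_congr rfl e2,
    Finset.prod_mul_distrib, Finset.prod_mul_distrib, Finset.prod_const, hbeta]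
  ring
end

section
/- For every p ∈ (1,∞), setting p* = p/(p−1), and for every y ∈ [0, 2^{−1/p}], one has the substitution identity ∫₀^y (1−t^p)^{−1/p*} dt = 2^{−2/p} · ∫₀^{y·(4(1−y^p))^{1/p}} (1−s^p)^{−1/2} ds; that is, sin_{p*,p}^{−1}(y) = 2^{−2/p}·sin_{2,p}^{−1}( y·(4(1−y^p))^{1/p} ). -/
open Real Set MeasureTheory Filter

lemma measAux (p r : ℝ) : Measurable fun t : ℝ => (1 - t ^ p) ^ r := by
  fun_prop

lemma contAtAux {p : ℝ} (hp0 : 0 < p) (r : ℝ) {t : ℝ} (ht : (1:ℝ) - t ^ p ≠ 0) :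
    ContinuousAt (fun t : ℝ => (1 - t ^ p) ^ r) t := by
  have h1 : ContinuousAt (fun t : ℝ => 1 - t ^ p) t :=
    continuousAt_const.sub (Real.continuousAt_rpow_const t p (Or.inr hp0.le))
  exact h1.rpow_const (Or.inl ht)

lemma f2_integrable {p : ℝ} (hp : 1 < p) :
    IntervalIntegrable (fun s : ℝ => (1 - s ^ p) ^ (-(1/2) : ℝ)) volume 0 1 := by
  have hg : IntervalIntegrable (fun s : ℝ => (1 - s) ^ (-(1/2) : ℝ)) volume 0 1 := by
    have h := (intervalIntegral.intervalIntegrable_rpow' (a := 0) (b := 1) (r := -(1/2))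
      (by norm_num)).comp_sub_left 1
    simpa using h.symm
  refine hg.mono_fun ((measAux p _).aestronglyMeasurable) ?_
  have h1 : MeasurableSet (Set.uIoc (0:ℝ) 1) := measurableSet_uIoc
  filter_upwards [MeasureTheory.ae_restrict_mem h1] with s hs
  have hs' : s ∈ Ioc (0:ℝ) 1 := by simpa [Set.uIoc_of_le] using hs
  have hsp : s ^ p ≤ s := by
    simpa using Real.rpow_le_rpow_of_exponent_ge hs'.1 hs'.2 hp.le
  have h0 : (0:ℝ) ≤ 1 - s ^ p := by
    have : s ≤ 1 := hs'.2
    nlinarith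
  have h0' : (0:ℝ) ≤ 1 - s := by linarith [hs'.2]
  rw [Real.norm_eq_abs, Real.norm_eq_abs, abs_of_nonneg (Real.rpow_nonneg h0 _),
    abs_of_nonneg (Real.rpow_nonneg h0' _)]
  rcases eq_or_lt_of_le h0' with h|h
  · have hs1 : s = 1 := by linarith
    subst hs1
    simp [Real.one_rpow, Real.zero_rpow]
  · exact Real.rpow_le_rpow_of_nonpos h (by linarith) (by norm_num)

lemma gpow {p : ℝ} (hp0 : 0 < p) {x : ℝ} (hx0 : 0 ≤ x) (hx1 : x ^ p ≤ 1) :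
    (x * (4 * (1 - x ^ p)) ^ (1/p)) ^ p = 4 * x ^ p * (1 - x ^ p) := by
  have h4 : (0:ℝ) ≤ 4 * (1 - x ^ p) := by nlinarith
  rw [Real.mul_rpow hx0 (Real.rpow_nonneg h4 _), ← Real.rpow_mul h4,
    one_div_mul_cancel hp0.ne', Real.rpow_one]
  ring

lemma algebra_key {p : ℝ} (hp : 1 < p) {x : ℝ} (hx0 : 0 ≤ x) (ha : x ^ p < 1/2) :
    (2:ℝ) ^ (-(2/p)) * ((1 - (x * (4 * (1 - x ^ p)) ^ (1/p)) ^ p) ^ (-(1/2) : ℝ) *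
      (1 * (4 * (1 - x ^ p)) ^ (1/p) +
        x * ((4 * -(p * x ^ (p - 1))) * (1/p) * (4 * (1 - x ^ p)) ^ (1/p - 1))))
      = (1 - x ^ p) ^ (1/p - 1) := by
  have hp0 : (0:ℝ) < p := lt_trans one_pos hp
  have ha0 : (0:ℝ) ≤ x ^ p := Real.rpow_nonneg hx0 _
  have h12 : (0:ℝ) < 1 - 2 * x ^ p := by linarith
  have hb : (0:ℝ) < 4 * (1 - x ^ p) := by nlinarith
  rw [gpow hp0 hx0 (by linarith)]
  have h5 : (1:ℝ) - 4 * x ^ p * (1 - x ^ p) = (1 - 2 * x ^ p) ^ 2 := by ring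
  rw [h5]
  have h6 : ((1 - 2 * x ^ p) ^ 2 : ℝ) ^ (-(1/2) : ℝ) = (1 - 2 * x ^ p)⁻¹ := by
    rw [← Real.rpow_natCast (1 - 2 * x ^ p) 2, ← Real.rpow_mul h12.le]
    norm_num [Real.rpow_neg_one]
  rw [h6]
  have hxx : x * x ^ (p - 1) = x ^ p := by
    rcases eq_or_lt_of_le hx0 with h | h
    · rw [← h, Real.zero_rpow hp0.ne']
      simp
    · nth_rewrite 1 [← Real.rpow_one x]
      rw [← Real.rpow_add h]
      ring_nf
  have hbb : (4 * (1 - x ^ p)) ^ (1/p) = (4 * (1 - x ^ p)) * (4 * (1 - x ^ p)) ^ (1/p - 1) := by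
    nth_rewrite 1 [show (1:ℝ)/p = 1 + (1/p - 1) by ring]
    rw [Real.rpow_add hb, Real.rpow_one]
  have hE : 1 * (4 * (1 - x ^ p)) ^ (1/p) +
        x * ((4 * -(p * x ^ (p - 1))) * (1/p) * (4 * (1 - x ^ p)) ^ (1/p - 1))
      = (4 * (1 - 2 * x ^ p)) * (4 * (1 - x ^ p)) ^ (1/p - 1) := by
    have h1 : x * ((4 * -(p * x ^ (p - 1))) * (1/p) * (4 * (1 - x ^ p)) ^ (1/p - 1))
        = (x * x ^ (p - 1)) * (-4) * (p * (1/p)) * (4 * (1 - x ^ p)) ^ (1/p - 1) := by ring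
    rw [h1, hxx, mul_one_div_cancel hp0.ne', hbb]
    ring
  rw [hE]
  have hB : (4 * (1 - x ^ p)) ^ (1/p - 1) = (4:ℝ) ^ (1/p - 1) * (1 - x ^ p) ^ (1/p - 1) :=
    Real.mul_rpow (by norm_num) (by linarith)
  rw [hB]
  have h44 : (4:ℝ) * (4:ℝ) ^ (1/p - 1) = (4:ℝ) ^ (1/p) := by
    nth_rewrite 1 [← Real.rpow_one 4]
    rw [← Real.rpow_add (by norm_num : (0:ℝ) < 4)]
    ring_nf
  have h24 : (2:ℝ) ^ (-(2/p)) * (4:ℝ) ^ (1/p) = 1 := by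
    have h4 : (4:ℝ) = (2:ℝ) ^ (2:ℝ) := by
      rw [show (2:ℝ) ^ (2:ℝ) = (2:ℝ) ^ (2:ℕ) from Real.rpow_natCast 2 2]; norm_num
    rw [h4, ← Real.rpow_mul (by norm_num : (0:ℝ) ≤ 2),
      ← Real.rpow_add (by norm_num : (0:ℝ) < 2),
      show -(2/p) + 2 * (1/p) = 0 from by ring, Real.rpow_zero]
  calc (2:ℝ) ^ (-(2/p)) * ((1 - 2*x^p)⁻¹ *
          ((4 * (1 - 2*x^p)) * ((4:ℝ)^(1/p-1) * (1-x^p)^(1/p-1))))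
      = ((2:ℝ) ^ (-(2/p)) * (4:ℝ)^(1/p)) * (((1 - 2*x^p)⁻¹ * (1 - 2*x^p)) * (1-x^p)^(1/p-1)) := by
        rw [← h44]; ring
    _ = (1 - x^p)^(1/p-1) := by rw [h24, inv_mul_cancel₀ h12.ne']; ring

/-- Substitution identity: for `y ∈ [0, 2^{-1/p}]`,
`∫₀^y (1-t^p)^{-1/p*} dt = 2^{-2/p} ∫₀^{y(4(1-y^p))^{1/p}} (1-s^p)^{-1/2} ds`, i.e.
`sin_{p*,p}^{-1}(y) = 2^{-2/p} sin_{2,p}^{-1}(y(4(1-y^p))^{1/p})`, where `p* = p/(p-1)`. -/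
theorem substitution_identity (p : ℝ) (hp : 1 < p) :
    ∀ y ∈ Set.Icc (0:ℝ) ((2:ℝ) ^ (-(1/p))),
      (∫ t in (0:ℝ)..y, (1 - t ^ p) ^ (-(1/(p/(p-1)))))
          = (2:ℝ) ^ (-(2/p)) *
            ∫ s in (0:ℝ)..(y * (4 * (1 - y ^ p)) ^ (1/p)), (1 - s ^ p) ^ (-(1/2) : ℝ) ∧
      arcsinpq (p/(p-1)) p y
          = (2:ℝ) ^ (-(2/p)) * arcsinpq 2 p (y * (4 * (1 - y ^ p)) ^ (1/p)) := by
  have hp0 : (0:ℝ) < p := lt_trans one_pos hp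
  have hq : -(1/(p/(p-1))) = 1/p - 1 := by
    have h1 : p - 1 ≠ 0 := sub_ne_zero.mpr hp.ne'
    field_simp
    ring
  have hcp : ((2:ℝ) ^ (-(1/p))) ^ p = 1/2 := by
    rw [← Real.rpow_mul (by norm_num : (0:ℝ) ≤ 2),
      show -(1/p) * p = -1 from by field_simp, Real.rpow_neg_one]
    norm_num
  have hc0 : (0:ℝ) ≤ (2:ℝ) ^ (-(1/p)) := Real.rpow_nonneg (by norm_num) _
  have key : ∀ y ∈ Icc (0:ℝ) ((2:ℝ) ^ (-(1/p))),
      (∫ t in (0:ℝ)..y, (1 - t ^ p) ^ (1/p - 1))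
        = (2:ℝ) ^ (-(2/p)) *
          ∫ s in (0:ℝ)..(y * (4 * (1 - y ^ p)) ^ (1/p)), (1 - s ^ p) ^ (-(1/2):ℝ) := by
    set c := (2:ℝ) ^ (-(1/p)) with hcdef
    set g : ℝ → ℝ := fun z => z * (4 * (1 - z ^ p)) ^ (1/p) with hgdef
    set Φ : ℝ → ℝ := fun u => ∫ s in (0:ℝ)..u, (1 - s ^ p) ^ (-(1/2):ℝ) with hΦdef
    have hmem : ∀ z ∈ Icc (0:ℝ) c, 0 ≤ z ∧ z ^ p ≤ 1/2 := by
      intro z hz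
      refine ⟨hz.1, ?_⟩
      calc z ^ p ≤ c ^ p := Real.rpow_le_rpow hz.1 hz.2 hp0.le
        _ = 1/2 := hcp
    -- roundtrip lemma
    have hrt : ∀ z : ℝ, 0 ≤ z → (z ^ p) ^ (1/p) = z := by
      intro z hz
      rw [← Real.rpow_mul hz, mul_one_div_cancel hp0.ne', Real.rpow_one]
    have hg01 : ∀ z ∈ Icc (0:ℝ) c, g z ∈ Icc (0:ℝ) 1 := by
      intro z hz
      obtain ⟨hz0, hzp⟩ := hmem z hz
      have hzp0 : (0:ℝ) ≤ z ^ p := Real.rpow_nonneg hz0 _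
      have hgz0 : 0 ≤ g z := mul_nonneg hz0 (Real.rpow_nonneg (by nlinarith) _)
      refine ⟨hgz0, ?_⟩
      have h1 : (g z) ^ p ≤ 1 := by
        rw [hgdef]
        simp only
        rw [gpow hp0 hz0 (by linarith)]
        nlinarith
      calc g z = ((g z) ^ p) ^ (1/p) := (hrt _ hgz0).symm
        _ ≤ 1 ^ (1/p) := Real.rpow_le_rpow (Real.rpow_nonneg hgz0 _) h1 (by positivity)
        _ = 1 := Real.one_rpow _
    -- right derivative of LHS
    have hderivF : ∀ x ∈ Ico (0:ℝ) c,
        HasDerivWithinAt (fun z => ∫ t in (0:ℝ)..z, (1 - t ^ p) ^ (1/p - 1))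
          ((1 - x ^ p) ^ (1/p - 1)) (Ici x) x := by
      intro x hx
      obtain ⟨hx0, hxc⟩ := hx
      have hxp : x ^ p < 1/2 := by
        calc x ^ p < c ^ p := Real.rpow_lt_rpow hx0 hxc hp0
          _ = 1/2 := hcp
      refine (intervalIntegral.integral_hasDerivAt_right ?_ ?_ ?_).hasDerivWithinAt
      · apply ContinuousOn.intervalIntegrable
        intro t ht
        rw [Set.uIcc_of_le hx0] at ht
        have htp : t ^ p ≤ x ^ p := Real.rpow_le_rpow ht.1 ht.2 hp0.le
        exact (contAtAux hp0 _ (ne_of_gt (by linarith))).continuousWithinAt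
      · exact ⟨Set.univ, Filter.univ_mem, (measAux p _).aestronglyMeasurable⟩
      · exact contAtAux hp0 _ (ne_of_gt (by linarith))
    -- right derivative of RHS
    have hderivG : ∀ x ∈ Ico (0:ℝ) c,
        HasDerivWithinAt (fun z => (2:ℝ) ^ (-(2/p)) * Φ (g z))
          ((1 - x ^ p) ^ (1/p - 1)) (Ici x) x := by
      intro x hx
      obtain ⟨hx0, hxc⟩ := hx
      have hxp : x ^ p < 1/2 := by
        calc x ^ p < c ^ p := Real.rpow_lt_rpow hx0 hxc hp0
          _ = 1/2 := hcp
      have hxp0 : (0:ℝ) ≤ x ^ p := Real.rpow_nonneg hx0 _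
      have hgx0 : 0 ≤ g x := (hg01 x ⟨hx0, hxc.le⟩).1
      have hgxp : (g x) ^ p = 4 * x ^ p * (1 - x ^ p) := by
        rw [hgdef]; simp only; exact gpow hp0 hx0 (by linarith)
      have hgxp1 : (g x) ^ p < 1 := by
        rw [hgxp]; nlinarith [sq_nonneg (1 - 2 * x ^ p)]
      -- derivative of Φ at g x
      have dPhi : HasDerivAt Φ ((1 - (g x) ^ p) ^ (-(1/2):ℝ)) (g x) := by
        refine intervalIntegral.integral_hasDerivAt_right ?_ ?_ ?_
        · apply ContinuousOn.intervalIntegrable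
          intro s hs
          rw [Set.uIcc_of_le hgx0] at hs
          have : s ^ p ≤ (g x) ^ p := Real.rpow_le_rpow hs.1 hs.2 hp0.le
          exact (contAtAux hp0 _ (ne_of_gt (by linarith))).continuousWithinAt
        · exact ⟨Set.univ, Filter.univ_mem, (measAux p _).aestronglyMeasurable⟩
        · exact contAtAux hp0 _ (ne_of_gt (by linarith))
      -- derivative of g at x
      have hbpos : (0:ℝ) < 4 * (1 - x ^ p) := by nlinarith
      have d1 : HasDerivAt (fun z : ℝ => z ^ p) (p * x ^ (p - 1)) x :=
        Real.hasDerivAt_rpow_const (Or.inr hp.le)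
      have d2 : HasDerivAt (fun z : ℝ => 4 * (1 - z ^ p)) (4 * -(p * x ^ (p - 1))) x :=
        (d1.const_sub 1).const_mul 4
      have d3 : HasDerivAt (fun z : ℝ => (4 * (1 - z ^ p)) ^ (1/p))
          ((4 * -(p * x ^ (p - 1))) * (1/p) * (4 * (1 - x ^ p)) ^ (1/p - 1)) x :=
        d2.rpow_const (Or.inl hbpos.ne')
      have d4 : HasDerivAt g
          (1 * (4 * (1 - x ^ p)) ^ (1/p) +
            x * ((4 * -(p * x ^ (p - 1))) * (1/p) * (4 * (1 - x ^ p)) ^ (1/p - 1))) x :=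
        (hasDerivAt_id x).mul d3
      have d5 : HasDerivAt (fun z => Φ (g z))
          ((1 - (g x) ^ p) ^ (-(1/2):ℝ) *
            (1 * (4 * (1 - x ^ p)) ^ (1/p) +
              x * ((4 * -(p * x ^ (p - 1))) * (1/p) * (4 * (1 - x ^ p)) ^ (1/p - 1)))) x :=
        dPhi.comp x d4
      have d6 := d5.const_mul ((2:ℝ) ^ (-(2/p)))
      have heq : (2:ℝ) ^ (-(2/p)) * ((1 - (g x) ^ p) ^ (-(1/2):ℝ) *
            (1 * (4 * (1 - x ^ p)) ^ (1/p) +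
              x * ((4 * -(p * x ^ (p - 1))) * (1/p) * (4 * (1 - x ^ p)) ^ (1/p - 1))))
          = (1 - x ^ p) ^ (1/p - 1) := by
        rw [hgdef]
        exact algebra_key hp hx0 hxp
      exact (heq ▸ d6).hasDerivWithinAt
    -- continuity of LHS
    have fcont : ContinuousOn (fun z => ∫ t in (0:ℝ)..z, (1 - t ^ p) ^ (1/p - 1)) (Icc 0 c) := by
      have h1 : IntegrableOn (fun t : ℝ => (1 - t ^ p) ^ (1/p - 1)) (uIcc 0 c) volume := by
        rw [Set.uIcc_of_le hc0]
        apply ContinuousOn.integrableOn_Icc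
        intro t ht
        obtain ⟨ht0, htp⟩ := hmem t ht
        exact (contAtAux hp0 _ (ne_of_gt (by linarith))).continuousWithinAt
      have := intervalIntegral.continuousOn_primitive_interval h1
      rwa [Set.uIcc_of_le hc0] at this
    -- continuity of RHS
    have gcont : ContinuousOn (fun z => (2:ℝ) ^ (-(2/p)) * Φ (g z)) (Icc 0 c) := by
      apply continuousOn_const.mul
      have hPhicont : ContinuousOn Φ (Icc 0 1) := by
        have h1 : IntegrableOn (fun s : ℝ => (1 - s ^ p) ^ (-(1/2):ℝ)) (uIcc 0 1) volume := by
          rw [Set.uIcc_of_le (by norm_num : (0:ℝ) ≤ 1),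
            integrableOn_Icc_iff_integrableOn_Ioc]
          exact (f2_integrable hp).1
        have := intervalIntegral.continuousOn_primitive_interval h1
        rwa [Set.uIcc_of_le (by norm_num : (0:ℝ) ≤ 1)] at this
      have hgc : Continuous g := by
        have hzp : Continuous fun z : ℝ => z ^ p :=
          continuous_iff_continuousAt.2 fun z => Real.continuousAt_rpow_const z p (Or.inr hp0.le)
        apply continuous_id.mul
        exact (continuous_const.mul (continuous_const.sub hzp)).rpow_const
          fun z => Or.inr (by positivity)
      exact hPhicont.comp hgc.continuousOn hg01
    have hi : (∫ t in (0:ℝ)..(0:ℝ), (1 - t ^ p) ^ (1/p - 1))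
        = (2:ℝ) ^ (-(2/p)) * Φ (g 0) := by
      have hg0 : g 0 = 0 := by rw [hgdef]; simp
      have hPhi0 : Φ 0 = 0 := by rw [hΦdef]; simp
      rw [hg0, hPhi0, intervalIntegral.integral_same, mul_zero]
    exact eq_of_has_deriv_right_eq hderivF hderivG fcont gcont hi
  intro y hy
  constructor
  · simp only [hq]
    exact key y hy
  · simp only [arcsinpq, hq]
    exact key y hy
end
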